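/- arXiv:1408.3204 — 7 statements merged into one kernel-verified Lean document; each statement's English description precedes it below -/
import Mathlib

section
/- Let G be a triangle-free graph and e = uv an edge of G, and let G·e be the graph obtained by contracting e. Then mp(G·e) ≥ mp(G)/3. -/
open SimpleGraph

/-- `mp G` is the maximum number of vertices of a degree monotone path in `G`. -/
noncomputable def mp {V : Type*} [Fintype V] (G : SimpleGraph V) : ℕ :=
  letI : DecidableEq V := Classical.decEq _
  letI : DecidableRel G.Adj := Classical.decRel _
  sSup {n : ℕ | ∃ (u v : V) (p : G.Walk u v), p.IsPath ∧
    (List.Chain' (· ≤ ·) (p.support.map (fun x => G.degree x)) ∨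
     List.Chain' (· ≥ ·) (p.support.map (fun x => G.degree x))) ∧ p.support.length = n}

/-- The graph obtained from `G` by contracting the edge `uv`: the vertex `u` plays the
role of the merged vertex `w`, and `v` is removed. -/
def contractEdge {V : Type*} (G : SimpleGraph V) (u v : V) : SimpleGraph {x : V // x ≠ v} :=
  SimpleGraph.fromRel (fun a b =>
    G.Adj a.1 b.1 ∨ (a.1 = u ∧ G.Adj v b.1) ∨ (b.1 = u ∧ G.Adj a.1 v))

namespace MPAux

/-- instance-free degree -/
noncomputable def dg {V : Type*} (G : SimpleGraph V) (x : V) : ℕ := {y | G.Adj x y}.ncard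

lemma degree_eq_dg {V : Type*} [Fintype V] (G : SimpleGraph V) (x : V)
    [Fintype (G.neighborSet x)] : G.degree x = dg G x := by
  rw [← SimpleGraph.card_neighborSet_eq_degree, dg]
  rw [show {y | G.Adj x y} = (G.neighborSet x : Set V) from rfl]
  rw [← Nat.card_coe_set_eq, Nat.card_eq_fintype_card]

lemma walk_of_chain {V : Type*} (G : SimpleGraph V) :
    ∀ (l : List V) (a : V), List.Chain G.Adj a l →
      ∃ (b : V) (p : G.Walk a b), p.support = a :: l := by
  intro l
  induction l with
  | nil => exact fun a _ => ⟨a, Walk.nil, rfl⟩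
  | cons c t ih =>
    intro a h
    simp only [List.Chain, List.isChain_cons_cons] at h
    obtain ⟨b, p, hp⟩ := ih c h.2
    exact ⟨b, Walk.cons h.1 p, by simp [hp]⟩

lemma le_mp {V : Type*} [Fintype V] (G : SimpleGraph V) (l : List V)
    (hne : l ≠ []) (hadj : l.Chain' G.Adj) (hnd : l.Nodup)
    (hmono : List.Chain' (· ≤ ·) (l.map (dg G)) ∨ List.Chain' (· ≥ ·) (l.map (dg G))) :
    l.length ≤ mp G := by
  classical
  unfold mp
  have hS : l.length ∈ {n : ℕ | ∃ (u v : V) (p : G.Walk u v), p.IsPath ∧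
      (List.Chain' (· ≤ ·) (p.support.map (fun x => G.degree x)) ∨
       List.Chain' (· ≥ ·) (p.support.map (fun x => G.degree x))) ∧ p.support.length = n} := by
    obtain ⟨a, t, rfl⟩ := List.exists_cons_of_ne_nil hne
    obtain ⟨b, p, hp⟩ := walk_of_chain G t a hadj
    refine ⟨a, b, p, ?_, ?_, by rw [hp]⟩
    · rw [SimpleGraph.Walk.isPath_def, hp]; exact hnd
    · have : p.support.map (fun x => G.degree x) = (a :: t).map (dg G) := by
        rw [hp]; exact List.map_congr_left fun x _ => degree_eq_dg G x
      rw [this]; exact hmono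
  refine le_csSup ⟨Fintype.card V, ?_⟩ hS
  rintro n ⟨x, y, p, hp, -, rfl⟩
  exact (SimpleGraph.Walk.isPath_def _ |>.mp hp).length_le_card

lemma exists_mp_list {V : Type*} [Fintype V] (G : SimpleGraph V) (x0 : V) :
    ∃ l : List V, l ≠ [] ∧ l.Chain' G.Adj ∧ l.Nodup ∧
      (List.Chain' (· ≤ ·) (l.map (dg G)) ∨ List.Chain' (· ≥ ·) (l.map (dg G))) ∧
      l.length = mp G := by
  classical
  have hbdd : BddAbove {n : ℕ | ∃ (u v : V) (p : G.Walk u v), p.IsPath ∧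
      (List.Chain' (· ≤ ·) (p.support.map (fun x => G.degree x)) ∨
       List.Chain' (· ≥ ·) (p.support.map (fun x => G.degree x))) ∧ p.support.length = n} := by
    refine ⟨Fintype.card V, ?_⟩
    rintro n ⟨x, y, p, hp, -, rfl⟩
    exact (SimpleGraph.Walk.isPath_def _ |>.mp hp).length_le_card
  have hmem : mp G ∈ {n : ℕ | ∃ (u v : V) (p : G.Walk u v), p.IsPath ∧
      (List.Chain' (· ≤ ·) (p.support.map (fun x => G.degree x)) ∨
       List.Chain' (· ≥ ·) (p.support.map (fun x => G.degree x))) ∧ p.support.length = n} := by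
    have hne : {n : ℕ | ∃ (u v : V) (p : G.Walk u v), p.IsPath ∧
      (List.Chain' (· ≤ ·) (p.support.map (fun x => G.degree x)) ∨
       List.Chain' (· ≥ ·) (p.support.map (fun x => G.degree x))) ∧ p.support.length = n}.Nonempty := by
      exact ⟨1, x0, x0, Walk.nil, by simp [SimpleGraph.Walk.isPath_def, List.Chain']⟩
    have := Nat.sSup_mem hne hbdd
    exact this
  obtain ⟨a, b, p, hp, hmono, hlen⟩ := hmem
  refine ⟨p.support, p.support_ne_nil, p.isChain_adj_support,
    (SimpleGraph.Walk.isPath_def _).mp hp, ?_, hlen⟩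
  have : p.support.map (fun x => G.degree x) = p.support.map (dg G) :=
    List.map_congr_left fun x _ => degree_eq_dg G x
  rw [← this]; exact hmono

set_option linter.unusedSectionVars false

section
variable {V : Type*} [Fintype V] {G : SimpleGraph V} {u v : V}
  (he : G.Adj u v) (htf : G.CliqueFree 3)

include he htf in
lemma no_tri {a : V} (ha : G.Adj u a) (hb : G.Adj v a) : False := by
  classical
  exact htf {u, v, a} ⟨by
    intro x hx y hy hxy
    simp only [Finset.coe_insert, Set.mem_insert_iff, Finset.coe_singleton,
      Set.mem_singleton_iff] at hx hy
    rcases hx with rfl | rfl | rfl <;> rcases hy with rfl | rfl | rfl <;>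
      first | exact absurd rfl hxy | assumption | exact he.symm | exact ha.symm | exact hb.symm,
    by
      rw [Finset.card_insert_of_notMem (by simp [he.ne, ha.ne]),
        Finset.card_insert_of_notMem (by simp [hb.ne]), Finset.card_singleton]⟩

/-- merged vertex -/
def w : {x : V // x ≠ v} := ⟨u, he.ne⟩

lemma adj_contract_iff {a b : {x : V // x ≠ v}} (ha : a.1 ≠ u) (hb : b.1 ≠ u) :
    (contractEdge G u v).Adj a b ↔ G.Adj a.1 b.1 := by
  rw [contractEdge, SimpleGraph.fromRel_adj]
  constructor
  · rintro ⟨-, (h | ⟨h, -⟩ | ⟨h, -⟩) | (h | ⟨h, -⟩ | ⟨h, -⟩)⟩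
    · exact h
    · exact absurd h ha
    · exact absurd h hb
    · exact h.symm
    · exact absurd h hb
    · exact absurd h ha
  · intro h
    exact ⟨fun hab => G.irrefl (hab ▸ h), Or.inl (Or.inl h)⟩

lemma adj_contract_w {b : {x : V // x ≠ v}} (hb : b.1 ≠ u) :
    (contractEdge G u v).Adj (w he) b ↔ (G.Adj u b.1 ∨ G.Adj v b.1) := by
  rw [contractEdge, SimpleGraph.fromRel_adj]
  constructor
  · rintro ⟨-, (h | ⟨-, h⟩ | ⟨h, -⟩) | (h | ⟨h, -⟩ | ⟨-, h⟩)⟩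
    · exact Or.inl h
    · exact Or.inr h
    · exact absurd h hb
    · exact Or.inl h.symm
    · exact absurd h hb
    · exact Or.inr h.symm
  · intro h
    refine ⟨fun hab => ?_, ?_⟩
    · apply hb; rw [← hab]; rfl
    · rcases h with h | h
      · exact Or.inl (Or.inl h)
      · exact Or.inl (Or.inr (Or.inl ⟨rfl, h⟩))

include he htf in
lemma dg_contract_ne {a : {x : V // x ≠ v}} (ha : a.1 ≠ u) :
    dg (contractEdge G u v) a = dg G a.1 := by
  have hinj : Function.Injective (Subtype.val : {x : V // x ≠ v} → V) := Subtype.val_injective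
  rw [dg, ← Set.ncard_image_of_injective _ hinj]
  by_cases hav : G.Adj a.1 v
  · have hau : ¬ G.Adj a.1 u := fun h => no_tri he htf h.symm hav.symm
    have himg : Subtype.val '' {y | (contractEdge G u v).Adj a y} =
        insert u ({y | G.Adj a.1 y} \ {v}) := by
      ext c
      simp only [Set.mem_image, Set.mem_setOf_eq, Set.mem_insert_iff, Set.mem_diff,
        Set.mem_singleton_iff]
      constructor
      · rintro ⟨b, hb, rfl⟩
        by_cases hbu : b.1 = u
        · exact Or.inl hbu
        · exact Or.inr ⟨(adj_contract_iff ha hbu).mp hb, b.2⟩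
      · rintro (rfl | ⟨hc, hcv⟩)
        · exact ⟨w he, ((adj_contract_w (G := G) he ha).mpr (Or.inr hav.symm)).symm, rfl⟩
        · exact ⟨⟨c, hcv⟩, (adj_contract_iff ha (fun h => hau (h ▸ hc))).mpr hc, rfl⟩
    rw [himg, dg]
    exact Set.ncard_exchange (fun h => hau h) hav
  · have himg : Subtype.val '' {y | (contractEdge G u v).Adj a y} = {y | G.Adj a.1 y} := by
      ext c
      simp only [Set.mem_image, Set.mem_setOf_eq]
      constructor
      · rintro ⟨b, hb, rfl⟩
        by_cases hbu : b.1 = u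
        · have := ((contractEdge G u v).adj_symm hb)
          have h2 : (contractEdge G u v).Adj (w he) a := by
            convert this using 2
            exact Subtype.ext hbu.symm
          rcases (adj_contract_w he ha).mp h2 with h | h
          · rw [hbu]; exact h.symm
          · exact absurd h.symm hav
        · exact (adj_contract_iff ha hbu).mp hb
      · intro hc
        have hcv : c ≠ v := fun h => hav (h ▸ hc)
        by_cases hcu : c = u
        · refine ⟨w he, ?_, hcu.symm⟩
          exact ((contractEdge G u v).adj_symm ((adj_contract_w he ha).mpr
            (Or.inl (hcu ▸ hc).symm)))
        · exact ⟨⟨c, hcv⟩, (adj_contract_iff ha hcu).mpr hc, rfl⟩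
    rw [himg, dg]

include he htf in
lemma dg_contract_w : dg (contractEdge G u v) (w he) = dg G u + dg G v - 2 := by
  have hinj : Function.Injective (Subtype.val : {x : V // x ≠ v} → V) := Subtype.val_injective
  rw [dg, ← Set.ncard_image_of_injective _ hinj]
  have himg : Subtype.val '' {y | (contractEdge G u v).Adj (w he) y} =
      (({y | G.Adj u y} ∪ {y | G.Adj v y}) \ {u}) \ {v} := by
    ext c
    simp only [Set.mem_image, Set.mem_setOf_eq, Set.mem_diff, Set.mem_union,
      Set.mem_singleton_iff]
    constructor
    · rintro ⟨b, hb, rfl⟩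
      have hbu : b.1 ≠ u := by
        intro h
        have : b = w he := Subtype.ext h
        exact (contractEdge G u v).irrefl (this ▸ hb)
      exact ⟨⟨(adj_contract_w he hbu).mp hb, hbu⟩, b.2⟩
    · rintro ⟨⟨hc, hcu⟩, hcv⟩
      exact ⟨⟨c, hcv⟩, (adj_contract_w he hcu).mpr hc, rfl⟩
  have hdisj : Disjoint {y | G.Adj u y} {y | G.Adj v y} := by
    rw [Set.disjoint_left]
    intro c hc1 hc2
    exact no_tri he htf hc1 hc2
  have hvmem : v ∈ ({y | G.Adj u y} ∪ {y | G.Adj v y}) \ {u} := ⟨Or.inl he, he.ne'⟩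
  have humem : u ∈ ({y | G.Adj u y} ∪ {y | G.Adj v y}) := Or.inr he.symm
  rw [himg, Set.ncard_diff_singleton_of_mem hvmem,
    Set.ncard_diff_singleton_of_mem humem, Set.ncard_union_eq hdisj]
  rfl

end

/-- map a list preserving a chain, with membership available -/
lemma chain'_map_mem {α β : Type*} {R : α → α → Prop} {S : β → β → Prop} {f : α → β} :
    ∀ {l : List α}, (∀ x ∈ l, ∀ y ∈ l, R x y → S (f x) (f y)) → l.Chain' R →
      (l.map f).Chain' S := by
  intro l
  induction l with
  | nil => intro _ _; simp [List.Chain']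
  | cons a t ih =>
    intro h hc
    cases t with
    | nil => simp [List.Chain']
    | cons b t2 =>
      simp only [List.Chain', List.isChain_cons_cons] at hc
      rw [List.map_cons, List.map_cons, List.Chain', List.isChain_cons_cons]
      refine ⟨h a (by simp) b (by simp) hc.1, ?_⟩
      rw [← List.map_cons]
      exact ih (fun x hx y hy => h x (List.mem_cons_of_mem _ hx) y (List.mem_cons_of_mem _ hy)) hc.2

section PieceLemmas
variable {V : Type*} [Fintype V] [DecidableEq V] {G : SimpleGraph V} {u v : V}
  (he : G.Adj u v) (htf : G.CliqueFree 3)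

/-- send `v` to the merged vertex, everything else to itself -/
noncomputable def toV' (x : V) : {y : V // y ≠ v} :=
  letI := Classical.decEq V
  if h : x = v then w he else ⟨x, h⟩

lemma toV'_val {x : V} (hx : x ≠ v) : (toV' he x).1 = x := by
  rw [toV']
  simp [hx]

lemma adj_toV' {c d : V} (hc : c ≠ u ∧ c ≠ v) (hd : d ≠ u ∧ d ≠ v) (h : G.Adj c d) :
    (contractEdge G u v).Adj (toV' he c) (toV' he d) := by
  rw [adj_contract_iff (by rw [toV'_val he hc.2]; exact hc.1)
    (by rw [toV'_val he hd.2]; exact hd.1), toV'_val he hc.2, toV'_val he hd.2]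
  exact h

lemma adj_toV'_w {c x : V} (hc : c ≠ u ∧ c ≠ v) (hx : x = u ∨ x = v) (h : G.Adj c x) :
    (contractEdge G u v).Adj (toV' he c) (w he) := by
  refine ((adj_contract_w he (b := toV' he c)
    (by rw [toV'_val he hc.2]; exact hc.1)).mpr ?_).symm
  rcases hx with rfl | rfl
  · exact Or.inl (by rw [toV'_val he hc.2]; exact h.symm)
  · exact Or.inr (by rw [toV'_val he hc.2]; exact h.symm)

include htf in
lemma dg_toV' {c : V} (hc : c ≠ u ∧ c ≠ v) :
    dg (contractEdge G u v) (toV' he c) = dg G c := by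
  have h1 : (toV' he c).1 ≠ u := by rw [toV'_val he hc.2]; exact hc.1
  have := dg_contract_ne he htf h1
  rwa [toV'_val he hc.2] at this

include htf in
lemma map_dg_toV' (A : List V) (hA : ∀ c ∈ A, c ≠ u ∧ c ≠ v) :
    (A.map (toV' he)).map (dg (contractEdge G u v)) = A.map (dg G) := by
  rw [List.map_map]
  exact List.map_congr_left fun c hc => dg_toV' he htf (hA c hc)

lemma nodup_map_toV' (A : List V) (hA : ∀ c ∈ A, c ≠ u ∧ c ≠ v) (hnd : A.Nodup) :
    (A.map (toV' he)).Nodup := by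
  refine hnd.map_on ?_
  intro x hx y hy hxy
  have := congrArg Subtype.val hxy
  rwa [toV'_val he (hA x hx).2, toV'_val he (hA y hy).2] at this

lemma w_not_mem_map_toV' (A : List V) (hA : ∀ c ∈ A, c ≠ u ∧ c ≠ v) :
    w he ∉ A.map (toV' he) := by
  intro hmem
  obtain ⟨c, hc, hceq⟩ := List.mem_map.mp hmem
  have := congrArg Subtype.val hceq
  rw [toV'_val he (hA c hc).2] at this
  exact (hA c hc).1 this

lemma chain'_adj_map_toV' (A : List V) (hA : ∀ c ∈ A, c ≠ u ∧ c ≠ v)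
    (hadj : A.Chain' G.Adj) : (A.map (toV' he)).Chain' (contractEdge G u v).Adj :=
  chain'_map_mem (fun x hx y hy h => adj_toV' he (hA x hx) (hA y hy) h) hadj

include htf in
lemma piece_w_le (A : List V) (x : V) (hx : x = u ∨ x = v)
    (hA : ∀ c ∈ A, c ≠ u ∧ c ≠ v) (hnd : A.Nodup) (hadj : A.Chain' G.Adj)
    (hjun : ∀ c ∈ A.getLast?, G.Adj c x)
    (hmono : (A.map (dg G)).Chain' (· ≤ ·))
    (hlast : ∀ d ∈ (A.map (dg G)).getLast?, d ≤ dg (contractEdge G u v) (w he)) :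
    A.length + 1 ≤ mp (contractEdge G u v) := by
  have hlen : (A.map (toV' he) ++ [w he]).length = A.length + 1 := by simp
  rw [← hlen]
  apply le_mp
  · simp
  · rw [List.Chain', List.isChain_append]
    refine ⟨chain'_adj_map_toV' he A hA hadj, by simp, ?_⟩
    intro a ha b hb
    rw [List.getLast?_map] at ha
    simp only [List.head?_cons, Option.mem_some_iff] at hb
    obtain ⟨c, hc, rfl⟩ := Option.map_eq_some_iff.mp ha
    subst hb
    exact adj_toV'_w he (hA c (List.mem_of_mem_getLast? hc)) hx (hjun c hc)
  · rw [List.nodup_append']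
    exact ⟨nodup_map_toV' he A hA hnd, by simp, by
      intro a haA hab
      simp only [List.mem_singleton] at hab
      subst hab
      exact w_not_mem_map_toV' he A hA haA⟩
  · left
    rw [List.map_append, map_dg_toV' he htf A hA]
    rw [List.Chain', List.isChain_append]
    refine ⟨hmono, by simp, ?_⟩
    intro a ha b hb
    simp only [List.map_cons, List.map_nil, List.head?_cons, Option.mem_some_iff] at hb
    subst hb
    exact hlast a ha

include htf in
lemma w_piece_le (B : List V) (x : V) (hx : x = u ∨ x = v)
    (hB : ∀ c ∈ B, c ≠ u ∧ c ≠ v) (hnd : B.Nodup) (hadj : B.Chain' G.Adj)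
    (hjun : ∀ c ∈ B.head?, G.Adj x c)
    (hmono : (B.map (dg G)).Chain' (· ≤ ·))
    (hhead : ∀ d ∈ (B.map (dg G)).head?, dg (contractEdge G u v) (w he) ≤ d) :
    B.length + 1 ≤ mp (contractEdge G u v) := by
  have hlen : (w he :: B.map (toV' he)).length = B.length + 1 := by simp
  rw [← hlen]
  apply le_mp
  · simp
  · rw [List.Chain', List.isChain_cons]
    refine ⟨?_, chain'_adj_map_toV' he B hB hadj⟩
    intro b hb
    rw [List.head?_map] at hb
    obtain ⟨c, hc, rfl⟩ := Option.map_eq_some_iff.mp hb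
    exact (adj_toV'_w he (hB c (List.mem_of_mem_head? hc)) hx (hjun c hc).symm).symm
  · rw [List.nodup_cons]
    exact ⟨w_not_mem_map_toV' he B hB, nodup_map_toV' he B hB hnd⟩
  · left
    rw [List.map_cons, map_dg_toV' he htf B hB]
    rw [List.Chain', List.isChain_cons]
    refine ⟨?_, hmono⟩
    exact hhead

include he htf in
lemma piece_le (A : List V) (hA : ∀ c ∈ A, c ≠ u ∧ c ≠ v) (hne : A ≠ [])
    (hnd : A.Nodup) (hadj : A.Chain' G.Adj)
    (hmono : (A.map (dg G)).Chain' (· ≤ ·)) :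
    A.length ≤ mp (contractEdge G u v) := by
  have hlen : (A.map (toV' he)).length = A.length := by simp
  rw [← hlen]
  apply le_mp
  · simpa using hne
  · exact chain'_adj_map_toV' he A hA hadj
  · exact nodup_map_toV' he A hA hnd
  · left
    rw [map_dg_toV' he htf A hA]
    exact hmono

include he htf in
lemma one_le_mp' : 1 ≤ mp (contractEdge G u v) := by
  have := piece_w_le he htf [] u (Or.inl rfl) (by simp) (by simp) (by simp [List.Chain'])
    (by simp) (by simp [List.Chain']) (by simp)
  simpa using this

end PieceLemmas

lemma one_le_dg {V : Type*} [Fintype V] {G : SimpleGraph V} {x a : V} (h : G.Adj x a) : 1 ≤ dg G x := by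
  have : 0 < dg G x := (Set.ncard_pos (Set.toFinite _)).mpr ⟨a, h⟩
  omega

lemma two_le_dg {V : Type*} [Fintype V] {G : SimpleGraph V} {x a b : V} (h1 : G.Adj x a) (h2 : G.Adj x b)
    (hab : a ≠ b) : 2 ≤ dg G x := by
  have hsub : ({a, b} : Set V) ⊆ {y | G.Adj x y} := by
    rintro c (rfl | rfl)
    · exact h1
    · exact h2
  calc 2 = ({a, b} : Set V).ncard := (Set.ncard_pair hab).symm
    _ ≤ dg G x := Set.ncard_le_ncard hsub (Set.toFinite _)

lemma nodup_decomp1 {α : Type*} {x : α} {A B : List α} (h : (A ++ (x :: B)).Nodup) :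
    x ∉ A ∧ x ∉ B := by
  obtain ⟨-, h2, h3⟩ := List.nodup_append'.mp h
  exact ⟨fun hx => h3 hx (List.mem_cons_self (a := x) (l := B)), (List.nodup_cons.mp h2).1⟩

lemma nodup_decomp2 {α : Type*} {x y : α} {A M C : List α}
    (h : (A ++ (x :: (M ++ (y :: C)))).Nodup) :
    (x ∉ A ∧ x ∉ M ∧ x ∉ C) ∧ (y ∉ A ∧ y ∉ M ∧ y ∉ C) ∧ x ≠ y := by
  obtain ⟨hA, h2, h3⟩ := List.nodup_append'.mp h
  obtain ⟨hx1, h4⟩ := List.nodup_cons.mp h2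
  obtain ⟨hM, h5, h6⟩ := List.nodup_append'.mp h4
  obtain ⟨hy1, -⟩ := List.nodup_cons.mp h5
  have hxM : x ∉ M := fun hm => hx1 (List.mem_append.mpr (Or.inl hm))
  have hxC : x ∉ C := fun hc => hx1 (List.mem_append.mpr (Or.inr (List.mem_cons_of_mem _ hc)))
  have hxy : x ≠ y := fun hxy => hx1 (List.mem_append.mpr (Or.inr (hxy ▸ List.mem_cons_self (a := y) (l := C))))
  have hyA : y ∉ A := fun ha => h3 ha (List.mem_cons_of_mem _ (List.mem_append.mpr
    (Or.inr (List.mem_cons_self (a := y) (l := C)))))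
  have hyM : y ∉ M := fun hm => h6 hm (List.mem_cons_self (a := y) (l := C))
  have hxA : x ∉ A := fun ha => h3 ha (List.mem_cons_self (a := x))
  exact ⟨⟨hxA, hxM, hxC⟩, ⟨hyA, hyM, hy1⟩, hxy⟩

section CaseLemmas
variable {V : Type*} [Fintype V] [DecidableEq V] {G : SimpleGraph V} {u v : V}
  (he : G.Adj u v) (htf : G.CliqueFree 3)

include he htf in
lemma case_one (x y : V) (hxy : (x = u ∧ y = v) ∨ (x = v ∧ y = u))
    (A B : List V) (hAB : ∀ c ∈ A ++ B, c ≠ u ∧ c ≠ v)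
    (hnd : (A ++ (x :: B)).Nodup) (hadj : (A ++ (x :: B)).Chain' G.Adj)
    (hmono : ((A ++ (x :: B)).map (dg G)).Chain' (· ≤ ·)) :
    (A ++ (x :: B)).length ≤ 3 * mp (contractEdge G u v) := by
  have hxu : x = u ∨ x = v := by rcases hxy with ⟨rfl, -⟩ | ⟨rfl, -⟩ <;> simp
  have hxy_adj : G.Adj x y := by rcases hxy with ⟨rfl, rfl⟩ | ⟨rfl, rfl⟩
                                 exacts [he, he.symm]
  have hA : ∀ c ∈ A, c ≠ u ∧ c ≠ v := fun c hc => hAB c (List.mem_append.mpr (Or.inl hc))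
  have hB : ∀ c ∈ B, c ≠ u ∧ c ≠ v := fun c hc => hAB c (List.mem_append.mpr (Or.inr hc))
  -- adjacency decomposition
  obtain ⟨hadjA, hadjxB, hjunAx⟩ := List.isChain_append.mp hadj
  obtain ⟨hjunxB, hadjB⟩ := List.isChain_cons.mp hadjxB
  -- degree chain decomposition
  rw [List.map_append, List.map_cons, List.Chain', List.isChain_append] at hmono
  obtain ⟨hmonoA, hmonoxB, hjunAxd⟩ := hmono
  obtain ⟨hjunxBd, hmonoB⟩ := List.isChain_cons.mp hmonoxB
  -- properties of w
  have hw : dg (contractEdge G u v) (w he) = dg G x + dg G y - 2 := by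
    rw [dg_contract_w he htf]
    rcases hxy with ⟨rfl, rfl⟩ | ⟨rfl, rfl⟩
    · rfl
    · omega
  have hx1 : 1 ≤ dg G x := one_le_dg hxy_adj
  have hy1 : 1 ≤ dg G y := one_le_dg hxy_adj.symm
  have hndA : A.Nodup := (List.nodup_append'.mp hnd).1
  have hndB : B.Nodup := (List.nodup_cons.mp (List.nodup_append'.mp hnd).2.1).2
  have hlen : (A ++ (x :: B)).length = A.length + B.length + 1 := by
    simp only [List.length_append, List.length_cons]
    omega
  rw [hlen]
  have hBle : B.length ≤ mp (contractEdge G u v) := by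
    rcases eq_or_ne B [] with rfl | hBne
    · simp
    · exact piece_le he htf B hB hBne hndB hadjB hmonoB
  have hAle : A.length ≤ mp (contractEdge G u v) := by
    rcases eq_or_ne A [] with rfl | hAne
    · simp
    · exact piece_le he htf A hA hAne hndA hadjA hmonoA
  by_cases h2 : 2 ≤ dg G y
  · -- attach w after A
    have hxw : dg G x ≤ dg (contractEdge G u v) (w he) := by omega
    have hA1 : A.length + 1 ≤ mp (contractEdge G u v) := by
      refine piece_w_le he htf A x hxu hA hndA hadjA ?_ hmonoA ?_
      · intro c hc
        exact hjunAx c hc x (by simp)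
      · intro d hd
        exact le_trans (hjunAxd d hd (dg G x) (by simp)) hxw
    omega
  · -- attach w before B
    have hwx : dg (contractEdge G u v) (w he) ≤ dg G x := by omega
    have hB1 : B.length + 1 ≤ mp (contractEdge G u v) := by
      refine w_piece_le he htf B x hxu hB hndB hadjB hjunxB hmonoB ?_
      intro d hd
      rw [List.head?_map] at hd
      obtain ⟨c, hc, rfl⟩ := Option.map_eq_some_iff.mp hd
      exact le_trans hwx (hjunxBd (dg G c) (by rw [List.head?_map]; exact Option.map_eq_some_iff.mpr ⟨c, hc, rfl⟩))
    omega

include he htf in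
lemma case_two (x y : V) (hxy : (x = u ∧ y = v) ∨ (x = v ∧ y = u))
    (A M C : List V) (hAMC : ∀ c ∈ A ++ (M ++ C), c ≠ u ∧ c ≠ v)
    (hnd : (A ++ (x :: (M ++ (y :: C)))).Nodup)
    (hadj : (A ++ (x :: (M ++ (y :: C)))).Chain' G.Adj)
    (hmono : ((A ++ (x :: (M ++ (y :: C)))).map (dg G)).Chain' (· ≤ ·)) :
    (A ++ (x :: (M ++ (y :: C)))).length ≤ 3 * mp (contractEdge G u v) := by
  have hxu : x = u ∨ x = v := by rcases hxy with ⟨rfl, -⟩ | ⟨rfl, -⟩ <;> simp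
  have hyu : y = u ∨ y = v := by rcases hxy with ⟨-, rfl⟩ | ⟨-, rfl⟩ <;> simp
  have hxy_adj : G.Adj x y := by rcases hxy with ⟨rfl, rfl⟩ | ⟨rfl, rfl⟩
                                 exacts [he, he.symm]
  have hA : ∀ c ∈ A, c ≠ u ∧ c ≠ v := fun c hc => hAMC c (by simp [hc])
  have hM : ∀ c ∈ M, c ≠ u ∧ c ≠ v := fun c hc => hAMC c (by simp [hc])
  have hC : ∀ c ∈ C, c ≠ u ∧ c ≠ v := fun c hc => hAMC c (by simp [hc])
  have hne_of_mem : ∀ c, (c ∈ M ∨ c ∈ C ∨ c ∈ A) → c ≠ x ∧ c ≠ y := by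
    intro c hc
    have h1 : c ≠ u ∧ c ≠ v := by
      rcases hc with hc | hc | hc
      exacts [hM c hc, hC c hc, hA c hc]
    rcases hxy with ⟨rfl, rfl⟩ | ⟨rfl, rfl⟩
    exacts [h1, h1.symm]
  -- adjacency decomposition
  obtain ⟨hadjA, hadjrest, hjunAx⟩ := List.isChain_append.mp hadj
  obtain ⟨hjunx, hadjrest2⟩ := List.isChain_cons.mp hadjrest
  obtain ⟨hadjM, hadjyC, hjunMy⟩ := List.isChain_append.mp hadjrest2
  obtain ⟨hjunyC, hadjC⟩ := List.isChain_cons.mp hadjyC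
  -- mono decomposition
  rw [List.map_append, List.map_cons, List.map_append, List.map_cons,
    List.Chain', List.isChain_append] at hmono
  obtain ⟨hmonoA, hmonorest, hjunAxd⟩ := hmono
  obtain ⟨hjunxd, hmonorest2⟩ := List.isChain_cons.mp hmonorest
  obtain ⟨hmonoM, hmonoyC, hjunMyd⟩ := List.isChain_append.mp hmonorest2
  obtain ⟨hjunyCd, hmonoC⟩ := List.isChain_cons.mp hmonoyC
  -- nodup pieces
  obtain ⟨hndA, hndrest, -⟩ := List.nodup_append'.mp hnd
  obtain ⟨-, hndrest2⟩ := List.nodup_cons.mp hndrest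
  obtain ⟨hndM, hndyC, -⟩ := List.nodup_append'.mp hndrest2
  obtain ⟨-, hndC⟩ := List.nodup_cons.mp hndyC
  have hw : dg (contractEdge G u v) (w he) = dg G x + dg G y - 2 := by
    rw [dg_contract_w he htf]
    rcases hxy with ⟨rfl, rfl⟩ | ⟨rfl, rfl⟩
    · rfl
    · omega
  have hx1 : 1 ≤ dg G x := one_le_dg hxy_adj
  have hy1 : 1 ≤ dg G y := one_le_dg hxy_adj.symm
  have hCle : C.length ≤ mp (contractEdge G u v) := by
    rcases eq_or_ne C [] with rfl | hCne
    · simp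
    · exact piece_le he htf C hC hCne hndC hadjC hmonoC
  have h1le : 1 ≤ mp (contractEdge G u v) := one_le_mp' he htf
  cases M with
  | nil =>
    -- consecutive case: A ++ x :: y :: C
    have hAle : A.length ≤ mp (contractEdge G u v) := by
      rcases eq_or_ne A [] with rfl | hAne
      · simp
      · exact piece_le he htf A hA hAne hndA hadjA hmonoA
    rcases eq_or_ne C [] with rfl | hCne
    · -- C empty: use A and the trivial singleton
      simp only [List.length_append, List.length_cons, List.length_nil]
      omega
    · rcases eq_or_ne A [] with rfl | hAne
      · -- A empty: use C
        simp only [List.length_append, List.length_cons, List.length_nil]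
        omega
      · -- both nonempty: attach w after A
        obtain ⟨c1, hc1⟩ : ∃ c1, C.head? = some c1 := by
          cases C
          · exact absurd rfl hCne
          · exact ⟨_, rfl⟩
        have hc1C : c1 ∈ C := List.mem_of_mem_head? hc1
        obtain ⟨a0, ha0⟩ : ∃ a0, A.getLast? = some a0 := by
          rcases eq_or_ne A.getLast? none with h | h
          · exact absurd (List.getLast?_eq_none_iff.mp h) hAne
          · exact Option.ne_none_iff_exists'.mp h
        have ha0A : a0 ∈ A := List.mem_of_mem_getLast? ha0
        have hdx2 : 2 ≤ dg G x := by
          refine two_le_dg (hjunAx a0 ha0 x (by simp)).symm hxy_adj ?_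
          exact fun h => ((hne_of_mem a0 (Or.inr (Or.inr ha0A))).2 h).elim
        have hdy2 : 2 ≤ dg G y := by
          refine two_le_dg hxy_adj.symm (hjunyC c1 (by simp [hc1])) ?_
          exact fun h => ((hne_of_mem c1 (Or.inr (Or.inl hc1C))).1 h.symm).elim
        have hxw : dg G x ≤ dg (contractEdge G u v) (w he) := by omega
        have hA1 : A.length + 1 ≤ mp (contractEdge G u v) := by
          refine piece_w_le he htf A x hxu hA hndA hadjA ?_ hmonoA ?_
          · intro c hc
            exact hjunAx c hc x (by simp)
          · intro d hd
            exact le_trans (hjunAxd d hd (dg G x) (by simp)) hxw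
        simp only [List.length_append, List.length_cons, List.length_nil]
        omega
  | cons m1 M' =>
    -- nonconsecutive: M = m1 :: M' nonempty
    have hm1M : m1 ∈ m1 :: M' := List.mem_cons_self
    obtain ⟨mk, hmk⟩ : ∃ mk, (m1 :: M').getLast? = some mk :=
      ⟨(m1 :: M').getLast (by simp), List.getLast?_eq_getLast (l := m1 :: M') (by simp)⟩
    have hmkM : mk ∈ m1 :: M' := List.mem_of_mem_getLast? hmk
    have hadj_x_m1 : G.Adj x m1 := hjunx m1 (by simp)
    have hadj_mk_y : G.Adj mk y := hjunMy mk hmk y (by simp)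
    have hdx2 : 2 ≤ dg G x := by
      refine two_le_dg hadj_x_m1 hxy_adj ?_
      exact fun h => ((hne_of_mem m1 (Or.inl hm1M)).2 h).elim
    have hdy2 : 2 ≤ dg G y := by
      refine two_le_dg hxy_adj.symm hadj_mk_y.symm ?_
      exact fun h => ((hne_of_mem mk (Or.inl hmkM)).1 h.symm).elim
    have hxw : dg G x ≤ dg (contractEdge G u v) (w he) := by omega
    have hyw : dg G y ≤ dg (contractEdge G u v) (w he) := by omega
    have hA1 : A.length + 1 ≤ mp (contractEdge G u v) := by
      refine piece_w_le he htf A x hxu hA hndA hadjA ?_ hmonoA ?_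
      · intro c hc
        exact hjunAx c hc x (by simp)
      · intro d hd
        exact le_trans (hjunAxd d hd (dg G x) (by simp)) hxw
    have hM1 : (m1 :: M').length + 1 ≤ mp (contractEdge G u v) := by
      refine piece_w_le he htf (m1 :: M') y hyu hM hndM hadjM ?_ hmonoM ?_
      · intro c hc
        exact hjunMy c hc y (by simp)
      · intro d hd
        exact le_trans (hjunMyd d hd (dg G y) (by simp)) hyw
    simp only [List.length_append, List.length_cons, List.length_nil] at hM1 ⊢
    omega

include he htf in
lemma main_le (L : List V) (hne : L ≠ []) (hadj : L.Chain' G.Adj) (hnd : L.Nodup)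
    (hmono : (L.map (dg G)).Chain' (· ≤ ·)) :
    L.length ≤ 3 * mp (contractEdge G u v) := by
  by_cases hu : u ∈ L
  · by_cases hv : v ∈ L
    · obtain ⟨A, R, rfl⟩ := List.append_of_mem hu
      rcases List.mem_append.mp hv with hvA | hvR
      · obtain ⟨A1, A2, rfl⟩ := List.append_of_mem hvA
        have hshape : (A1 ++ v :: A2) ++ u :: R = A1 ++ (v :: (A2 ++ (u :: R))) := by
          simp [List.append_assoc]
        rw [hshape] at hnd hadj hmono ⊢
        have hd := nodup_decomp2 hnd
        refine case_two he htf v u (Or.inr ⟨rfl, rfl⟩) A1 A2 R ?_ hnd hadj hmono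
        intro c hc
        constructor <;> rintro rfl <;>
          rcases List.mem_append.mp hc with h | h <;>
          first
            | (rcases List.mem_append.mp h with h2 | h2 <;> tauto)
            | tauto
      · rcases List.mem_cons.mp hvR with h | hvR
        · exact absurd h.symm he.ne
        · obtain ⟨M, C, rfl⟩ := List.append_of_mem hvR
          have hd := nodup_decomp2 hnd
          refine case_two he htf u v (Or.inl ⟨rfl, rfl⟩) A M C ?_ hnd hadj hmono
          intro c hc
          constructor <;> rintro rfl <;>
            rcases List.mem_append.mp hc with h | h <;>
            first
              | (rcases List.mem_append.mp h with h2 | h2 <;> tauto)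
              | tauto
    · obtain ⟨A, B, rfl⟩ := List.append_of_mem hu
      have hd := nodup_decomp1 hnd
      refine case_one he htf u v (Or.inl ⟨rfl, rfl⟩) A B ?_ hnd hadj hmono
      intro c hc
      constructor <;> rintro rfl
      · rcases List.mem_append.mp hc with h | h <;> tauto
      · exact hv (by rcases List.mem_append.mp hc with h | h <;> simp [h])
  · by_cases hv : v ∈ L
    · obtain ⟨A, B, rfl⟩ := List.append_of_mem hv
      have hd := nodup_decomp1 hnd
      refine case_one he htf v u (Or.inr ⟨rfl, rfl⟩) A B ?_ hnd hadj hmono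
      intro c hc
      constructor <;> rintro rfl
      · exact hu (by rcases List.mem_append.mp hc with h | h <;> simp [h])
      · rcases List.mem_append.mp hc with h | h <;> tauto
    · have := piece_le he htf L (fun c hc => ⟨fun h => hu (h ▸ hc), fun h => hv (h ▸ hc)⟩)
        hne hnd hadj hmono
      omega

end CaseLemmas

theorem mp_contract_ge' {V : Type*} [Fintype V] [DecidableEq V] (G : SimpleGraph V)
    (u v : V) (he : G.Adj u v) (htf : G.CliqueFree 3) :
    (mp G : ℚ) / 3 ≤ (mp (contractEdge G u v) : ℚ) := by
  rw [div_le_iff₀ (by norm_num : (0:ℚ) < 3)]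
  have key : mp G ≤ 3 * mp (contractEdge G u v) := by
    obtain ⟨l, hne, hadj, hnd, hmono, hlen⟩ := exists_mp_list G u
    rw [← hlen]
    rcases hmono with hm | hm
    · exact main_le he htf l hne hadj hnd hm
    · have hrev := main_le he htf l.reverse (by simpa using hne)
        ((List.isChain_reverse).mpr (List.IsChain.imp (fun _ _ h => h.symm) hadj))
        (by simpa using hnd)
        (by
          rw [List.map_reverse]
          exact (List.isChain_reverse).mpr (List.IsChain.imp (fun _ _ h => h) hm))
      simpa using hrev
  calc (mp G : ℚ) ≤ ((3 * mp (contractEdge G u v) : ℕ) : ℚ) := by exact_mod_cast key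
    _ = (mp (contractEdge G u v) : ℚ) * 3 := by push_cast; ring


end MPAux

theorem mp_contract_ge {V : Type*} [Fintype V] [DecidableEq V] (G : SimpleGraph V)
    (u v : V) (he : G.Adj u v) (htf : G.CliqueFree 3) :
    (mp G : ℚ) / 3 ≤ (mp (contractEdge G u v) : ℚ) :=
  MPAux.mp_contract_ge' G u v he htf
end

section
/- There exist arbitrarily large K4-free graphs G on n vertices containing an edge e such that mp(G) = 4 while mp(G·e) = n − 1. -/
open SimpleGraph

namespace MPC

/-- cyclic successor on `Fin (2k)` viewed in ℕ -/
def sc (k i : ℕ) : ℕ := if i = 2*k - 1 then 0 else i + 1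

def gRel (k : ℕ) (a b : Fin (2*k+2)) : Prop :=
  a.val = 2*k+1 ∨ b.val = 2*k+1 ∨
  (a.val = 2*k ∧ b.val < 2*k ∧ b.val % 2 = 1) ∨
  (b.val = 2*k ∧ a.val < 2*k ∧ a.val % 2 = 1) ∨
  (a.val < 2*k ∧ b.val < 2*k ∧ (b.val = sc k a.val ∨ a.val = sc k b.val))

def Gk (k : ℕ) : SimpleGraph (Fin (2*k+2)) := fromRel (gRel k)

variable {k : ℕ}

lemma gRel_symm {a b : Fin (2*k+2)} : gRel k a b ↔ gRel k b a := by
  unfold gRel; tauto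

lemma adj_iff {a b : Fin (2*k+2)} : (Gk k).Adj a b ↔ a ≠ b ∧ gRel k a b := by
  rw [Gk, fromRel_adj]
  constructor
  · rintro ⟨h, h2 | h2⟩
    · exact ⟨h, h2⟩
    · exact ⟨h, gRel_symm.mpr h2⟩
  · rintro ⟨h, h2⟩; exact ⟨h, Or.inl h2⟩

def uV (k : ℕ) : Fin (2*k+2) := ⟨2*k, by omega⟩
def vV (k : ℕ) : Fin (2*k+2) := ⟨2*k+1, by omega⟩
def xV (k i : ℕ) (h : i < 2*k) : Fin (2*k+2) := ⟨i, by omega⟩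

lemma adj_v_iff {b : Fin (2*k+2)} : (Gk k).Adj (vV k) b ↔ b ≠ vV k := by
  rw [adj_iff]
  constructor
  · rintro ⟨h, _⟩; exact h.symm
  · intro h; exact ⟨h.symm, Or.inl rfl⟩

lemma sc_lt (k i : ℕ) (hk : 1 ≤ k) (h : i < 2*k) : sc k i < 2*k := by
  unfold sc; split <;> omega

lemma sc_ne (k i : ℕ) (hk : 1 ≤ k) (h : i < 2*k) : sc k i ≠ i := by
  unfold sc; split <;> omega

/-- parity flips along cycle edges -/
lemma sc_parity (k i : ℕ) (h : i < 2*k) : sc k i % 2 ≠ i % 2 := by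
  unfold sc; split <;> omega

/-- adjacency of a rim vertex -/
lemma adj_x_iff (hk : 4 ≤ k) {i : ℕ} (hi : i < 2*k) {b : Fin (2*k+2)} :
    (Gk k).Adj (xV k i hi) b ↔
      b = vV k ∨ (i % 2 = 1 ∧ b = uV k) ∨
      (b.val < 2*k ∧ (b.val = sc k i ∨ i = sc k b.val)) := by
  rw [adj_iff]
  constructor
  · rintro ⟨hne, h | h | h | h | h⟩
    · exact absurd h (by simp [xV]; omega)
    · left; exact Fin.ext h
    · exact absurd h.1 (by simp [xV]; omega)
    · right; left; exact ⟨h.2.2, Fin.ext h.1⟩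
    · right; right; exact ⟨h.2.1, h.2.2⟩
  · rintro (rfl | ⟨hodd, rfl⟩ | ⟨hb, h⟩)
    · refine ⟨?_, Or.inr (Or.inl rfl)⟩
      simp [xV, vV, Fin.ext_iff]; omega
    · refine ⟨?_, Or.inr (Or.inr (Or.inr (Or.inl ⟨rfl, hi, hodd⟩)))⟩
      simp [xV, uV, Fin.ext_iff]; omega
    · refine ⟨?_, Or.inr (Or.inr (Or.inr (Or.inr ⟨hi, hb, h⟩)))⟩
      simp [xV, Fin.ext_iff]
      rcases h with h | h
      · have := sc_ne k i (by omega) hi; omega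
      · have := sc_ne k b.val (by omega) hb; omega

lemma adj_u_iff (hk : 4 ≤ k) {b : Fin (2*k+2)} :
    (Gk k).Adj (uV k) b ↔ b = vV k ∨ (b.val < 2*k ∧ b.val % 2 = 1) := by
  rw [adj_iff]
  constructor
  · rintro ⟨hne, h | h | h | h | h⟩
    · exact absurd h (by simp only [uV]; omega)
    · left; exact Fin.ext h
    · right; exact h.2
    · exact absurd h.2.1 (by simp only [uV]; omega)
    · exact absurd h.1 (by simp only [uV]; omega)
  · rintro (rfl | ⟨hb, hodd⟩)
    · exact ⟨by simp [uV, vV, Fin.ext_iff], Or.inr (Or.inl rfl)⟩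
    · exact ⟨by simp only [uV, ne_eq, Fin.ext_iff]; omega, Or.inr (Or.inr (Or.inl ⟨rfl, hb, hodd⟩))⟩


/-- cyclic predecessor -/
def pr (k i : ℕ) : ℕ := if i = 0 then 2*k - 1 else i - 1

lemma pr_lt (k i : ℕ) (hk : 1 ≤ k) (hi : i < 2*k) : pr k i < 2*k := by unfold pr; split <;> omega

lemma sc_pr_iff (k : ℕ) (hk : 1 ≤ k) {i b : ℕ} (hi : i < 2*k) (hb : b < 2*k) :
    i = sc k b ↔ b = pr k i := by
  unfold sc pr; split <;> split <;> omega

lemma sc_ne_pr (k i : ℕ) (hk : 2 ≤ k) (hi : i < 2*k) : sc k i ≠ pr k i := by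
  unfold sc pr; split <;> split <;> omega

lemma card3 {α} [DecidableEq α] {a b c : α} (h1 : a ≠ b) (h2 : a ≠ c) (h3 : b ≠ c) :
    ({a, b, c} : Finset α).card = 3 := by
  rw [Finset.card_insert_of_notMem (by simp [h1, h2]),
    Finset.card_insert_of_notMem (by simp [h3]), Finset.card_singleton]

lemma card4 {α} [DecidableEq α] {a b c d : α} (h1 : a ≠ b) (h2 : a ≠ c) (h3 : a ≠ d)
    (h4 : b ≠ c) (h5 : b ≠ d) (h6 : c ≠ d) : ({a, b, c, d} : Finset α).card = 4 := by
  rw [Finset.card_insert_of_notMem (by simp [h1, h2, h3]),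
    Finset.card_insert_of_notMem (by simp [h4, h5]),
    Finset.card_insert_of_notMem (by simp [h6]), Finset.card_singleton]

lemma deg_v (hk : 4 ≤ k) (inst : Fintype ((Gk k).neighborSet (vV k))) :
    @SimpleGraph.degree _ (Gk k) (vV k) inst = 2*k+1 := by
  have hset : (Gk k).neighborFinset (vV k) = Finset.univ.erase (vV k) := by
    ext b
    rw [mem_neighborFinset, adj_v_iff, Finset.mem_erase]
    simp
  rw [SimpleGraph.degree, hset, Finset.card_erase_of_mem (Finset.mem_univ _)]
  simp

lemma deg_even (hk : 4 ≤ k) {i : ℕ} (hi : i < 2*k) (he : i % 2 = 0)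
    (inst : Fintype ((Gk k).neighborSet (xV k i hi))) :
    @SimpleGraph.degree _ (Gk k) (xV k i hi) inst = 3 := by
  have hset : (Gk k).neighborFinset (xV k i hi) =
      {xV k (sc k i) (sc_lt k i (by omega) hi), xV k (pr k i) (pr_lt k i (by omega) hi), vV k} := by
    ext b
    rw [mem_neighborFinset, adj_x_iff hk hi]
    simp only [Finset.mem_insert, Finset.mem_singleton]
    constructor
    · rintro (rfl | ⟨hodd, rfl⟩ | ⟨hb, h | h⟩)
      · tauto
      · omega
      · left; exact Fin.ext h
      · right; left; exact Fin.ext ((sc_pr_iff k (by omega) hi hb).mp h)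
    · rintro (rfl | rfl | rfl)
      · right; right
        exact ⟨sc_lt k i (by omega) hi, Or.inl rfl⟩
      · right; right
        refine ⟨pr_lt k i (by omega) hi, Or.inr ?_⟩
        exact (sc_pr_iff k (by omega) hi (pr_lt k i (by omega) hi)).mpr rfl
      · left; rfl
  rw [SimpleGraph.degree, hset]
  refine card3 ?_ ?_ ?_ <;> simp only [xV, vV, ne_eq, Fin.ext_iff]
  · exact sc_ne_pr k i (by omega) hi
  · have := sc_lt k i (by omega) hi; omega
  · have := pr_lt k i (by omega) hi; omega

lemma deg_odd (hk : 4 ≤ k) {i : ℕ} (hi : i < 2*k) (he : i % 2 = 1)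
    (inst : Fintype ((Gk k).neighborSet (xV k i hi))) :
    @SimpleGraph.degree _ (Gk k) (xV k i hi) inst = 4 := by
  have hset : (Gk k).neighborFinset (xV k i hi) =
      {xV k (sc k i) (sc_lt k i (by omega) hi), xV k (pr k i) (pr_lt k i (by omega) hi), vV k, uV k} := by
    ext b
    rw [mem_neighborFinset, adj_x_iff hk hi]
    simp only [Finset.mem_insert, Finset.mem_singleton]
    constructor
    · rintro (rfl | ⟨hodd, rfl⟩ | ⟨hb, h | h⟩)
      · tauto
      · tauto
      · left; exact Fin.ext h
      · right; left; exact Fin.ext ((sc_pr_iff k (by omega) hi hb).mp h)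
    · rintro (rfl | rfl | rfl | rfl)
      · right; right
        exact ⟨sc_lt k i (by omega) hi, Or.inl rfl⟩
      · right; right
        refine ⟨pr_lt k i (by omega) hi, Or.inr ?_⟩
        exact (sc_pr_iff k (by omega) hi (pr_lt k i (by omega) hi)).mpr rfl
      · left; rfl
      · right; left; exact ⟨he, rfl⟩
  rw [SimpleGraph.degree, hset]
  have h1 := sc_lt k i (by omega) hi
  have h2 := pr_lt k i (by omega) hi
  refine card4 ?_ ?_ ?_ ?_ ?_ ?_ <;> simp only [xV, vV, uV, ne_eq, Fin.ext_iff]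
  · exact sc_ne_pr k i (by omega) hi
  · omega
  · omega
  · omega
  · omega
  · omega

lemma deg_u_le (hk : 4 ≤ k) (inst : Fintype ((Gk k).neighborSet (uV k))) :
    @SimpleGraph.degree _ (Gk k) (uV k) inst ≤ 2*k := by
  have hsub : (Gk k).neighborFinset (uV k) ⊆
      (Finset.univ.erase (uV k)).erase (xV k 0 (by omega)) := by
    intro b hb
    rw [mem_neighborFinset, adj_u_iff hk] at hb
    rw [Finset.mem_erase, Finset.mem_erase]
    refine ⟨?_, ?_, Finset.mem_univ _⟩
    · rcases hb with rfl | ⟨h1, h2⟩ <;> simp only [xV, vV, ne_eq, Fin.ext_iff] <;> omega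
    · rcases hb with rfl | ⟨h1, h2⟩ <;> simp only [uV, vV, ne_eq, Fin.ext_iff] <;> omega
  calc @SimpleGraph.degree _ (Gk k) (uV k) inst ≤ _ := Finset.card_le_card hsub
    _ ≤ 2*k := by
      rw [Finset.card_erase_of_mem, Finset.card_erase_of_mem (Finset.mem_univ _)]
      · simp
      · rw [Finset.mem_erase]
        exact ⟨by simp only [xV, uV, ne_eq, Fin.ext_iff]; omega, Finset.mem_univ _⟩

lemma deg_u_ge (hk : 4 ≤ k) (inst : Fintype ((Gk k).neighborSet (uV k))) :
    5 ≤ @SimpleGraph.degree _ (Gk k) (uV k) inst := by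
  have hsub : ({vV k, xV k 1 (by omega), xV k 3 (by omega), xV k 5 (by omega),
      xV k 7 (by omega)} : Finset (Fin (2*k+2))) ⊆ (Gk k).neighborFinset (uV k) := by
    intro b hb
    rw [mem_neighborFinset, adj_u_iff hk]
    simp only [Finset.mem_insert, Finset.mem_singleton] at hb
    rcases hb with rfl | rfl | rfl | rfl | rfl
    · left; rfl
    all_goals right; constructor <;> simp [xV] <;> omega
  have hcard : ({vV k, xV k 1 (by omega), xV k 3 (by omega), xV k 5 (by omega),
      xV k 7 (by omega)} : Finset (Fin (2*k+2))).card = 5 := by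
    rw [Finset.card_insert_of_notMem, Finset.card_insert_of_notMem,
      Finset.card_insert_of_notMem, Finset.card_insert_of_notMem, Finset.card_singleton] <;>
      simp only [Finset.mem_insert, Finset.mem_singleton, xV, vV, Fin.ext_iff] <;> omega
  calc 5 = _ := hcard.symm
    _ ≤ _ := Finset.card_le_card hsub

lemma classify (a : Fin (2*k+2)) :
    a = vV k ∨ a = uV k ∨ ∃ i, ∃ hi : i < 2*k, a = xV k i hi := by
  rcases (by omega : a.val < 2*k ∨ a.val = 2*k ∨ a.val = 2*k+1) with h | h | h
  · exact Or.inr (Or.inr ⟨a.val, h, Fin.ext rfl⟩)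
  · exact Or.inr (Or.inl (Fin.ext h))
  · exact Or.inl (Fin.ext h)

lemma deg_congr {z : Fin (2*k+2)} (i1 i2 : Fintype ((Gk k).neighborSet z)) :
    @SimpleGraph.degree _ (Gk k) z i1 = @SimpleGraph.degree _ (Gk k) z i2 := by
  have : i1 = i2 := Subsingleton.elim _ _
  rw [this]

lemma xV_ne_vV {i : ℕ} (hi : i < 2*k) : xV k i hi ≠ vV k := by
  simp only [xV, vV, ne_eq, Fin.ext_iff]; omega

lemma xV_ne_uV {i : ℕ} (hi : i < 2*k) : xV k i hi ≠ uV k := by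
  simp only [xV, uV, ne_eq, Fin.ext_iff]; omega

/-- adjacent rim vertices have different parity -/
lemma adj_x_x_parity (hk : 4 ≤ k) {i j : ℕ} (hi : i < 2*k) (hj : j < 2*k)
    (hab : (Gk k).Adj (xV k i hi) (xV k j hj)) : i % 2 ≠ j % 2 := by
  rw [adj_x_iff hk hi] at hab
  rcases hab with h | ⟨_, h⟩ | ⟨_, h | h⟩
  · exact absurd h (xV_ne_vV hj)
  · exact absurd h (xV_ne_uV hj)
  · have := sc_parity k i hi
    simp only [xV] at h; omega
  · have := sc_parity k j hj
    simp only [xV] at h; omega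

lemma adj_x_u_odd (hk : 4 ≤ k) {i : ℕ} (hi : i < 2*k)
    (hab : (Gk k).Adj (xV k i hi) (uV k)) : i % 2 = 1 := by
  rw [adj_x_iff hk hi] at hab
  rcases hab with h | ⟨h, _⟩ | ⟨h, _⟩
  · exact absurd h (by simp only [uV, vV, ne_eq, Fin.ext_iff]; omega)
  · exact h
  · exact absurd h (by simp only [uV]; omega)

lemma deg_edge_ne (hk : 4 ≤ k) {a b : Fin (2*k+2)} (hab : (Gk k).Adj a b)
    (ia : Fintype ((Gk k).neighborSet a)) (ib : Fintype ((Gk k).neighborSet b)) :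
    @SimpleGraph.degree _ (Gk k) a ia ≠ @SimpleGraph.degree _ (Gk k) b ib := by
  rcases classify a with rfl | rfl | ⟨i, hi, rfl⟩ <;>
    rcases classify b with rfl | rfl | ⟨j, hj, rfl⟩
  · exact absurd rfl hab.ne
  · rw [deg_v hk ia]
    have := deg_u_le hk ib; omega
  · rw [deg_v hk ia]
    rcases Nat.even_or_odd j with hj2 | hj2
    · rw [deg_even hk hj (Nat.even_iff.mp hj2) ib]; omega
    · rw [deg_odd hk hj (Nat.odd_iff.mp hj2) ib]; omega
  · rw [deg_v hk ib]
    have := deg_u_le hk ia; omega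
  · exact absurd rfl hab.ne
  · have hodd := adj_x_u_odd hk hj (hab.symm)
    rw [deg_odd hk hj hodd ib]
    have := deg_u_ge hk ia; omega
  · rw [deg_v hk ib]
    rcases Nat.even_or_odd i with hi2 | hi2
    · rw [deg_even hk hi (Nat.even_iff.mp hi2) ia]; omega
    · rw [deg_odd hk hi (Nat.odd_iff.mp hi2) ia]; omega
  · have hodd := adj_x_u_odd hk hi hab
    rw [deg_odd hk hi hodd ia]
    have := deg_u_ge hk ib; omega
  · have hpar := adj_x_x_parity hk hi hj hab
    rcases Nat.even_or_odd i with hi2 | hi2 <;> rcases Nat.even_or_odd j with hj2 | hj2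
    · exact absurd (by rw [Nat.even_iff] at hi2 hj2; omega) hpar
    · rw [deg_even hk hi (Nat.even_iff.mp hi2) ia, deg_odd hk hj (Nat.odd_iff.mp hj2) ib]; omega
    · rw [deg_odd hk hi (Nat.odd_iff.mp hi2) ia, deg_even hk hj (Nat.even_iff.mp hj2) ib]; omega
    · exact absurd (by rw [Nat.odd_iff] at hi2 hj2; omega) hpar

lemma deg_mem (hk : 4 ≤ k) (a : Fin (2*k+2)) (ia : Fintype ((Gk k).neighborSet a))
    (iu : Fintype ((Gk k).neighborSet (uV k))) :
    @SimpleGraph.degree _ (Gk k) a ia ∈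
      ({3, 4, @SimpleGraph.degree _ (Gk k) (uV k) iu, 2*k+1} : Finset ℕ) := by
  rcases classify a with rfl | rfl | ⟨i, hi, rfl⟩
  · rw [deg_v hk ia]; simp
  · rw [deg_congr ia iu]; simp
  · rcases Nat.even_or_odd i with hi2 | hi2
    · rw [deg_even hk hi (Nat.even_iff.mp hi2) ia]; simp
    · rw [deg_odd hk hi (Nat.odd_iff.mp hi2) ia]; simp

lemma cliqueFree (hk : 4 ≤ k) : (Gk k).CliqueFree 4 := by
  have hcol : (Gk k).Colorable 3 := by
    refine ⟨Coloring.mk (fun a => if a.val = 2*k+1 then 2 else if a.val % 2 = 1 then 1 else 0) ?_⟩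
    intro a b hab
    rw [adj_iff] at hab
    obtain ⟨hne, hrel⟩ := hab
    have hne' : a.val ≠ b.val := fun h => hne (Fin.ext h)
    have hX : (a.val = 2*k+1 ∧ b.val ≠ 2*k+1) ∨ (b.val = 2*k+1 ∧ a.val ≠ 2*k+1) ∨
        (a.val % 2 ≠ b.val % 2 ∧ a.val ≠ 2*k+1 ∧ b.val ≠ 2*k+1) := by
      rcases hrel with h | h | ⟨h1, h2, h3⟩ | ⟨h1, h2, h3⟩ | ⟨h1, h2, h3⟩
      · left; omega
      · right; left; omega
      · right; right; omega
      · right; right; omega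
      · have ha' := sc_parity k a.val h1
        have hb' := sc_parity k b.val h2
        right; right; rcases h3 with h3 | h3 <;> omega
    rcases hX with ⟨h1, h2⟩ | ⟨h1, h2⟩ | ⟨h1, h2, h3⟩ <;>
      simp only [ne_eq] <;> beta_reduce <;> split_ifs <;> first | omega | decide
  exact hcol.cliqueFree (by omega)

lemma chain'_strict {α : Type*} {R : α → α → Prop} {f : α → ℕ} :
    ∀ {s : List α}, s.Chain' R → (s.map f).Chain' (· ≤ ·) →
      (∀ a b, R a b → f a ≠ f b) → (s.map f).Chain' (· < ·)
  | [], _, _, _ => List.isChain_nil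
  | [a], _, _, _ => List.isChain_singleton _
  | (a :: b :: t), hR, hle, hne => by
    change List.IsChain _ _ at hle hR ⊢
    rw [List.map_cons, List.map_cons, List.isChain_cons_cons] at hle ⊢
    rw [List.isChain_cons_cons] at hR
    exact ⟨lt_of_le_of_ne hle.1 (hne a b hR.1), chain'_strict hR.2 hle.2 hne⟩

lemma chain'_strict' {α : Type*} {R : α → α → Prop} {f : α → ℕ} :
    ∀ {s : List α}, s.Chain' R → (s.map f).Chain' (· ≥ ·) →
      (∀ a b, R a b → f a ≠ f b) → (s.map f).Chain' (· > ·)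
  | [], _, _, _ => List.isChain_nil
  | [a], _, _, _ => List.isChain_singleton _
  | (a :: b :: t), hR, hle, hne => by
    change List.IsChain _ _ at hle hR ⊢
    rw [List.map_cons, List.map_cons, List.isChain_cons_cons] at hle ⊢
    rw [List.isChain_cons_cons] at hR
    exact ⟨lt_of_le_of_ne hle.1 (Ne.symm (hne a b hR.1)), chain'_strict' hR.2 hle.2 hne⟩

/-- a strictly monotone list with entries in a finset `F` has length at most `F.card` -/
lemma length_le_of_strict {s : List ℕ} {F : Finset ℕ}
    (h : s.Chain' (· < ·) ∨ s.Chain' (· > ·)) (hmem : ∀ x ∈ s, x ∈ F) :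
    s.length ≤ F.card := by
  have hnd : s.Nodup := by
    rcases h with h | h
    · exact (List.isChain_iff_pairwise.mp h).imp Nat.ne_of_lt
    · exact (List.isChain_iff_pairwise.mp h).imp Nat.ne_of_gt
  rw [← List.toFinset_card_of_nodup hnd]
  exact Finset.card_le_card (fun x hx => hmem x (List.mem_toFinset.mp hx))

section MG
variable [DecidableEq (Fin (2*k+2))] [DecidableRel (Gk k).Adj]

lemma mp_bound (hk : 4 ≤ k) {u0 v0 : Fin (2*k+2)} (p : (Gk k).Walk u0 v0)
    (hc : List.Chain' (· ≤ ·) (p.support.map (fun x => (Gk k).degree x)) ∨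
      List.Chain' (· ≥ ·) (p.support.map (fun x => (Gk k).degree x))) :
    p.support.length ≤ 4 := by
  have hadj : p.support.Chain' (Gk k).Adj := p.isChain_adj_support
  have hne : ∀ a b : Fin (2*k+2), (Gk k).Adj a b →
      (Gk k).degree a ≠ (Gk k).degree b := fun a b hab => deg_edge_ne hk hab _ _
  have hstrict : (p.support.map (fun x => (Gk k).degree x)).Chain' (· < ·) ∨
      (p.support.map (fun x => (Gk k).degree x)).Chain' (· > ·) := by
    rcases hc with hc | hc
    · exact Or.inl (chain'_strict hadj hc hne)
    · exact Or.inr (chain'_strict' hadj hc hne)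
  have hmem : ∀ x ∈ p.support.map (fun x => (Gk k).degree x),
      x ∈ ({3, 4, (Gk k).degree (uV k), 2*k+1} : Finset ℕ) := by
    intro x hx
    rw [List.mem_map] at hx
    obtain ⟨a, _, rfl⟩ := hx
    exact deg_mem hk a _ _
  have := length_le_of_strict hstrict hmem
  rw [List.length_map] at this
  calc p.support.length ≤ _ := this
    _ ≤ 4 := by
      apply le_trans (Finset.card_insert_le _ _)
      apply Nat.succ_le_succ
      apply le_trans (Finset.card_insert_le _ _)
      apply Nat.succ_le_succ
      apply le_trans (Finset.card_insert_le _ _)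
      simp

lemma adj_x0_x1 (hk : 4 ≤ k) : (Gk k).Adj (xV k 0 (by omega)) (xV k 1 (by omega)) := by
  rw [adj_x_iff hk]
  right; right
  refine ⟨?_, Or.inl ?_⟩ <;> simp only [xV, sc] <;> first | omega | (split <;> omega)

lemma adj_x1_u (hk : 4 ≤ k) : (Gk k).Adj (xV k 1 (by omega)) (uV k) := by
  rw [adj_x_iff hk]
  right; left; exact ⟨by omega, rfl⟩

lemma adj_u_v (hk : 4 ≤ k) : (Gk k).Adj (uV k) (vV k) := by
  rw [adj_u_iff hk]; left; rfl

def w4 (hk : 4 ≤ k) : (Gk k).Walk (xV k 0 (by omega)) (vV k) :=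
  Walk.cons (adj_x0_x1 hk) (Walk.cons (adj_x1_u hk) (Walk.cons (adj_u_v hk) Walk.nil))

lemma w4_support (hk : 4 ≤ k) : (w4 hk).support =
    [xV k 0 (by omega), xV k 1 (by omega), uV k, vV k] := by
  simp [w4]

lemma w4_isPath (hk : 4 ≤ k) : (w4 hk).IsPath := by
  rw [Walk.isPath_def, w4_support hk]
  simp only [List.nodup_cons, List.mem_cons, List.mem_singleton, List.not_mem_nil,
    List.nodup_nil, xV, uV, vV, Fin.ext_iff, and_true, not_or, or_false, not_false_eq_true]
  omega

lemma w4_chain (hk : 4 ≤ k) :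
    List.Chain' (· ≤ ·) ((w4 hk).support.map (fun x => (Gk k).degree x)) := by
  rw [w4_support hk]
  have h0 : (Gk k).degree (xV k 0 (by omega)) = 3 := deg_even hk (by omega) (by omega) _
  have h1 : (Gk k).degree (xV k 1 (by omega)) = 4 := deg_odd hk (by omega) (by omega) _
  have h2 := deg_u_ge hk ((Gk k).neighborSetFintype (uV k))
  have h3 := deg_u_le hk ((Gk k).neighborSetFintype (uV k))
  have h4 : (Gk k).degree (vV k) = 2*k+1 := deg_v hk _
  change List.IsChain _ _
  simp only [List.map_cons, List.map_nil, List.isChain_cons_cons, List.isChain_singleton, and_true,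
    h0, h1, h4]
  refine ⟨by omega, ?_, ?_⟩ <;> omega

end MG

lemma mp_Gk (hk : 4 ≤ k) : mp (Gk k) = 4 := by
  letI iDE : DecidableEq (Fin (2*k+2)) := Classical.decEq _
  letI iDR : DecidableRel (Gk k).Adj := Classical.decRel _
  have hrw : mp (Gk k) = sSup {n : ℕ | ∃ (u v : Fin (2*k+2)) (p : (Gk k).Walk u v), p.IsPath ∧
      (List.Chain' (· ≤ ·) (p.support.map (fun x => (Gk k).degree x)) ∨
       List.Chain' (· ≥ ·) (p.support.map (fun x => (Gk k).degree x))) ∧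
      p.support.length = n} := rfl
  rw [hrw]
  have hub : ∀ m ∈ {n : ℕ | ∃ (u v : Fin (2*k+2)) (p : (Gk k).Walk u v), p.IsPath ∧
      (List.Chain' (· ≤ ·) (p.support.map (fun x => (Gk k).degree x)) ∨
       List.Chain' (· ≥ ·) (p.support.map (fun x => (Gk k).degree x))) ∧
      p.support.length = n}, m ≤ 4 := by
    rintro m ⟨u0, v0, p, hp, hc, rfl⟩
    exact mp_bound hk p hc
  have hmem : (4 : ℕ) ∈ {n : ℕ | ∃ (u v : Fin (2*k+2)) (p : (Gk k).Walk u v), p.IsPath ∧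
      (List.Chain' (· ≤ ·) (p.support.map (fun x => (Gk k).degree x)) ∨
       List.Chain' (· ≥ ·) (p.support.map (fun x => (Gk k).degree x))) ∧
      p.support.length = n} :=
    ⟨xV k 0 (by omega), vV k, w4 hk, w4_isPath hk, Or.inl (w4_chain hk),
      by rw [w4_support hk]; rfl⟩
  exact le_antisymm (csSup_le ⟨4, hmem⟩ hub) (le_csSup ⟨4, hub⟩ hmem)

def Hk (k : ℕ) : SimpleGraph {x : Fin (2*k+2) // x ≠ vV k} :=
  contractEdge (Gk k) (uV k) (vV k)

lemma adj_to_v {z : Fin (2*k+2)} (hz : z ≠ vV k) : (Gk k).Adj z (vV k) :=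
  (adj_v_iff.mpr hz).symm

lemma adjH_iff {a b : {x : Fin (2*k+2) // x ≠ vV k}} :
    (Hk k).Adj a b ↔ a ≠ b ∧ ((Gk k).Adj a.1 b.1 ∨ a.1 = uV k ∨ b.1 = uV k) := by
  rw [Hk, contractEdge, fromRel_adj]
  constructor
  · rintro ⟨hne, h | h⟩
    · refine ⟨hne, ?_⟩
      rcases h with h | ⟨h, _⟩ | ⟨h, _⟩
      · exact Or.inl h
      · exact Or.inr (Or.inl h)
      · exact Or.inr (Or.inr h)
    · refine ⟨hne, ?_⟩
      rcases h with h | ⟨h, _⟩ | ⟨h, _⟩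
      · exact Or.inl (h.symm)
      · exact Or.inr (Or.inr h)
      · exact Or.inr (Or.inl h)
  · rintro ⟨hne, h | h | h⟩
    · exact ⟨hne, Or.inl (Or.inl h)⟩
    · exact ⟨hne, Or.inl (Or.inr (Or.inl ⟨h, adj_v_iff.mpr b.2⟩))⟩
    · exact ⟨hne, Or.inl (Or.inr (Or.inr ⟨h, adj_to_v a.2⟩))⟩

def uS (k : ℕ) : {x : Fin (2*k+2) // x ≠ vV k} :=
  ⟨uV k, by simp only [uV, vV, ne_eq, Fin.ext_iff]; omega⟩

def xS (k i : ℕ) (hi : i < 2*k) : {x : Fin (2*k+2) // x ≠ vV k} :=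
  ⟨xV k i hi, xV_ne_vV hi⟩

lemma pr_ne (k i : ℕ) (hk : 1 ≤ k) (hi : i < 2*k) : pr k i ≠ i := by
  unfold pr; split <;> omega

lemma degH_x (hk : 4 ≤ k) {i : ℕ} (hi : i < 2*k)
    (inst : Fintype ((Hk k).neighborSet (xS k i hi))) :
    @SimpleGraph.degree _ (Hk k) (xS k i hi) inst = 3 := by
  have hset : (Hk k).neighborFinset (xS k i hi) =
      {xS k (sc k i) (sc_lt k i (by omega) hi), xS k (pr k i) (pr_lt k i (by omega) hi), uS k} := by
    ext b
    rw [mem_neighborFinset, adjH_iff]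
    simp only [Finset.mem_insert, Finset.mem_singleton, xS, uS, Subtype.ext_iff]
    constructor
    · rintro ⟨hne, h | h | h⟩
      · rw [adj_x_iff hk hi] at h
        rcases h with h | ⟨_, h⟩ | ⟨hb, h | h⟩
        · exact absurd h b.2
        · right; right; exact h
        · left; exact Fin.ext h
        · right; left; exact Fin.ext ((sc_pr_iff k (by omega) hi hb).mp h)
      · exact absurd h (by simp only [xV, uV, Fin.ext_iff]; omega)
      · right; right; exact h
    · rintro (h | h | h)
      · refine ⟨?_, Or.inl ?_⟩
        · intro hh
          have hval : xV k i hi = xV k (sc k i) (sc_lt k i (by omega) hi) := by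
            rw [← h]; exact congrArg Subtype.val hh
          have : i = sc k i := by simpa [xV, Fin.ext_iff] using hval
          exact sc_ne k i (by omega) hi this.symm
        · rw [adj_x_iff hk hi, h]
          exact Or.inr (Or.inr ⟨sc_lt k i (by omega) hi, Or.inl rfl⟩)
      · refine ⟨?_, Or.inl ?_⟩
        · intro hh
          have hval : xV k i hi = xV k (pr k i) (pr_lt k i (by omega) hi) := by
            rw [← h]; exact congrArg Subtype.val hh
          have : i = pr k i := by simpa [xV, Fin.ext_iff] using hval
          exact pr_ne k i (by omega) hi this.symm
        · rw [adj_x_iff hk hi, h]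
          refine Or.inr (Or.inr ⟨pr_lt k i (by omega) hi, Or.inr ?_⟩)
          exact (sc_pr_iff k (by omega) hi (pr_lt k i (by omega) hi)).mpr rfl
      · refine ⟨?_, Or.inr (Or.inr h)⟩
        intro hh
        have hval : xV k i hi = uV k := by rw [← h]; exact congrArg Subtype.val hh
        exact xV_ne_uV hi hval
  rw [SimpleGraph.degree, hset]
  refine card3 ?_ ?_ ?_ <;>
    simp only [xS, uS, ne_eq, Subtype.ext_iff, xV, uV, Fin.ext_iff]
  · exact sc_ne_pr k i (by omega) hi
  · have := sc_lt k i (by omega) hi; omega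
  · have := pr_lt k i (by omega) hi; omega

lemma adj_uS_xS (hk : 4 ≤ k) {j : ℕ} (hj : j < 2*k) : (Hk k).Adj (uS k) (xS k j hj) := by
  rw [adjH_iff]
  refine ⟨?_, Or.inr (Or.inl rfl)⟩
  simp only [uS, xS, ne_eq, Subtype.ext_iff, uV, xV, Fin.ext_iff]
  omega

lemma degH_u_ge (hk : 4 ≤ k) (inst : Fintype ((Hk k).neighborSet (uS k))) :
    3 ≤ @SimpleGraph.degree _ (Hk k) (uS k) inst := by
  have hsub : ({xS k 0 (by omega), xS k 1 (by omega), xS k 2 (by omega)} :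
      Finset {x : Fin (2*k+2) // x ≠ vV k}) ⊆ (Hk k).neighborFinset (uS k) := by
    intro b hb
    rw [mem_neighborFinset]
    simp only [Finset.mem_insert, Finset.mem_singleton] at hb
    rcases hb with rfl | rfl | rfl <;> exact adj_uS_xS hk _
  have hcard : ({xS k 0 (by omega), xS k 1 (by omega), xS k 2 (by omega)} :
      Finset {x : Fin (2*k+2) // x ≠ vV k}).card = 3 := by
    refine card3 ?_ ?_ ?_ <;> simp only [xS, ne_eq, Subtype.ext_iff, xV, Fin.ext_iff] <;> omega
  calc 3 = _ := hcard.symm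
    _ ≤ _ := Finset.card_le_card hsub

lemma adj_step (hk : 4 ≤ k) {j : ℕ} (hj : j < 2*k) (hj1 : j + 1 < 2*k) :
    (Hk k).Adj (xS k j hj) (xS k (j+1) hj1) := by
  rw [adjH_iff]
  constructor
  · intro hh
    have : xV k j hj = xV k (j+1) hj1 := congrArg Subtype.val hh
    simp only [xV, Fin.ext_iff] at this
    omega
  · refine Or.inl ?_
    show (Gk k).Adj (xV k j hj) (xV k (j+1) hj1)
    rw [adj_x_iff hk hj]
    refine Or.inr (Or.inr ⟨by simpa [xV] using hj1, Or.inl ?_⟩)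
    simp only [xV, sc]
    split <;> omega

def ham (hk : 4 ≤ k) (j : ℕ) (hj : j < 2*k) : (Hk k).Walk (xS k j hj) (uS k) :=
  if hj1 : j + 1 < 2*k then
    Walk.cons (adj_step hk hj hj1) (ham hk (j+1) hj1)
  else
    Walk.cons ((adj_uS_xS hk hj).symm) Walk.nil
termination_by 2*k - j
decreasing_by omega

lemma ham_support (hk : 4 ≤ k) (j : ℕ) (hj : j < 2*k) :
    (ham hk j hj).support.map (fun z => z.1.val) = List.range' j (2*k - j) ++ [2*k] := by
  unfold ham
  split
  · next hj1 =>
    rw [Walk.support_cons, List.map_cons, ham_support hk (j+1) hj1]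
    have h2 : 2*k - j = (2*k - (j+1)) + 1 := by omega
    rw [h2, List.range'_succ]
    simp [xS, xV]
  · next hj1 =>
    have h2 : 2*k - j = 1 := by omega
    rw [h2]
    simp [xS, xV, uS, uV, List.range'_one]
    rfl
termination_by 2*k - j
decreasing_by omega

lemma ham_support_len (hk : 4 ≤ k) (j : ℕ) (hj : j < 2*k) :
    (ham hk j hj).support.length = (2*k - j) + 1 := by
  have := congrArg List.length (ham_support hk j hj)
  simpa using this

lemma ham_isPath (hk : 4 ≤ k) (j : ℕ) (hj : j < 2*k) : (ham hk j hj).IsPath := by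
  rw [Walk.isPath_def]
  have hnd : ((ham hk j hj).support.map (fun z => z.1.val)).Nodup := by
    rw [ham_support hk j hj]
    rw [List.nodup_append]
    refine ⟨List.nodup_range' (s := j) (n := 2*k - j), List.nodup_singleton _, ?_⟩
    intro a ha b hb
    rw [List.mem_range'] at ha
    rw [List.mem_singleton] at hb
    obtain ⟨i, hi, rfl⟩ := ha
    omega
  exact hnd.of_map _

lemma degH_any (hk : 4 ≤ k)
    (instD : ∀ z : {x : Fin (2*k+2) // x ≠ vV k}, Fintype ((Hk k).neighborSet z))
    (z : {x : Fin (2*k+2) // x ≠ vV k}) :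
    @SimpleGraph.degree _ (Hk k) z (instD z) =
      if z.1.val < 2*k then 3
      else @SimpleGraph.degree _ (Hk k) (uS k) (instD (uS k)) := by
  by_cases hz : z.1.val < 2*k
  · rw [if_pos hz]
    exact degH_x hk hz (instD _)
  · rw [if_neg hz]
    obtain ⟨⟨zv, hvlt⟩, hzne⟩ := z
    have hz2 : zv = 2*k := by
      have h5 : zv ≠ 2*k+1 := fun hc => hzne (Fin.ext hc)
      simp only at hz
      omega
    subst hz2
    rfl

lemma chain_rep (m D : ℕ) (h : 3 ≤ D) :
    List.Chain' (· ≤ ·) (List.replicate m 3 ++ [D]) := by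
  induction m with
  | zero => exact List.isChain_singleton _
  | succ m' ih =>
    rw [List.replicate_succ, List.cons_append]
    refine List.IsChain.cons ih ?_
    intro y hy
    cases m' with
    | zero =>
      simp only [List.replicate_zero, List.nil_append, List.head?_cons,
        Option.mem_def, Option.some.injEq] at hy
      omega
    | succ m'' =>
      rw [List.replicate_succ, List.cons_append, List.head?_cons] at hy
      simp only [Option.mem_def, Option.some.injEq] at hy
      omega

lemma ham_chain (hk : 4 ≤ k)
    (instD : ∀ z : {x : Fin (2*k+2) // x ≠ vV k}, Fintype ((Hk k).neighborSet z)) :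
    List.Chain' (· ≤ ·)
      ((ham hk 0 (by omega)).support.map
        (fun z => @SimpleGraph.degree _ (Hk k) z (instD z))) := by
  have hmap : (ham hk 0 (by omega)).support.map
      (fun z => @SimpleGraph.degree _ (Hk k) z (instD z)) =
      ((ham hk 0 (by omega)).support.map (fun z => z.1.val)).map
        (fun i => if i < 2*k then 3
          else @SimpleGraph.degree _ (Hk k) (uS k) (instD (uS k))) := by
    rw [List.map_map]
    exact List.map_congr_left (fun z _ => degH_any hk instD z)
  rw [hmap, ham_support hk 0 (by omega), List.map_append]
  have h1 : (List.range' 0 (2*k - 0)).map (fun i => if i < 2*k then 3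
      else @SimpleGraph.degree _ (Hk k) (uS k) (instD (uS k))) =
      List.replicate (2*k) 3 := by
    apply List.eq_replicate_iff.mpr
    refine ⟨by simp, ?_⟩
    intro b hb
    rw [List.mem_map] at hb
    obtain ⟨i, hi, rfl⟩ := hb
    rw [List.mem_range'] at hi
    rw [if_pos (by omega)]
  have h2 : ([2*k] : List ℕ).map (fun i => if i < 2*k then 3
      else @SimpleGraph.degree _ (Hk k) (uS k) (instD (uS k))) =
      [@SimpleGraph.degree _ (Hk k) (uS k) (instD (uS k))] := by
    simp
  rw [h1, h2]
  exact chain_rep _ _ (degH_u_ge hk _)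

lemma cardV' (inst : Fintype {x : Fin (2*k+2) // x ≠ vV k}) :
    @Fintype.card _ inst = 2*k+1 := by
  rw [Subsingleton.elim inst (by infer_instance)]
  show Fintype.card {x : Fin (2*k+2) // ¬ (x = vV k)} = 2*k+1
  rw [Fintype.card_subtype_compl, Fintype.card_fin, Fintype.card_subtype_eq]
  omega

lemma mp_Hk (hk : 4 ≤ k) : mp (contractEdge (Gk k) (uV k) (vV k)) = 2*k+1 := by
  letI iDE : DecidableEq {x : Fin (2*k+2) // x ≠ vV k} := Classical.decEq _
  letI iDR : DecidableRel (contractEdge (Gk k) (uV k) (vV k)).Adj := Classical.decRel _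
  have hrw : mp (contractEdge (Gk k) (uV k) (vV k)) =
      sSup {n : ℕ | ∃ (u v : {x : Fin (2*k+2) // x ≠ vV k})
        (p : (contractEdge (Gk k) (uV k) (vV k)).Walk u v), p.IsPath ∧
        (List.Chain' (· ≤ ·) (p.support.map
          (fun x => (contractEdge (Gk k) (uV k) (vV k)).degree x)) ∨
         List.Chain' (· ≥ ·) (p.support.map
          (fun x => (contractEdge (Gk k) (uV k) (vV k)).degree x))) ∧
        p.support.length = n} := rfl
  rw [hrw]
  have hub : ∀ m ∈ {n : ℕ | ∃ (u v : {x : Fin (2*k+2) // x ≠ vV k})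
        (p : (contractEdge (Gk k) (uV k) (vV k)).Walk u v), p.IsPath ∧
        (List.Chain' (· ≤ ·) (p.support.map
          (fun x => (contractEdge (Gk k) (uV k) (vV k)).degree x)) ∨
         List.Chain' (· ≥ ·) (p.support.map
          (fun x => (contractEdge (Gk k) (uV k) (vV k)).degree x))) ∧
        p.support.length = n}, m ≤ 2*k+1 := by
    rintro m ⟨u0, v0, p, hp, _, rfl⟩
    have h1 : p.length < Fintype.card {x : Fin (2*k+2) // x ≠ vV k} := hp.length_lt
    have h2 : p.support.length = p.length + 1 := Walk.length_support p
    rw [cardV' _] at h1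
    omega
  have hmem : 2*k+1 ∈ {n : ℕ | ∃ (u v : {x : Fin (2*k+2) // x ≠ vV k})
        (p : (contractEdge (Gk k) (uV k) (vV k)).Walk u v), p.IsPath ∧
        (List.Chain' (· ≤ ·) (p.support.map
          (fun x => (contractEdge (Gk k) (uV k) (vV k)).degree x)) ∨
         List.Chain' (· ≥ ·) (p.support.map
          (fun x => (contractEdge (Gk k) (uV k) (vV k)).degree x))) ∧
        p.support.length = n} := by
    refine ⟨xS k 0 (by omega), uS k, ham hk 0 (by omega), ham_isPath hk 0 (by omega),
      Or.inl ?_, ?_⟩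
    · exact ham_chain hk _
    · have := ham_support_len hk 0 (by omega)
      exact this.trans (by omega)
  exact le_antisymm (csSup_le ⟨_, hmem⟩ hub) (le_csSup ⟨_, hub⟩ hmem)

end MPC

theorem mp_contract_K4free (N : ℕ) :
    ∃ (n : ℕ), N ≤ n ∧ ∃ (G : SimpleGraph (Fin n)) (u v : Fin n),
      G.CliqueFree 4 ∧ G.Adj u v ∧ mp G = 4 ∧
      mp (contractEdge G u v) = n - 1 := by
  set k := max 4 N with hkdef
  have hk : 4 ≤ k := le_max_left _ _
  have hN : N ≤ 2*k+2 := by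
    have := le_max_right 4 N
    omega
  refine ⟨2*k+2, hN, MPC.Gk k, MPC.uV k, MPC.vV k, MPC.cliqueFree hk, ?_, ?_, ?_⟩
  · letI : DecidableEq (Fin (2*k+2)) := Classical.decEq _
    letI : DecidableRel (MPC.Gk k).Adj := Classical.decRel _
    exact MPC.adj_u_v hk
  · exact MPC.mp_Gk hk
  · rw [MPC.mp_Hk hk]
    omega
end

section
/- Let T be a tree and v a leaf of T. Then mp(T−v) ≤ 2·mp(T), where T−v is the tree obtained by deleting v. -/
open SimpleGraph

private lemma deg_irrel {V : Type*} [Fintype V] (G : SimpleGraph V) (x : V)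
    {i1 i2 : Fintype (G.neighborSet x)} :
    @SimpleGraph.degree V G x i1 = @SimpleGraph.degree V G x i2 := by
  congr!

private lemma le_mp {V : Type*} [Fintype V] (G : SimpleGraph V) [DecidableRel G.Adj]
    {a b : V} (q : G.Walk a b) (hq : q.IsPath)
    (h : List.Chain' (· ≤ ·) (q.support.map (fun x => G.degree x)) ∨
         List.Chain' (· ≥ ·) (q.support.map (fun x => G.degree x))) :
    q.support.length ≤ mp G := by
  classical
  rw [mp]
  apply le_csSup
  · refine ⟨Fintype.card V, ?_⟩
    rintro n ⟨x, y, p, hp, -, rfl⟩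
    exact hp.support_nodup.length_le_card
  · refine ⟨a, b, q, hq, ?_, rfl⟩
    obtain h | h := h
    · left; convert h using 3; exact deg_irrel _ _
    · right; convert h using 3; exact deg_irrel _ _

private lemma chain_transfer {α : Type*} (f g : α → ℕ) (hfg : ∀ x, f x ≤ g x) :
    ∀ l : List α, List.Chain' (· ≤ ·) (l.map f) →
      (∀ x ∈ l.dropLast, g x = f x) → List.Chain' (· ≤ ·) (l.map g)
  | [], _, _ => by exact List.isChain_nil
  | [a], _, _ => by exact List.isChain_singleton _
  | a :: b :: t, h, h2 => by
    simp only [List.Chain', List.map_cons, List.isChain_cons_cons] at h ⊢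
    have ha : g a = f a := h2 a (by simp)
    refine ⟨ha ▸ h.1.trans (hfg b), ?_⟩
    have := chain_transfer f g hfg (b :: t) (by simpa [List.Chain'] using h.2)
      (fun x hx => h2 x (by simp [List.dropLast_cons₂] at hx ⊢; tauto))
    simpa [List.Chain'] using this

theorem mp_tree_delete_leaf_le {V : Type*} [Fintype V] [DecidableEq V]
    (T : SimpleGraph V) [DecidableRel T.Adj] (hT : T.IsTree)
    (v : V) (hv : T.degree v = 1) :
    mp (T.induce {x : V | x ≠ v}) ≤ 2 * mp T := by
  classical
  obtain ⟨u, hu⟩ : ∃ u, T.neighborFinset v = {u} :=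
    Finset.card_eq_one.mp (by rw [SimpleGraph.card_neighborFinset_eq_degree]; exact hv)
  have hadj : ∀ x, T.Adj v x ↔ x = u := fun x => by
    rw [← SimpleGraph.mem_neighborFinset, hu, Finset.mem_singleton]
  have hvadj : T.Adj v u := (hadj u).mpr rfl
  have hune : u ≠ v := fun h => T.irrefl (h ▸ hvadj)
  set S : Set V := {x : V | x ≠ v} with hSdef
  set dS : S → ℕ := fun x => (T.induce S).degree x with hdSdef
  set dT : S → ℕ := fun x => T.degree (x : V) with hdTdef
  have hdeg : ∀ x : S, dT x = dS x + (if (x : V) = u then 1 else 0) := by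
    intro x
    have hsplit := Finset.card_filter_add_card_filter_not
      (s := T.neighborFinset (x : V)) (p := (· = v))
    have h1 : (T.neighborFinset (x : V)).filter (· = v) =
        if v ∈ T.neighborFinset (x : V) then {v} else ∅ :=
      Finset.filter_eq' _ v
    have h2 : v ∈ T.neighborFinset (x : V) ↔ (x : V) = u := by
      rw [SimpleGraph.mem_neighborFinset, SimpleGraph.adj_comm, hadj]
    have h3 : ((T.neighborFinset (x : V)).filter (¬ · = v)).card = dS x := by
      have hmapeq : (T.neighborFinset (x : V)).filter (¬ · = v) =
          ((T.induce S).neighborFinset x).map (Function.Embedding.subtype _) := by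
        ext y
        simp only [Finset.mem_filter, SimpleGraph.mem_neighborFinset, Finset.mem_map,
          Function.Embedding.coe_subtype, Subtype.exists, SimpleGraph.comap_adj]
        constructor
        · rintro ⟨hadj2, hne⟩
          exact ⟨y, hne, hadj2, rfl⟩
        · rintro ⟨a, ha, hadj2, rfl⟩
          exact ⟨hadj2, ha⟩
      rw [hmapeq, Finset.card_map]
      rfl
    have h4 : ((T.neighborFinset (x : V)).filter (· = v)).card =
        if (x : V) = u then 1 else 0 := by
      rw [h1]
      split_ifs with hh1 hh2 hh2 <;>
        simp_all [h2]
    have : dT x = (T.neighborFinset (x : V)).card := rfl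
    omega
  have hdle : ∀ x : S, dS x ≤ dT x := fun x => by rw [hdeg x]; omega
  have hU : S := ⟨u, hune⟩
  -- auxiliary : any ≤-monotone path in the induced graph has ≤ 2 * mp T vertices
  have key : ∀ (a b : S) (p : (T.induce S).Walk a b), p.IsPath →
      List.Chain' (· ≤ ·) (p.support.map dS) → p.support.length ≤ 2 * mp T := by
    intro a b p hp hchain
    have hmple : mp T ≤ 2 * mp T := by omega
    set f : T.induce S ↪g T := SimpleGraph.Embedding.induce S with hfdef
    by_cases hUmem : (⟨u, hune⟩ : S) ∈ p.support
    · set p1 := p.takeUntil _ hUmem with hp1def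
      set p2 := p.dropUntil _ hUmem with hp2def
      have hsplit : p1.support ++ p2.support.tail = p.support := by
        rw [← Walk.support_append, Walk.take_spec]
      have hchain2 : List.Chain' (· ≤ ·) (p1.support.map dS) ∧
          List.Chain' (· ≤ ·) (p2.support.tail.map dS) := by
        rw [← hsplit, List.map_append] at hchain; simp only [List.Chain', List.isChain_append] at hchain
        exact ⟨hchain.1, hchain.2.1⟩
      have hp1path : p1.IsPath := hp.takeUntil _
      have hp2path : p2.IsPath := hp.dropUntil _
      -- first segment
      have hlast : p1.support.getLast (by simp) = (⟨u, hune⟩ : S) :=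
        Walk.getLast_support p1
      have hl : p1.support.dropLast ++ [(⟨u, hune⟩ : S)] = p1.support := by
        conv_rhs => rw [← List.dropLast_append_getLast (l := p1.support) (by simp)]
        rw [hlast]
      have hd0 : (⟨u, hune⟩ : S) ∉ p1.support.dropLast := by
        have hnd : (p1.support.dropLast ++ [(⟨u, hune⟩ : S)]).Nodup := by
          rw [hl]; exact hp1path.support_nodup
        intro hmem
        exact (List.disjoint_of_nodup_append hnd) hmem (List.mem_singleton.mpr rfl)
      have hnotu : ∀ x ∈ p1.support.dropLast, (x : V) ≠ u := by
        intro x hx hxu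
        have hxeq : x = (⟨u, hune⟩ : S) := Subtype.ext hxu
        exact hd0 (hxeq ▸ hx)
      have hchainT1 : List.Chain' (· ≤ ·) (p1.support.map dT) := by
        refine chain_transfer dS dT hdle _ hchain2.1 ?_
        intro x hx
        rw [hdeg x, if_neg (hnotu x hx)]; omega
      have hm1 : p1.support.length ≤ mp T := by
        have hq1 : (p1.map f.toHom).IsPath :=
          Walk.map_isPath_of_injective f.injective hp1path
        have := le_mp T (p1.map f.toHom) hq1 (Or.inl ?_)
        · simpa [Walk.support_map] using this
        · rw [Walk.support_map, List.map_map]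
          exact hchainT1
      -- second segment
      have hnodup : (p1.support ++ p2.support.tail).Nodup := by
        rw [hsplit]; exact hp.support_nodup
      have hu2 : (⟨u, hune⟩ : S) ∉ p2.support.tail := by
        have hmem1 : (⟨u, hune⟩ : S) ∈ p1.support := Walk.end_mem_support p1
        exact fun hc => (List.disjoint_of_nodup_append hnodup) hmem1 hc
      have heqmap : p2.support.tail.map dT = p2.support.tail.map dS := by
        refine List.map_congr_left ?_
        intro x hx
        have hxu : (x : V) ≠ u := fun hc => hu2 ((show x = (⟨u, hune⟩ : S) from Subtype.ext hc) ▸ hx)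
        rw [hdeg x, if_neg hxu]; omega
      by_cases hnil : p2.Nil
      · have : p2.support = [(⟨u, hune⟩ : S)] := Walk.nil_iff_support_eq.mp hnil
        have hlen : p.support.length = p1.support.length := by
          rw [← hsplit, List.length_append, this]
          simp
        rw [hlen]
        exact hm1.trans hmple
      · have hp2t : p2.tail.IsPath := hp2path.tail
        have hsupt : p2.tail.support = p2.support.tail :=
          Walk.support_tail_of_not_nil p2 hnil
        have hm2 : p2.support.tail.length ≤ mp T := by
          have hq2 : (p2.tail.map f.toHom).IsPath :=
            Walk.map_isPath_of_injective f.injective hp2t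
          have := le_mp T (p2.tail.map f.toHom) hq2 (Or.inl ?_)
          · rw [Walk.support_map, List.length_map, hsupt] at this
            exact this
          · rw [Walk.support_map, List.map_map, hsupt]
            have h5 : List.Chain' (· ≤ ·) (p2.support.tail.map dT) := by
              rw [heqmap]; exact hchain2.2
            exact h5
        have : p.support.length = p1.support.length + p2.support.tail.length := by
          rw [← hsplit, List.length_append]
        omega
    · -- u not on the path
      have heqmap : p.support.map dT = p.support.map dS := by
        refine List.map_congr_left ?_
        intro x hx
        have hxu : (x : V) ≠ u := fun hc => hUmem ((show x = (⟨u, hune⟩ : S) from Subtype.ext hc) ▸ hx)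
        rw [hdeg x, if_neg hxu]; omega
      have hq : (p.map f.toHom).IsPath :=
        Walk.map_isPath_of_injective f.injective hp
      have := le_mp T (p.map f.toHom) hq (Or.inl ?_)
      · rw [Walk.support_map, List.length_map] at this
        exact this.trans hmple
      · rw [Walk.support_map, List.map_map]
        have h5 : List.Chain' (· ≤ ·) (p.support.map dT) := by
          rw [heqmap]; exact hchain
        exact h5
  -- now the main bound
  rw [mp]
  apply csSup_le'
  rintro n ⟨a, b, p, hp, hchain, rfl⟩
  have hchain' : List.Chain' (· ≤ ·) (p.support.map dS) ∨
      List.Chain' (· ≥ ·) (p.support.map dS) := by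
    obtain h | h := hchain
    · left; convert h using 3; exact deg_irrel _ _
    · right; convert h using 3; exact deg_irrel _ _
  obtain h | h := hchain'
  · exact key a b p hp h
  · have hrev : List.Chain' (· ≤ ·) (p.reverse.support.map dS) := by
      rw [Walk.support_reverse, List.map_reverse]
      exact List.isChain_reverse.mpr h
    have := key b a p.reverse hp.reverse hrev
    rwa [Walk.support_reverse, List.length_reverse] at this
end

section
/- Let T be a tree and let v be a new leaf attached to T. Then mp(T+v) ≥ mp(T)/2, and likewise for a leaf v of T, mp(T−v) ≥ mp(T)/2. -/
open SimpleGraph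

/-- The graph obtained from `G` by adding a new vertex `none` joined to the vertices in `S`. -/
def addVertex {V : Type*} (G : SimpleGraph V) (S : Set V) : SimpleGraph (Option V) :=
  SimpleGraph.fromRel (fun a b =>
    (∃ x y, a = some x ∧ b = some y ∧ G.Adj x y) ∨ (a = none ∧ ∃ x ∈ S, b = some x))

namespace MpProof

open List

noncomputable def dnc {V : Type*} (G : SimpleGraph V) (x : V) : ℕ := (G.neighborSet x).ncard

lemma degree_eq_dnc {V : Type*} (G : SimpleGraph V) (x : V) [Fintype (G.neighborSet x)] :
    G.degree x = dnc G x := by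
  rw [SimpleGraph.degree, dnc, SimpleGraph.neighborFinset, Set.ncard_eq_toFinset_card']

lemma mp_eq {V : Type*} [Fintype V] (G : SimpleGraph V) :
    mp G = sSup {n : ℕ | ∃ (u v : V) (p : G.Walk u v), p.IsPath ∧
      (List.Chain' (· ≤ ·) (p.support.map (dnc G)) ∨
       List.Chain' (· ≥ ·) (p.support.map (dnc G))) ∧ p.support.length = n} := by
  unfold mp
  congr 1
  ext n
  simp only [degree_eq_dnc]

lemma le_mp {V : Type*} [Fintype V] {G : SimpleGraph V} {a b : V} (p : G.Walk a b)
    (hp : p.IsPath)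
    (hchain : List.Chain' (· ≤ ·) (p.support.map (dnc G)) ∨
      List.Chain' (· ≥ ·) (p.support.map (dnc G))) :
    p.support.length ≤ mp G := by
  rw [mp_eq]
  apply le_csSup
  · refine ⟨Fintype.card V, ?_⟩
    rintro n ⟨u, w, q, hq, -, rfl⟩
    exact hq.support_nodup.length_le_card
  · exact ⟨a, b, p, hp, hchain, rfl⟩

lemma one_le_mp {V : Type*} [Fintype V] [Nonempty V] (G : SimpleGraph V) : 1 ≤ mp G := by
  obtain ⟨a⟩ := ‹Nonempty V›
  have := le_mp (G := G) (Walk.nil (u := a)) Walk.IsPath.nil (Or.inl (by exact List.isChain_singleton _))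
  simpa using this

lemma chain'_head_mod {r : ℕ → ℕ → Prop} (htr : Transitive r) {a b : ℕ} {l : List ℕ}
    (hab : r b a) (h : Chain' r (a :: l)) : Chain' r (b :: l) := by
  cases l with
  | nil => exact List.isChain_singleton _
  | cons c t =>
    exact List.isChain_cons_cons.mpr ⟨htr hab (List.isChain_cons_cons.mp h).1, (List.isChain_cons_cons.mp h).2⟩

lemma chain'_rev_le {l : List ℕ} (h : Chain' (· ≥ ·) l) : Chain' (· ≤ ·) l.reverse := by
  exact List.isChain_reverse.mpr h

lemma chain'_rev_ge {l : List ℕ} (h : Chain' (· ≤ ·) l) : Chain' (· ≥ ·) l.reverse := by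
  exact List.isChain_reverse.mpr h

lemma chain'_last_mod {r : ℕ → ℕ → Prop} (htr : Transitive r) {a b : ℕ} {l : List ℕ}
    (hab : r a b) (h : Chain' r (l ++ [a])) : Chain' r (l ++ [b]) := by
  have h1 : Chain' (flip r) (a :: l.reverse) := by
    have h0 : IsChain r (a :: l.reverse).reverse := by
      rw [List.reverse_cons, List.reverse_reverse]; exact h
    exact List.isChain_reverse.mp h0
  have h2 : Chain' (flip r) (b :: l.reverse) :=
    chain'_head_mod (r := flip r) (fun x y z hxy hyz => htr hyz hxy) hab h1
  have h3 : Chain' r ((b :: l.reverse).reverse) := by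
    exact List.isChain_reverse.mpr h2
  simpa using h3

lemma addV_adj_some_some {V : Type*} (G : SimpleGraph V) (S : Set V) (a b : V) :
    (addVertex G S).Adj (some a) (some b) ↔ G.Adj a b := by
  simp only [addVertex, SimpleGraph.fromRel_adj]
  constructor
  · rintro ⟨hne, (⟨x, y, hx, hy, h⟩ | ⟨h, -⟩) | (⟨x, y, hx, hy, h⟩ | ⟨h, -⟩)⟩
    · cases hx; cases hy; exact h
    · exact absurd h (by simp)
    · cases hx; cases hy; exact h.symm
    · exact absurd h (by simp)
  · intro h
    exact ⟨by simpa using h.ne, Or.inl (Or.inl ⟨a, b, rfl, rfl, h⟩)⟩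

lemma addV_adj_some_none {V : Type*} (G : SimpleGraph V) (S : Set V) (a : V) :
    (addVertex G S).Adj (some a) none ↔ a ∈ S := by
  simp only [addVertex, SimpleGraph.fromRel_adj]
  constructor
  · rintro ⟨hne, (⟨x, y, hx, hy, h⟩ | ⟨h, -⟩) | (⟨x, y, hx, hy, h⟩ | ⟨-, x, hx, hy⟩)⟩
    · exact absurd hy (by simp)
    · exact absurd h (by simp)
    · exact absurd hx (by simp)
    · cases hy; exact hx
  · intro h
    refine ⟨by simp, Or.inr (Or.inr ⟨trivial, a, h, rfl⟩)⟩

lemma dnc_addV {V : Type*} [Fintype V] [DecidableEq V] (T : SimpleGraph V) (x y : V) :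
    dnc (addVertex T {x}) (some y) = dnc T y + if y = x then 1 else 0 := by
  classical
  have hset : (addVertex T {x}).neighborSet (some y) =
      if y = x then insert none (some '' T.neighborSet y) else some '' T.neighborSet y := by
    ext z
    cases z with
    | none =>
      by_cases hyx : y = x <;>
        simp [SimpleGraph.mem_neighborSet, addV_adj_some_none, hyx]
    | some w =>
      by_cases hyx : y = x <;>
        simp [SimpleGraph.mem_neighborSet, addV_adj_some_some, hyx]
  rw [dnc, hset]
  by_cases hyx : y = x
  · simp only [hyx, if_true]
    rw [Set.ncard_insert_of_notMem (by simp),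
      Set.ncard_image_of_injective _ (Option.some_injective V)]
    rfl
  · simp only [hyx, if_false]
    rw [Set.ncard_image_of_injective _ (Option.some_injective V)]
    simp [dnc]

lemma dnc_induce {V : Type*} [Fintype V] [DecidableEq V] (T : SimpleGraph V) {v u : V}
    (hnbr : T.neighborSet v = {u}) (z : {y : V | y ≠ v}) :
    dnc (T.induce {y : V | y ≠ v}) z =
      if (z : V) = u then dnc T (z : V) - 1 else dnc T (z : V) := by
  classical
  have hu : T.Adj v u := by rw [← SimpleGraph.mem_neighborSet, hnbr]; rfl
  have he : ((T.induce {y : V | y ≠ v}).neighborSet z) ≃ ↥(T.neighborSet (z : V) \ {v}) :=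
    { toFun := fun w => ⟨(w : {y : V | y ≠ v}), ⟨w.2, w.1.2⟩⟩
      invFun := fun w => ⟨⟨(w : V), w.2.2⟩, w.2.1⟩
      left_inv := fun w => rfl
      right_inv := fun w => rfl }
  rw [dnc, ← Nat.card_coe_set_eq, Nat.card_congr he, Nat.card_coe_set_eq]
  by_cases hz : (z : V) = u
  · have hvmem : v ∈ T.neighborSet (z : V) := by
      rw [SimpleGraph.mem_neighborSet, hz]
      exact hu.symm
    rw [Set.ncard_diff_singleton_of_mem hvmem, if_pos hz]
    rfl
  · have hvnot : v ∉ T.neighborSet (z : V) := by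
      intro hmem
      have : (z : V) ∈ T.neighborSet v := by
        rw [SimpleGraph.mem_neighborSet] at hmem ⊢
        exact hmem.symm
      rw [hnbr] at this
      exact hz this
    rw [Set.diff_singleton_eq_self hvnot, if_neg hz]
    rfl

lemma exists_induce_walk {V : Type*} {G : SimpleGraph V} {s : Set V} {a b : V}
    (p : G.Walk a b) (h : ∀ y ∈ p.support, y ∈ s) :
    ∃ q : (G.induce s).Walk ⟨a, h a p.start_mem_support⟩ ⟨b, h b p.end_mem_support⟩,
      q.support.map Subtype.val = p.support := by
  induction p with
  | nil => exact ⟨Walk.nil, by simp⟩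
  | @cons c d e hadj q ih =>
    obtain ⟨q', hq'⟩ := ih (fun y hy => h y (by simp [hy]))
    exact ⟨Walk.cons (by exact hadj) q', by exact congrArg (c :: ·) hq'⟩

def homAdd {V : Type*} (T : SimpleGraph V) (x : V) : T →g addVertex T {x} :=
  ⟨some, fun h => (addV_adj_some_some T {x} _ _).mpr h⟩

lemma homAdd_inj {V : Type*} (T : SimpleGraph V) (x : V) :
    Function.Injective ⇑(homAdd T x) := fun _ _ h => Option.some_injective V h

lemma key_add {V : Type*} [Fintype V] [DecidableEq V] (T : SimpleGraph V) (x : V)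
    {a b : V} (p : T.Walk a b) (hp : p.IsPath)
    (hchain : Chain' (· ≤ ·) (p.support.map (dnc T))) :
    p.support.length ≤ 2 * mp (addVertex T {x}) := by
  classical
  set G' := addVertex T {x} with hG'
  set g : V → ℕ := fun y => dnc T y + if y = x then 1 else 0 with hg
  have hmapchain : ∀ {c d : V} (r : T.Walk c d),
      (Walk.map (homAdd T x) r).support.map (dnc G') = r.support.map g := by
    intro c d r
    rw [Walk.support_map, List.map_map]
    apply List.map_congr_left
    intro z _
    show dnc G' (some z) = g z
    exact dnc_addV T x z
  have hpathmap : ∀ {c d : V} (r : T.Walk c d), r.IsPath → (Walk.map (homAdd T x) r).IsPath :=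
    fun r hr => Walk.map_isPath_of_injective (homAdd_inj T x) hr
  have hlenmap : ∀ {c d : V} (r : T.Walk c d),
      (Walk.map (homAdd T x) r).support.length = r.support.length := by
    intro c d r
    rw [Walk.support_map, List.length_map]
  by_cases hx : x ∈ p.support
  · -- split at x
    obtain ⟨A, hA⟩ : ∃ A, A = p.takeUntil x hx := ⟨_, rfl⟩
    obtain ⟨B, hB⟩ : ∃ B, B = p.dropUntil x hx := ⟨_, rfl⟩
    have hsp : p.support = A.support ++ B.support.tail := by
      rw [hA, hB]
      conv_lhs => rw [← Walk.take_spec p hx]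
      rw [Walk.support_append]
    have hAne : A.support ≠ [] := Walk.support_ne_nil _
    have hAdecomp : A.support.dropLast ++ [x] = A.support := by
      have h1 := List.dropLast_append_getLast hAne
      rwa [Walk.getLast_support A] at h1
    have hsp2 : p.support = A.support.dropLast ++ B.support := by
      conv_lhs => rw [hsp, ← hAdecomp]
      rw [List.append_assoc, List.singleton_append, ← Walk.support_eq_cons]
    have hApath : A.IsPath := hA ▸ hp.takeUntil hx
    have hBpath : B.IsPath := hB ▸ hp.dropUntil hx
    -- Piece 1 : A, with x at the end
    have hAsub : A.support <+ p.support := by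
      rw [hsp]; exact List.sublist_append_left _ _
    have hAchain : Chain' (· ≤ ·) (A.support.map (dnc T)) :=
      hchain.sublist (hAsub.map (dnc T))
    have hxnotdl : x ∉ A.support.dropLast := by
      intro hmem
      have hnd : (A.support.dropLast ++ [x]).Nodup := by
        rw [hAdecomp]; exact hApath.support_nodup
      rw [List.nodup_append] at hnd
      exact hnd.2.2 x hmem x (by simp) rfl
    have hgA : A.support.map g = A.support.dropLast.map (dnc T) ++ [dnc T x + 1] := by
      conv_lhs => rw [← hAdecomp]
      rw [List.map_append]
      congr 1
      · apply List.map_congr_left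
        intro z hz
        have hzx : z ≠ x := fun e => hxnotdl (e ▸ hz)
        simp [hg, hzx]
      · simp [hg]
    have hAchain' : Chain' (· ≤ ·) (A.support.map g) := by
      rw [hgA]
      have h0 : Chain' (· ≤ ·) (A.support.dropLast.map (dnc T) ++ [dnc T x]) := by
        have h1 : A.support.map (dnc T) = A.support.dropLast.map (dnc T) ++ [dnc T x] := by
          conv_lhs => rw [← hAdecomp]
          rw [List.map_append]
          rfl
        rw [← h1]; exact hAchain
      exact chain'_last_mod (r := (· ≤ ·)) (a := dnc T x) (b := dnc T x + 1)
        (l := A.support.dropLast.map (dnc T)) (fun _ _ _ h1 h2 => le_trans h1 h2) (Nat.le_succ _) h0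
    have hmpA : A.support.length ≤ mp G' := by
      have := le_mp (Walk.map (homAdd T x) A) (hpathmap A hApath)
        (Or.inl (by rw [hmapchain]; exact hAchain'))
      rwa [hlenmap] at this
    have hlen1 : p.support.length = A.support.length + B.support.tail.length := by
      rw [hsp, List.length_append]
    -- Piece 2 : B minus its first vertex x
    cases B with
    | nil =>
      simp only [Walk.support_nil, List.tail_cons, List.length_nil, Nat.add_zero] at hlen1
      omega
    | cons hadj r =>
      rw [Walk.cons_isPath_iff] at hBpath
      obtain ⟨hr, hxr⟩ := hBpath
      have hBsub : (Walk.cons hadj r).support <+ p.support := by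
        rw [hsp2]; exact List.sublist_append_right _ _
      have hBchain : Chain' (· ≤ ·) ((Walk.cons hadj r).support.map (dnc T)) :=
        hchain.sublist (hBsub.map (dnc T))
      have hrchain : Chain' (· ≤ ·) (r.support.map (dnc T)) := by
        rw [Walk.support_cons, List.map_cons] at hBchain
        exact hBchain.tail
      have hgr : r.support.map g = r.support.map (dnc T) := by
        apply List.map_congr_left
        intro z hz
        have hzx : z ≠ x := fun e => hxr (e ▸ hz)
        simp [hg, hzx]
      have hmpB : r.support.length ≤ mp G' := by
        have := le_mp (Walk.map (homAdd T x) r) (hpathmap r hr)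
          (Or.inl (by rw [hmapchain, hgr]; exact hrchain))
        rwa [hlenmap] at this
      rw [Walk.support_cons, List.tail_cons] at hlen1
      omega
  · -- x not on p : map the whole path
    have hgp : p.support.map g = p.support.map (dnc T) := by
      apply List.map_congr_left
      intro z hz
      have hzx : z ≠ x := fun e => hx (e ▸ hz)
      simp [hg, hzx]
    have hmpp : p.support.length ≤ mp G' := by
      have := le_mp (Walk.map (homAdd T x) p) (hpathmap p hp)
        (Or.inl (by rw [hmapchain, hgp]; exact hchain))
      rwa [hlenmap] at this
    omega

lemma key_del {V : Type*} [Fintype V] [DecidableEq V] (T : SimpleGraph V) {v u : V}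
    (hnbr : T.neighborSet v = {u}) {a b : V} (p : T.Walk a b) (hp : p.IsPath)
    (hchain : Chain' (· ≤ ·) (p.support.map (dnc T))) :
    p.support.length ≤ 2 * mp (T.induce {y : V | y ≠ v}) := by
  classical
  set G' := T.induce {y : V | y ≠ v} with hG'
  have hu : T.Adj v u := by rw [← SimpleGraph.mem_neighborSet, hnbr]; rfl
  have huv : u ≠ v := hu.ne'
  haveI : Nonempty {y : V | y ≠ v} := ⟨⟨u, huv⟩⟩
  have h1mp : 1 ≤ mp G' := one_le_mp G'
  have hdv : dnc T v = 1 := by rw [dnc, hnbr, Set.ncard_singleton]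
  set g : V → ℕ := fun y => if y = u then dnc T y - 1 else dnc T y with hg
  have build : ∀ {c d : V} (r : T.Walk c d), r.IsPath →
      ∀ _ : ∀ y ∈ r.support, y ∈ {y : V | y ≠ v},
      (Chain' (· ≤ ·) (r.support.map g) ∨ Chain' (· ≥ ·) (r.support.map g)) →
      r.support.length ≤ mp G' := by
    intro c d r hr hmem hch
    obtain ⟨q, hq⟩ := exists_induce_walk r hmem
    have hqpath : q.IsPath := by
      rw [Walk.isPath_def]
      exact List.Nodup.of_map _ (hq ▸ hr.support_nodup)
    have hqchain : q.support.map (dnc G') = r.support.map g := by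
      have h1 : q.support.map (dnc G') = q.support.map (g ∘ Subtype.val) := by
        apply List.map_congr_left
        intro z _
        show dnc G' z = g z.val
        rw [hG', dnc_induce T hnbr z]
      rw [h1, ← List.map_map, hq]
    have hqlen : q.support.length = r.support.length := by
      rw [← hq, List.length_map]
    have hch' : Chain' (· ≤ ·) (q.support.map (dnc G')) ∨
        Chain' (· ≥ ·) (q.support.map (dnc G')) := by
      rw [hqchain]; exact hch
    have h15 := le_mp (G := G') q hqpath hch'
    omega
  by_cases hvmem : v ∈ p.support
  · -- v lies on p
    obtain ⟨A, hA⟩ : ∃ A, A = p.takeUntil v hvmem := ⟨_, rfl⟩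
    obtain ⟨B, hB⟩ : ∃ B, B = p.dropUntil v hvmem := ⟨_, rfl⟩
    have hsp : p.support = A.support ++ B.support.tail := by
      rw [hA, hB]
      conv_lhs => rw [← Walk.take_spec p hvmem]
      rw [Walk.support_append]
    have hApath : A.IsPath := hA ▸ hp.takeUntil hvmem
    have hBpath : B.IsPath := hB ▸ hp.dropUntil hvmem
    have hor : A.support.length = 1 ∨ B.support.length = 1 := by
      by_contra hcon
      push_neg at hcon
      obtain ⟨hA1, hB1⟩ := hcon
      have hdisj := (List.nodup_append.mp (hsp ▸ hp.support_nodup)).2.2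
      obtain ⟨R, hR⟩ : ∃ R, R = A.reverse := ⟨_, rfl⟩
      have hRsup : R.support = A.support.reverse := by rw [hR, Walk.support_reverse]
      cases R with
      | nil =>
        have h2 := congrArg List.length hRsup
        simp only [Walk.support_nil, List.length_cons, List.length_nil,
          List.length_reverse] at h2
        omega
      | cons hadj1 r1 =>
        rename_i z1
        have hz1A : z1 ∈ A.support := by
          have h3 : z1 ∈ (Walk.cons hadj1 r1).support := by
            rw [Walk.support_cons]
            exact List.mem_cons_of_mem _ r1.start_mem_support
          rw [hRsup, List.mem_reverse] at h3
          exact h3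
        have hz1u : z1 = u := by
          have h4 : z1 ∈ T.neighborSet v := hadj1
          rw [hnbr] at h4
          exact h4
        cases B with
        | nil =>
          simp only [Walk.support_nil, List.length_cons, List.length_nil] at hB1
          omega
        | cons hadj2 r2 =>
          rename_i z2
          have hz2B : z2 ∈ (Walk.cons hadj2 r2).support.tail := by
            rw [Walk.support_cons, List.tail_cons]
            exact r2.start_mem_support
          have hz2u : z2 = u := by
            have h5 : z2 ∈ T.neighborSet v := hadj2
            rw [hnbr] at h5
            exact h5
          exact hdisj u (hz1u ▸ hz1A) u (hz2u ▸ hz2B) rfl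
    rcases hor with hA1 | hB1
    · -- v is the first vertex of p
      have hav : a = v := by
        have h6 := Walk.length_support A
        have h7 : A.length = 0 := by omega
        exact Walk.eq_of_length_eq_zero h7
      cases p with
      | nil => simp only [Walk.support_nil, List.length_cons, List.length_nil]; omega
      | cons hadj q =>
        rename_i w
        have hwu : w = u := by
          have h8 : w ∈ T.neighborSet v := hav ▸ hadj
          rw [hnbr] at h8
          exact h8
        rw [Walk.cons_isPath_iff] at hp
        obtain ⟨hq, havq⟩ := hp
        have hvq : v ∉ q.support := hav ▸ havq
        have hqchain : Chain' (· ≤ ·) (q.support.map (dnc T)) := by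
          rw [Walk.support_cons, List.map_cons] at hchain
          exact hchain.tail
        have hunotq : w ∉ q.support.tail := by
          have h9 := hq.support_nodup
          rw [Walk.support_eq_cons q, List.nodup_cons] at h9
          exact h9.1
        have hgq : q.support.map g = (dnc T w - 1) :: q.support.tail.map (dnc T) := by
          conv_lhs => rw [Walk.support_eq_cons q]
          rw [List.map_cons]
          congr 1
          · simp [hg, hwu]
          · apply List.map_congr_left
            intro z hz
            have hzw : z ≠ w := fun e => hunotq (e ▸ hz)
            have hzu : z ≠ u := hwu ▸ hzw
            simp [hg, hzu]
        have hqchain' : Chain' (· ≤ ·) (q.support.map g) := by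
          rw [hgq]
          have h10 : Chain' (· ≤ ·) (dnc T w :: q.support.tail.map (dnc T)) := by
            have h11 : q.support.map (dnc T) = dnc T w :: q.support.tail.map (dnc T) := by
              conv_lhs => rw [Walk.support_eq_cons q]
              rfl
            rw [← h11]; exact hqchain
          exact chain'_head_mod (r := (· ≤ ·)) (a := dnc T w) (b := dnc T w - 1)
            (l := q.support.tail.map (dnc T)) (fun _ _ _ h1 h2 => le_trans h1 h2)
            (Nat.sub_le _ 1) h10
        have hmpq : q.support.length ≤ mp G' :=
          build q hq (fun y hy hyv => hvq (hyv ▸ hy)) (Or.inl hqchain')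
        have h12 : (Walk.cons hadj q).support.length = q.support.length + 1 := by
          rw [Walk.support_cons]; rfl
        omega
    · -- v is the last vertex of p
      have hbv : v = b := by
        have h6 := Walk.length_support B
        have h7 : B.length = 0 := by omega
        exact Walk.eq_of_length_eq_zero h7
      subst hbv
      by_cases hn2 : p.support.length ≤ 2
      · omega
      · exfalso
        push_neg at hn2
        obtain ⟨P, hP⟩ : ∃ P, P = p.reverse := ⟨_, rfl⟩
        have hPpath : P.IsPath := by rw [hP]; exact hp.reverse
        have hPchain : Chain' (· ≥ ·) (P.support.map (dnc T)) := by
          rw [hP, Walk.support_reverse, List.map_reverse]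
          exact chain'_rev_ge hchain
        have hPlen : P.support.length = p.support.length := by
          rw [hP, Walk.support_reverse, List.length_reverse]
        cases P with
        | nil =>
          simp only [Walk.support_nil, List.length_cons, List.length_nil] at hPlen
          omega
        | cons hadj q =>
          rename_i w
          rw [Walk.cons_isPath_iff] at hPpath
          obtain ⟨hq, hvq⟩ := hPpath
          have hdu1 : dnc T w ≤ 1 := by
            rw [Walk.support_cons, Walk.support_eq_cons q, List.map_cons, List.map_cons] at hPchain
            have := (List.isChain_cons_cons.mp hPchain).1
            omega
          have hqlen2 : 2 ≤ q.support.length := by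
            have h13 : (Walk.cons hadj q).support.length = q.support.length + 1 := by
              rw [Walk.support_cons]; rfl
            omega
          cases q with
          | nil =>
            simp only [Walk.support_nil, List.length_cons, List.length_nil] at hqlen2
            omega
          | cons hadj2 r =>
            rename_i z
            have hzq : z ∈ (Walk.cons hadj2 r).support := by
              rw [Walk.support_cons]
              exact List.mem_cons_of_mem _ r.start_mem_support
            have hvz : v ≠ z := fun e => hvq (e ▸ hzq)
            have hsub : ({v, z} : Set V) ⊆ T.neighborSet w := by
              intro y hy
              rcases hy with rfl | rfl
              · exact hadj.symm
              · exact hadj2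
            have h14 := Set.ncard_le_ncard hsub (Set.toFinite _)
            rw [Set.ncard_pair hvz] at h14
            have : dnc T w = (T.neighborSet w).ncard := rfl
            omega
  · by_cases humem : u ∈ p.support
    · -- u on p, v not on p : split at u
      obtain ⟨A, hA⟩ : ∃ A, A = p.takeUntil u humem := ⟨_, rfl⟩
      obtain ⟨B, hB⟩ : ∃ B, B = p.dropUntil u humem := ⟨_, rfl⟩
      have hsp : p.support = A.support ++ B.support.tail := by
        rw [hA, hB]
        conv_lhs => rw [← Walk.take_spec p humem]
        rw [Walk.support_append]
      have hAne : A.support ≠ [] := Walk.support_ne_nil _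
      have hAdecomp : A.support.dropLast ++ [u] = A.support := by
        have h1 := List.dropLast_append_getLast hAne
        rwa [Walk.getLast_support A] at h1
      have hsp2 : p.support = A.support.dropLast ++ B.support := by
        conv_lhs => rw [hsp, ← hAdecomp]
        rw [List.append_assoc, List.singleton_append, ← Walk.support_eq_cons]
      have hApath : A.IsPath := hA ▸ hp.takeUntil humem
      have hBpath : B.IsPath := hB ▸ hp.dropUntil humem
      -- piece B, with u (decreased) at its head
      have hBsub : B.support <+ p.support := by
        rw [hsp2]; exact List.sublist_append_right _ _
      have hBchain : Chain' (· ≤ ·) (B.support.map (dnc T)) :=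
        hchain.sublist (hBsub.map (dnc T))
      have hunotB : u ∉ B.support.tail := by
        have h9 := hBpath.support_nodup
        rw [Walk.support_eq_cons B, List.nodup_cons] at h9
        exact h9.1
      have hgB : B.support.map g = (dnc T u - 1) :: B.support.tail.map (dnc T) := by
        conv_lhs => rw [Walk.support_eq_cons B]
        rw [List.map_cons]
        congr 1
        · simp [hg]
        · apply List.map_congr_left
          intro z hz
          have hzu : z ≠ u := fun e => hunotB (e ▸ hz)
          simp [hg, hzu]
      have hBchain' : Chain' (· ≤ ·) (B.support.map g) := by
        rw [hgB]
        have h10 : Chain' (· ≤ ·) (dnc T u :: B.support.tail.map (dnc T)) := by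
          have h11 : B.support.map (dnc T) = dnc T u :: B.support.tail.map (dnc T) := by
            conv_lhs => rw [Walk.support_eq_cons B]
            rfl
          rw [← h11]; exact hBchain
        exact chain'_head_mod (r := (· ≤ ·)) (a := dnc T u) (b := dnc T u - 1)
          (l := B.support.tail.map (dnc T)) (fun _ _ _ h1 h2 => le_trans h1 h2)
          (Nat.sub_le _ 1) h10
      have hmpB : B.support.length ≤ mp G' := by
        apply build B hBpath _ (Or.inl hBchain')
        intro y hy hyv
        apply hvmem
        rw [hsp2]
        exact List.mem_append_right _ (hyv ▸ hy)
      have hlen1 : p.support.length = A.support.length + B.support.tail.length := by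
        rw [hsp, List.length_append]
      have hlen2 : B.support.length = B.support.tail.length + 1 := by
        rw [Walk.support_eq_cons B]; rfl
      -- piece A without its last vertex u, reversed
      have hAsub : A.support <+ p.support := by
        rw [hsp]; exact List.sublist_append_left _ _
      have hAchain : Chain' (· ≤ ·) (A.support.map (dnc T)) :=
        hchain.sublist (hAsub.map (dnc T))
      obtain ⟨R, hR⟩ : ∃ R, R = A.reverse := ⟨_, rfl⟩
      have hRsup : R.support = A.support.reverse := by rw [hR, Walk.support_reverse]
      have hRpath : R.IsPath := by rw [hR]; exact hApath.reverse
      have hRchain : Chain' (· ≥ ·) (R.support.map (dnc T)) := by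
        rw [hRsup, List.map_reverse]
        exact chain'_rev_ge hAchain
      cases R with
      | nil =>
        have h2 := congrArg List.length hRsup
        simp only [Walk.support_nil, List.length_cons, List.length_nil,
          List.length_reverse] at h2
        omega
      | cons hadj1 r =>
        rename_i z1
        rw [Walk.cons_isPath_iff] at hRpath
        obtain ⟨hr, hur⟩ := hRpath
        have hrsub : ∀ y ∈ r.support, y ∈ A.support := by
          intro y hy
          have h3 : y ∈ (Walk.cons hadj1 r).support := by
            rw [Walk.support_cons]
            exact List.mem_cons_of_mem _ hy
          rw [hRsup, List.mem_reverse] at h3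
          exact h3
        have hrchain : Chain' (· ≥ ·) (r.support.map (dnc T)) := by
          rw [Walk.support_cons, List.map_cons] at hRchain
          exact hRchain.tail
        have hgr : r.support.map g = r.support.map (dnc T) := by
          apply List.map_congr_left
          intro z hz
          have hzu : z ≠ u := fun e => hur (e ▸ hz)
          simp [hg, hzu]
        have hmpr : r.support.length ≤ mp G' := by
          apply build r hr _ (Or.inr (by rw [hgr]; exact hrchain))
          intro y hy hyv
          apply hvmem
          rw [hsp]
          exact List.mem_append_left _ (hyv ▸ hrsub y hy)
        have hlen3 : A.support.length = r.support.length + 1 := by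
          have h4 := congrArg List.length hRsup
          rw [Walk.support_cons] at h4
          simp only [List.length_cons, List.length_reverse] at h4
          omega
        omega
    · -- neither u nor v on p
      have hgp : p.support.map g = p.support.map (dnc T) := by
        apply List.map_congr_left
        intro z hz
        have hzu : z ≠ u := fun e => humem (e ▸ hz)
        simp [hg, hzu]
      have hmpp : p.support.length ≤ mp G' := by
        apply build p hp _ (Or.inl (by rw [hgp]; exact hchain))
        intro y hy hyv
        exact hvmem (hyv ▸ hy)
      omega

end MpProof

open MpProof List

theorem mp_tree_leaf_ge {V : Type*} [Fintype V] [DecidableEq V]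
    (T : SimpleGraph V) [DecidableRel T.Adj] (hT : T.IsTree)
    (x : V) (v : V) (hv : T.degree v = 1) :
    (mp T : ℚ) / 2 ≤ (mp (addVertex T {x}) : ℚ) ∧
    (mp T : ℚ) / 2 ≤ (mp (T.induce {y : V | y ≠ v}) : ℚ) := by
  classical
  have hdv : (T.neighborSet v).ncard = 1 := by
    have h1 : T.degree v = dnc T v := degree_eq_dnc T v
    rw [hv] at h1
    exact h1.symm
  obtain ⟨u, hnbr⟩ := Set.ncard_eq_one.mp hdv
  have hmain : ∀ m : ℕ, mp T ≤ 2 * m → (mp T : ℚ) / 2 ≤ (m : ℚ) := by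
    intro m h
    rw [div_le_iff₀ (by norm_num : (0 : ℚ) < 2)]
    have h2 : (mp T : ℚ) ≤ 2 * (m : ℚ) := by exact_mod_cast h
    linarith
  have hne : {n : ℕ | ∃ (a b : V) (p : T.Walk a b), p.IsPath ∧
      (List.Chain' (· ≤ ·) (p.support.map (dnc T)) ∨
       List.Chain' (· ≥ ·) (p.support.map (dnc T))) ∧ p.support.length = n}.Nonempty :=
    ⟨1, v, v, Walk.nil, Walk.IsPath.nil, Or.inl (by exact List.isChain_singleton _), by simp⟩
  constructor
  · apply hmain
    rw [mp_eq T]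
    apply csSup_le hne
    rintro n ⟨a, b, p, hp, hch | hch, rfl⟩
    · exact key_add T x p hp hch
    · have h3 := key_add T x p.reverse hp.reverse
        (by rw [Walk.support_reverse, List.map_reverse]; exact chain'_rev_le hch)
      rwa [Walk.support_reverse, List.length_reverse] at h3
  · apply hmain
    rw [mp_eq T]
    apply csSup_le hne
    rintro n ⟨a, b, p, hp, hch | hch, rfl⟩
    · exact key_del T hnbr p hp hch
    · have h3 := key_del T hnbr p.reverse hp.reverse
        (by rw [Walk.support_reverse, List.map_reverse]; exact chain'_rev_le hch)
      rwa [Walk.support_reverse, List.length_reverse] at h3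
end

section
/- For every k ≥ 2 there exists a tree T with mp(T) = k and a leaf addition v such that mp(T+v) = 2k. -/
open SimpleGraph


namespace MPProof

section AddVertex
variable {V : Type*} (G : SimpleGraph V) (S : Set V)

lemma addVertex_adj_some_some (a b : V) :
    (addVertex G S).Adj (some a) (some b) ↔ G.Adj a b := by
  rw [addVertex, fromRel_adj]
  constructor
  · rintro ⟨hne, (⟨x, y, hx, hy, h⟩ | ⟨h, -⟩) | (⟨x, y, hx, hy, h⟩ | ⟨h, -⟩)⟩
    · cases hx; cases hy; exact h
    · simp at h
    · cases hx; cases hy; exact h.symm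
    · simp at h
  · intro h
    exact ⟨by simpa using h.ne, Or.inl (Or.inl ⟨a, b, rfl, rfl, h⟩)⟩

lemma addVertex_adj_none_some (b : V) :
    (addVertex G S).Adj none (some b) ↔ b ∈ S := by
  rw [addVertex, fromRel_adj]
  constructor
  · rintro ⟨hne, (⟨x, y, hx, hy, h⟩ | ⟨-, x, hx, hb⟩) | (⟨x, y, hx, hy, h⟩ | ⟨h, -⟩)⟩
    · simp at hx
    · cases hb; exact hx
    · simp at hy
    · simp at h
  · intro h
    exact ⟨by simp, Or.inl (Or.inr ⟨rfl, b, h, rfl⟩)⟩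

lemma addVertex_adj_some_none (a : V) :
    (addVertex G S).Adj (some a) none ↔ a ∈ S := by
  rw [(addVertex G S).adj_comm]; exact addVertex_adj_none_some G S a

lemma addVertex_not_adj_none_none : ¬ (addVertex G S).Adj none none :=
  (addVertex G S).irrefl

end AddVertex



/-- parent function: spine `0..2k` is a path, leaves `2k+1..4k-2` attach to the spine. -/
def P (k a : ℕ) : ℕ := if a ≤ 2*k then a - 1 else if a < 3*k then a - 2*k else a - 2*k + 1

def T (k : ℕ) : SimpleGraph (Fin (4*k-1)) :=
  SimpleGraph.fromRel (fun a b => a.val ≠ 0 ∧ b.val = P k a.val)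

lemma P_lt {k a : ℕ} (hk : 1 ≤ k) (ha : a ≠ 0) : P k a < a := by
  unfold P; split_ifs <;> omega

lemma adj_iff {k : ℕ} (hk : 1 ≤ k) {a b : Fin (4*k-1)} :
    (T k).Adj a b ↔ (a.val ≠ 0 ∧ b.val = P k a.val) ∨ (b.val ≠ 0 ∧ a.val = P k b.val) := by
  rw [T, fromRel_adj]
  constructor
  · rintro ⟨-, h⟩; exact h
  · intro h
    refine ⟨?_, h⟩
    rintro rfl
    rcases h with ⟨h1, h2⟩ | ⟨h1, h2⟩ <;> · exact absurd h2.symm (Nat.ne_of_lt (P_lt hk h1))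

/-- expected degrees in `T k` -/
def D (k i : ℕ) : ℕ := if i = 0 then 1 else if i = k then 2 else if i ≤ 2*k - 1 then 3 else 1


lemma degT_eq {k : ℕ} (hk : 2 ≤ k) (v : Fin (4*k-1)) (i : Fintype ((T k).neighborSet v)) :
    @SimpleGraph.degree _ (T k) v i = D k v.val := by
  have hb := v.isLt
  show ((T k).neighborFinset v).card = D k v.val
  have hD : ∀ (c : ℕ) (E : Finset (Fin (4*k-1))), (T k).neighborFinset v = E → E.card = c →
      D k v.val = c → ((T k).neighborFinset v).card = D k v.val := by
    rintro c E rfl rfl h; omega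
  have hne : ∀ (x y : ℕ) (hx : x < 4*k-1) (hy : y < 4*k-1), x ≠ y →
      (⟨x, hx⟩ : Fin (4*k-1)) ≠ ⟨y, hy⟩ := by
    intro x y hx hy h hc
    exact h (congrArg Fin.val hc)
  rcases Nat.lt_or_ge v.val (2*k+1) with hv | hv
  · rcases Nat.lt_or_ge v.val k with hv2 | hv2
    · rcases Nat.eq_zero_or_pos v.val with hv3 | hv3
      · -- v = 0
        refine hD 1 {⟨1, by omega⟩} ?_ (Finset.card_singleton _)
          (by unfold D; split_ifs <;> omega)
        ext b
        have hbb := b.isLt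
        rw [SimpleGraph.mem_neighborFinset, adj_iff (by omega)]
        simp only [P, Finset.mem_singleton, Fin.ext_iff]
        split_ifs <;> omega
      · -- 1 ≤ v ≤ k-1
        refine hD 3 {⟨v.val-1, by omega⟩, ⟨v.val+1, by omega⟩, ⟨v.val+2*k, by omega⟩} ?_ ?_
          (by unfold D; split_ifs <;> omega)
        · ext b
          have hbb := b.isLt
          rw [SimpleGraph.mem_neighborFinset, adj_iff (by omega)]
          simp only [P, Finset.mem_insert, Finset.mem_singleton, Fin.ext_iff]
          split_ifs <;> omega
        · rw [Finset.card_insert_of_notMem (by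
            simp only [Finset.mem_insert, Finset.mem_singleton, Fin.ext_iff]; omega),
            Finset.card_insert_of_notMem (by
            simp only [Finset.mem_singleton, Fin.ext_iff]; omega), Finset.card_singleton]
    · rcases Nat.eq_or_lt_of_le hv2 with hv3 | hv3
      · -- v = k
        refine hD 2 {⟨k-1, by omega⟩, ⟨k+1, by omega⟩} ?_ ?_
          (by unfold D; split_ifs <;> omega)
        · ext b
          have hbb := b.isLt
          rw [SimpleGraph.mem_neighborFinset, adj_iff (by omega)]
          simp only [P, Finset.mem_insert, Finset.mem_singleton, Fin.ext_iff]
          split_ifs <;> omega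
        · rw [Finset.card_insert_of_notMem (by
            simp only [Finset.mem_singleton, Fin.ext_iff]; omega), Finset.card_singleton]
      · rcases Nat.lt_or_ge v.val (2*k) with hv4 | hv4
        · -- k+1 ≤ v ≤ 2k-1
          refine hD 3 {⟨v.val-1, by omega⟩, ⟨v.val+1, by omega⟩, ⟨v.val+2*k-1, by omega⟩} ?_ ?_
            (by unfold D; split_ifs <;> omega)
          · ext b
            have hbb := b.isLt
            rw [SimpleGraph.mem_neighborFinset, adj_iff (by omega)]
            simp only [P, Finset.mem_insert, Finset.mem_singleton, Fin.ext_iff]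
            split_ifs <;> omega
          · rw [Finset.card_insert_of_notMem (by
              simp only [Finset.mem_insert, Finset.mem_singleton, Fin.ext_iff]; omega),
              Finset.card_insert_of_notMem (by
              simp only [Finset.mem_singleton, Fin.ext_iff]; omega), Finset.card_singleton]
        · -- v = 2k
          refine hD 1 {⟨2*k-1, by omega⟩} ?_ (Finset.card_singleton _)
            (by unfold D; split_ifs <;> omega)
          ext b
          have hbb := b.isLt
          rw [SimpleGraph.mem_neighborFinset, adj_iff (by omega)]
          simp only [P, Finset.mem_singleton, Fin.ext_iff]
          split_ifs <;> omega
  · -- leaf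
    refine hD 1 {⟨P k v.val, by have := P_lt (k := k) (a := v.val) (by omega) (by omega); omega⟩}
      ?_ (Finset.card_singleton _) (by unfold D; split_ifs <;> omega)
    ext b
    have hbb := b.isLt
    rw [SimpleGraph.mem_neighborFinset, adj_iff (by omega)]
    simp only [P, Finset.mem_singleton, Fin.ext_iff]
    split_ifs <;> omega


def D' (k i : ℕ) : ℕ := if i = 0 then 1 else if i ≤ 2*k - 1 then 3 else 1

def dT' (k : ℕ) (w : Option (Fin (4*k-1))) : ℕ := w.elim 1 (fun v => D' k v.val)

lemma degT'_none {k : ℕ} (hk : 2 ≤ k) (x : Fin (4*k-1)) (hx : x.val = k)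
    (i : Fintype ((addVertex (T k) {x}).neighborSet none)) :
    @SimpleGraph.degree _ (addVertex (T k) {x}) none i = 1 := by
  show Finset.card _ = 1
  have hN : (addVertex (T k) {x}).neighborFinset none = {some x} := by
    ext b
    rw [SimpleGraph.mem_neighborFinset]
    cases b with
    | none => simp [addVertex_not_adj_none_none]
    | some c => simp [addVertex_adj_none_some]
  rw [hN, Finset.card_singleton]

lemma degT'_some {k : ℕ} (hk : 2 ≤ k) (x : Fin (4*k-1)) (hx : x.val = k) (a : Fin (4*k-1))
    (i : Fintype ((addVertex (T k) {x}).neighborSet (some a))) :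
    @SimpleGraph.degree _ (addVertex (T k) {x}) (some a) i = D' k a.val := by
  classical
  show Finset.card _ = _
  have hN : (addVertex (T k) {x}).neighborFinset (some a) =
      (if a = x then {none} else ∅) ∪
        ((T k).neighborFinset a).map ⟨some, Option.some_injective _⟩ := by
    ext b
    rw [SimpleGraph.mem_neighborFinset]
    cases b with
    | none =>
      rw [addVertex_adj_some_none]
      simp only [Set.mem_singleton_iff, Finset.mem_union, Finset.mem_map, Finset.mem_singleton]
      constructor
      · rintro rfl; simp
      · rintro (h | h)
        · split_ifs at h with hik
          · exact hik
          · simp at h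
        · obtain ⟨c, -, hc⟩ := h; simp at hc
    | some c =>
      rw [addVertex_adj_some_some]
      simp only [Finset.mem_union, Finset.mem_map, Function.Embedding.coeFn_mk,
        Option.some.injEq, SimpleGraph.mem_neighborFinset]
      constructor
      · intro h; exact Or.inr ⟨c, h, rfl⟩
      · rintro (h | ⟨d, hd, hdc⟩)
        · split_ifs at h <;> simp at h
        · cases hdc; exact hd
  have hdisj : Disjoint (if a = x then ({none} : Finset (Option (Fin (4*k-1)))) else ∅)
      (((T k).neighborFinset a).map ⟨some, Option.some_injective _⟩) := by
    rw [Finset.disjoint_left]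
    intro b hb hb2
    split_ifs at hb with h
    · simp only [Finset.mem_singleton] at hb
      subst hb
      simp at hb2
    · simp at hb
  rw [hN, Finset.card_union_of_disjoint hdisj, Finset.card_map]
  have hdeg : ((T k).neighborFinset a).card = D k a.val := degT_eq hk a _
  rw [hdeg]
  rcases eq_or_ne a x with h | h
  · rw [if_pos h, Finset.card_singleton]
    have : a.val = k := by rw [h, hx]
    unfold D D'
    split_ifs <;> omega
  · rw [if_neg h, Finset.card_empty]
    have : a.val ≠ k := fun hc => h (Fin.ext (hc.trans hx.symm))
    unfold D D'
    split_ifs <;> omega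

section Lists

lemma chain'_imp_mem {α : Type*} {R S : α → α → Prop} (l : List α) (h : l.Chain' R)
    (himp : ∀ a ∈ l, ∀ b ∈ l, R a b → S a b) : l.Chain' S := by
  induction l with
  | nil => exact List.isChain_nil
  | cons a t ih =>
    cases t with
    | nil => exact List.isChain_singleton _
    | cons b t' =>
      simp only [List.Chain', List.isChain_cons_cons] at h ⊢
      refine ⟨himp a (by simp) b (by simp) h.1, ih h.2 ?_⟩
      intro x hx y hy hr
      exact himp x (by simp [hx]) y (by simp [hy]) hr

lemma split_lemma {V : Type*} (d : V → ℕ) :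
    ∀ l : List V, List.Chain' (· ≤ ·) (l.map d) → (∀ v ∈ l, d v ≤ 3) →
    ∃ l1 l2, l = l1 ++ l2 ∧ (∀ v ∈ l1, d v < 3) ∧ (∀ v ∈ l2, d v = 3) := by
  intro l
  induction l with
  | nil => exact fun _ _ => ⟨[], [], rfl, by simp, by simp⟩
  | cons a t ih =>
    intro hch hle
    rw [List.map_cons] at hch
    obtain ⟨l1, l2, ht, h1, h2⟩ := ih hch.tail (fun v hv => hle v (by simp [hv]))
    by_cases hda : d a = 3
    · cases l1 with
      | nil =>
        simp only [List.nil_append] at ht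
        refine ⟨[], a :: l2, by simp [ht], by simp, ?_⟩
        intro v hv
        rcases List.mem_cons.1 hv with rfl | hv
        · exact hda
        · exact h2 v hv
      | cons b l1' =>
        exfalso
        have hab : d a ≤ d b := by
          rw [ht] at hch
          simp only [List.cons_append, List.map_cons] at hch
          exact (List.isChain_cons_cons.1 hch).1
        have := h1 b (by simp)
        omega
    · refine ⟨a :: l1, l2, by simp [ht], ?_, h2⟩
      intro v hv
      rcases List.mem_cons.1 hv with rfl | hv
      · exact lt_of_le_of_ne (hle v (by simp)) hda
      · exact h1 v hv

lemma main_bound {V : Type*} {A : V → V → Prop} {d : V → ℕ} {B : ℕ}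
    (hsym : Symmetric A)
    (hle : ∀ v, d v ≤ 3)
    (hsmall : ∀ a b, A a b → d a = 3 ∨ d b = 3)
    (h3 : ∀ l : List V, l.Nodup → l.Chain' A → (∀ v ∈ l, d v = 3) → l.length ≤ B) :
    ∀ l : List V, l.Nodup → l.Chain' A →
      (List.Chain' (· ≤ ·) (l.map d) ∨ List.Chain' (· ≥ ·) (l.map d)) → l.length ≤ B + 1 := by
  have key : ∀ l : List V, l.Nodup → l.Chain' A → List.Chain' (· ≤ ·) (l.map d) →
      l.length ≤ B + 1 := by
    intro l hnd hch hmono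
    obtain ⟨l1, l2, rfl, h1, h2⟩ := split_lemma d l hmono (fun v _ => hle v)
    have hl2 : l2.length ≤ B :=
      h3 l2 hnd.of_append_right ((List.isChain_append.1 hch).2.1) h2
    have hl1 : l1.length ≤ 1 := by
      by_contra hc
      push_neg at hc
      match l1, h1, hc, hch with
      | a :: b :: t2, h1, hc, hch =>
        have hab : A a b := by
          simp only [List.cons_append] at hch
          exact (List.isChain_cons_cons.1 hch).1
        have ha := h1 a (by simp)
        have hb := h1 b (by simp)
        rcases hsmall a b hab with h | h <;> omega
    rw [List.length_append]
    omega
  intro l hnd hch hmono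
  rcases hmono with h | h
  · exact key l hnd hch h
  · have h1 : l.reverse.Nodup := List.nodup_reverse.2 hnd
    have h2 : l.reverse.Chain' A := by
      simp only [List.Chain', List.isChain_reverse]
      exact chain'_imp_mem l hch (fun a _ b _ hab => hsym hab)
    have h3' : List.Chain' (· ≤ ·) (l.reverse.map d) := by
      simp only [List.Chain', List.map_reverse, List.isChain_reverse]
      exact h
    have := key l.reverse h1 h2 h3'
    simpa using this

lemma ivt_lt (m : ℕ) : ∀ l : List ℕ, l.Chain' (fun a b => b = a + 1 ∨ a = b + 1) →
    (∀ x ∈ l, x ≠ m) → ∀ a ∈ l.head?, a < m → ∀ x ∈ l, x < m := by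
  intro l
  induction l with
  | nil => intro _ _ a ha; simp at ha
  | cons a t ih =>
    intro hch hne b hb hbm x hx
    simp only [List.head?_cons, Option.mem_def, Option.some.injEq] at hb
    subst hb
    rcases List.mem_cons.1 hx with rfl | hx
    · exact hbm
    · cases t with
      | nil => simp at hx
      | cons c t' =>
        simp only [List.Chain', List.isChain_cons_cons] at hch
        have hc : c < m := by
          have := hne c (by simp)
          rcases hch.1 with h | h <;> omega
        exact ih hch.2 (fun y hy => hne y (by simp [hy])) c (by simp) hc x hx

lemma ivt_gt (m : ℕ) : ∀ l : List ℕ, l.Chain' (fun a b => b = a + 1 ∨ a = b + 1) →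
    (∀ x ∈ l, x ≠ m) → ∀ a ∈ l.head?, m < a → ∀ x ∈ l, m < x := by
  intro l
  induction l with
  | nil => intro _ _ a ha; simp at ha
  | cons a t ih =>
    intro hch hne b hb hbm x hx
    simp only [List.head?_cons, Option.mem_def, Option.some.injEq] at hb
    subst hb
    rcases List.mem_cons.1 hx with rfl | hx
    · exact hbm
    · cases t with
      | nil => simp at hx
      | cons c t' =>
        simp only [List.Chain', List.isChain_cons_cons] at hch
        have hc : m < c := by
          have := hne c (by simp)
          rcases hch.1 with h | h <;> omega
        exact ih hch.2 (fun y hy => hne y (by simp [hy])) c (by simp) hc x hx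

lemma nodup_bound {lo hi : ℕ} (l : List ℕ) (hnd : l.Nodup)
    (hmem : ∀ x ∈ l, lo ≤ x ∧ x < hi) : l.length ≤ hi - lo := by
  classical
  have h1 : l.toFinset ⊆ Finset.Ico lo hi := by
    intro x hx
    rw [List.mem_toFinset] at hx
    rw [Finset.mem_Ico]
    exact hmem x hx
  have := Finset.card_le_card h1
  rwa [List.toFinset_card_of_nodup hnd, Nat.card_Ico] at this

end Lists

section Bounds

lemma D_le3 (k i : ℕ) : D k i ≤ 3 := by unfold D; split_ifs <;> omega

lemma D'_le3 (k i : ℕ) : D' k i ≤ 3 := by unfold D'; split_ifs <;> omega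

lemma dT'_le3 (k : ℕ) (w : Option (Fin (4*k-1))) : dT' k w ≤ 3 := by
  cases w with
  | none => simp [dT']
  | some v => simpa [dT'] using D'_le3 k v.val

lemma D_eq3 {k i : ℕ} (h : D k i = 3) : i ≠ 0 ∧ i ≠ k ∧ i ≤ 2*k-1 := by
  unfold D at h; split_ifs at h <;> omega

lemma D'_eq3 {k i : ℕ} (h : D' k i = 3) : i ≠ 0 ∧ i ≤ 2*k-1 := by
  unfold D' at h; split_ifs at h <;> omega

lemma small_T {k : ℕ} (hk : 2 ≤ k) {a b : Fin (4*k-1)} (h : (T k).Adj a b) :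
    D k a.val = 3 ∨ D k b.val = 3 := by
  have ha := a.isLt
  have hb := b.isLt
  rw [adj_iff (by omega)] at h
  rcases h with ⟨h1, h2⟩ | ⟨h1, h2⟩
  · rw [h2]; simp only [D, P]; split_ifs <;> first | omega | exact False.elim ‹False›
  · rw [h2]; simp only [D, P]; split_ifs <;> first | omega | exact False.elim ‹False›

lemma small_T' {k : ℕ} (hk : 2 ≤ k) (x : Fin (4*k-1)) (hx : x.val = k)
    {a b : Option (Fin (4*k-1))} (h : (addVertex (T k) {x}).Adj a b) :
    dT' k a = 3 ∨ dT' k b = 3 := by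
  cases a with
  | none =>
    cases b with
    | none => exact absurd h (addVertex_not_adj_none_none _ _)
    | some c =>
      right
      rw [addVertex_adj_none_some] at h
      simp only [Set.mem_singleton_iff] at h
      subst h
      simp only [dT', Option.elim]
      unfold D'
      split_ifs <;> omega
  | some c =>
    cases b with
    | none =>
      left
      rw [addVertex_adj_some_none] at h
      simp only [Set.mem_singleton_iff] at h
      subst h
      simp only [dT', Option.elim]
      unfold D'
      split_ifs <;> omega
    | some e =>
      rw [addVertex_adj_some_some] at h
      have hc := c.isLt
      have he := e.isLt
      rw [adj_iff (by omega)] at h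
      simp only [dT', Option.elim]
      rcases h with ⟨h1, h2⟩ | ⟨h1, h2⟩
      · rw [h2]; simp only [D', P]; split_ifs <;> first | omega | exact False.elim ‹False›
      · rw [h2]; simp only [D', P]; split_ifs <;> first | omega | exact False.elim ‹False›

lemma step3_T {k : ℕ} (hk : 2 ≤ k) {a b : Fin (4*k-1)} (h : (T k).Adj a b)
    (ha : a.val ≠ 0 ∧ a.val ≤ 2*k-1) (hb : b.val ≠ 0 ∧ b.val ≤ 2*k-1) :
    b.val = a.val + 1 ∨ a.val = b.val + 1 := by
  have ha' := a.isLt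
  have hb' := b.isLt
  rw [adj_iff (by omega)] at h
  rcases h with ⟨h1, h2⟩ | ⟨h1, h2⟩ <;> · unfold P at h2; split_ifs at h2 <;> omega

lemma h3_T {k : ℕ} (hk : 2 ≤ k) :
    ∀ l : List (Fin (4*k-1)), l.Nodup → l.Chain' (T k).Adj →
    (∀ v ∈ l, D k v.val = 3) → l.length ≤ k - 1 := by
  intro l hnd hch h3
  have hstep : l.Chain' (fun a b : Fin (4*k-1) => b.val = a.val + 1 ∨ a.val = b.val + 1) := by
    refine chain'_imp_mem l hch ?_
    intro a ha b hb hab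
    have h1 := D_eq3 (h3 a ha)
    have h2 := D_eq3 (h3 b hb)
    exact step3_T hk hab ⟨h1.1, h1.2.2⟩ ⟨h2.1, h2.2.2⟩
  have hchv : (l.map Fin.val).Chain' (fun x y => y = x + 1 ∨ x = y + 1) :=
    (List.isChain_map _).2 hstep
  have hndv : (l.map Fin.val).Nodup := hnd.map Fin.val_injective
  have hmem : ∀ x ∈ l.map Fin.val, x ≠ 0 ∧ x ≠ k ∧ x ≤ 2*k-1 := by
    intro x hx
    obtain ⟨v, hv, rfl⟩ := List.mem_map.1 hx
    exact D_eq3 (h3 v hv)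
  have hlen : l.length = (l.map Fin.val).length := (List.length_map _).symm
  rw [hlen]
  cases hl : l.map Fin.val with
  | nil => simp
  | cons a t =>
    rw [hl] at hchv hndv hmem
    have hane := (hmem a (by simp)).2.1
    rcases Nat.lt_or_ge a k with hak | hak
    · have hall := ivt_lt k (a :: t) hchv (fun y hy => (hmem y hy).2.1) a (by simp) hak
      have := nodup_bound (a :: t) hndv
        (fun y hy => ⟨Nat.one_le_iff_ne_zero.2 (hmem y hy).1, hall y hy⟩)
      omega
    · have hak' : k < a := lt_of_le_of_ne hak (Ne.symm hane)
      have hall := ivt_gt k (a :: t) hchv (fun y hy => (hmem y hy).2.1) a (by simp) hak'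
      have := nodup_bound (l := a :: t) (lo := k+1) (hi := 2*k) hndv
        (fun y hy => ⟨hall y hy, by have := (hmem y hy).2.2; omega⟩)
      omega

lemma h3_T' {k : ℕ} (hk : 2 ≤ k) (x : Fin (4*k-1)) (hx : x.val = k) :
    ∀ l : List (Option (Fin (4*k-1))), l.Nodup → l.Chain' (addVertex (T k) {x}).Adj →
    (∀ v ∈ l, dT' k v = 3) → l.length ≤ 2*k - 1 := by
  intro l hnd hch h3
  have hsome : ∀ w ∈ l, ∃ v : Fin (4*k-1), w = some v ∧ v.val ≠ 0 ∧ v.val ≤ 2*k-1 := by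
    intro w hw
    cases w with
    | none => simpa [dT'] using h3 none hw
    | some v => exact ⟨v, rfl, D'_eq3 (by simpa [dT'] using h3 (some v) hw)⟩
  set g : Option (Fin (4*k-1)) → ℕ := fun w => w.elim 0 Fin.val with hg
  have hndv : (l.map g).Nodup := by
    refine hnd.map_on ?_
    intro w1 h1 w2 h2 heq
    obtain ⟨v1, rfl, -, -⟩ := hsome w1 h1
    obtain ⟨v2, rfl, -, -⟩ := hsome w2 h2
    simp only [hg, Option.elim] at heq
    exact congrArg some (Fin.ext heq)
  have hchv : (l.map g).Chain' (fun x y => y = x + 1 ∨ x = y + 1) := by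
    simp only [List.Chain', List.isChain_map]
    refine chain'_imp_mem l hch ?_
    intro a ha b hb hab
    obtain ⟨v1, rfl, hv1⟩ := hsome a ha
    obtain ⟨v2, rfl, hv2⟩ := hsome b hb
    rw [addVertex_adj_some_some] at hab
    simpa [hg, Option.elim] using step3_T hk hab hv1 hv2
  have hmem : ∀ y ∈ l.map g, 1 ≤ y ∧ y < 2*k := by
    intro y hy
    obtain ⟨w, hw, rfl⟩ := List.mem_map.1 hy
    obtain ⟨v, rfl, hv1, hv2⟩ := hsome w hw
    simp only [hg, Option.elim]
    omega
  have := nodup_bound (l.map g) hndv hmem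
  rw [List.length_map] at this
  omega

end Bounds

section Walks

def spineW (k : ℕ) (hk : 2 ≤ k) : (m : ℕ) → (hm : m ≤ 2*k) →
    (T k).Walk ⟨0, by omega⟩ ⟨m, by omega⟩
  | 0, _ => SimpleGraph.Walk.nil
  | (m+1), hm =>
    SimpleGraph.Walk.concat (spineW k hk m (by omega))
      (by
        rw [adj_iff (by omega)]
        right
        refine ⟨?_, ?_⟩
        · show m + 1 ≠ 0
          omega
        · show (m : ℕ) = P k (m+1)
          unfold P
          split_ifs <;> omega)

lemma spineW_support (k : ℕ) (hk : 2 ≤ k) :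
    ∀ (m : ℕ) (hm : m ≤ 2*k), (spineW k hk m hm).support.map Fin.val = List.range (m+1) := by
  intro m
  induction m with
  | zero => intro hm; simp [spineW, List.range_succ]
  | succ m ih =>
    intro hm
    rw [spineW, SimpleGraph.Walk.support_concat, List.map_append, ih (by omega)]
    simp [List.range_succ]

lemma spineW_isPath (k : ℕ) (hk : 2 ≤ k) (m : ℕ) (hm : m ≤ 2*k) :
    (spineW k hk m hm).IsPath := by
  apply SimpleGraph.Walk.IsPath.mk'
  have h := spineW_support k hk m hm
  have h2 : ((spineW k hk m hm).support.map Fin.val).Nodup := by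
    rw [h]; exact List.nodup_range
  exact h2.of_map _

lemma spineW_length (k : ℕ) (hk : 2 ≤ k) (m : ℕ) (hm : m ≤ 2*k) :
    (spineW k hk m hm).support.length = m + 1 := by
  have h := congrArg List.length (spineW_support k hk m hm)
  rwa [List.length_map, List.length_range] at h

end Walks

section Tree

lemma connected_T {k : ℕ} (hk : 2 ≤ k) : (T k).Connected := by
  rw [connected_iff]
  refine ⟨?_, ⟨⟨0, by omega⟩⟩⟩
  have hreach : ∀ (m : ℕ) (v : Fin (4*k-1)), v.val = m → (T k).Reachable v ⟨0, by omega⟩ := by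
    intro m
    induction m using Nat.strong_induction_on with
    | _ m ih =>
      intro v hv
      rcases Nat.eq_zero_or_pos m with h0 | h0
      · have hv0 : v = ⟨0, by omega⟩ := Fin.ext (by simp [hv, h0])
        rw [hv0]
      · have hlt : P k v.val < m := by
          have := P_lt (k := k) (a := v.val) (by omega) (by omega)
          omega
        have hPlt : P k v.val < 4*k-1 := by have := v.isLt; omega
        have hadj : (T k).Adj v ⟨P k v.val, hPlt⟩ := by
          rw [adj_iff (by omega)]
          exact Or.inl ⟨by omega, rfl⟩
        exact hadj.reachable.trans (ih _ hlt _ rfl)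
  intro u v
  exact (hreach _ u rfl).trans (hreach _ v rfl).symm

lemma acyclic_T {k : ℕ} (hk : 2 ≤ k) : (T k).IsAcyclic := by
  intro v c hc
  classical
  have hne : c.support.toFinset.Nonempty :=
    ⟨v, List.mem_toFinset.2 c.start_mem_support⟩
  set a := c.support.toFinset.max' hne with ha
  have haMem : a ∈ c.support := by
    have := Finset.max'_mem _ hne
    rwa [List.mem_toFinset] at this
  have hmax : ∀ y ∈ c.support, y ≤ a := fun y hy => Finset.le_max' _ y (List.mem_toFinset.2 hy)
  have hcyc : (c.rotate a haMem).IsCycle := hc.rotate haMem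
  have hsupp : ∀ y ∈ (c.rotate a haMem).support, y ≤ a := by
    intro y hy
    rw [SimpleGraph.Walk.support_eq_cons] at hy
    rcases List.mem_cons.1 hy with rfl | hy
    · exact le_refl _
    · exact hmax y (List.mem_of_mem_tail
        ((SimpleGraph.Walk.support_rotate c a haMem).mem_iff.1 hy))
  obtain ⟨b, hab, q, hq⟩ := SimpleGraph.Walk.not_nil_iff.1 hcyc.not_nil
  have hqpath : q.IsPath ∧ s(a, b) ∉ q.edges := by
    rw [hq] at hcyc
    exact (SimpleGraph.Walk.cons_isCycle_iff q hab).1 hcyc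
  have hqnil : ¬ q.reverse.Nil := by
    rw [SimpleGraph.Walk.not_nil_iff_lt_length, SimpleGraph.Walk.length_reverse]
    rcases Nat.eq_zero_or_pos q.length with h0 | h0
    · exact absurd (SimpleGraph.Walk.eq_of_length_eq_zero h0) hab.ne'
    · exact h0
  obtain ⟨cv, hac, r, hr⟩ := SimpleGraph.Walk.not_nil_iff.1 hqnil
  have hce : s(a, cv) ∈ q.edges := by
    have h1 : s(a, cv) ∈ q.reverse.edges := by rw [hr]; simp
    rwa [SimpleGraph.Walk.edges_reverse, List.mem_reverse] at h1
  have hbc : b ≠ cv := by rintro rfl; exact hqpath.2 hce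
  have hbmem : b ∈ (c.rotate a haMem).support := by
    rw [hq]
    simp only [SimpleGraph.Walk.support_cons, List.mem_cons]
    exact Or.inr q.start_mem_support
  have hcmem : cv ∈ (c.rotate a haMem).support := by
    rw [hq]
    simp only [SimpleGraph.Walk.support_cons, List.mem_cons]
    right
    have h1 : cv ∈ q.reverse.support := by
      rw [hr]
      simp only [SimpleGraph.Walk.support_cons, List.mem_cons]
      exact Or.inr r.start_mem_support
    rwa [SimpleGraph.Walk.support_reverse, List.mem_reverse] at h1
  have hble : b.val ≤ a.val := hsupp b hbmem
  have hcle : cv.val ≤ a.val := hsupp cv hcmem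
  have hPb : b.val = P k a.val := by
    have h := hab
    rw [adj_iff (by omega)] at h
    rcases h with ⟨h1, h2⟩ | ⟨h1, h2⟩
    · exact h2
    · exfalso
      have := P_lt (k := k) (a := b.val) (by omega) h1
      omega
  have hPc : cv.val = P k a.val := by
    have h := hac
    rw [adj_iff (by omega)] at h
    rcases h with ⟨h1, h2⟩ | ⟨h1, h2⟩
    · exact h2
    · exfalso
      have := P_lt (k := k) (a := cv.val) (by omega) h1
      omega
  exact hbc (Fin.ext (hPb.trans hPc.symm))

end Tree

section MP

lemma mp_eq {W : Type*} [Fintype W] (G : SimpleGraph W) (d : W → ℕ)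
    (hd : ∀ (v : W) (i : Fintype (G.neighborSet v)), @SimpleGraph.degree _ G v i = d v)
    (m : ℕ)
    (hmem : ∃ (u v : W) (p : G.Walk u v), p.IsPath ∧
      (List.Chain' (· ≤ ·) (p.support.map d) ∨ List.Chain' (· ≥ ·) (p.support.map d)) ∧
      p.support.length = m)
    (hub : ∀ (u v : W) (p : G.Walk u v), p.IsPath →
      (List.Chain' (· ≤ ·) (p.support.map d) ∨ List.Chain' (· ≥ ·) (p.support.map d)) →
      p.support.length ≤ m) :
    mp G = m := by
  unfold mp
  apply IsGreatest.csSup_eq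
  constructor
  · obtain ⟨u, v, p, h1, h2, h3⟩ := hmem
    exact ⟨u, v, p, h1, by simpa only [hd] using h2, h3⟩
  · rintro n ⟨u, v, p, h1, h2, h3⟩
    rw [← h3]
    exact hub u v p h1 (by simpa only [hd] using h2)

lemma mp_T {k : ℕ} (hk : 2 ≤ k) : mp (T k) = k := by
  apply mp_eq (T k) (fun v => D k v.val) (fun v i => degT_eq hk v i) k
  · refine ⟨⟨0, by omega⟩, ⟨k-1, by omega⟩, spineW k hk (k-1) (by omega),
      spineW_isPath k hk (k-1) (by omega), Or.inl ?_, ?_⟩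
    · have hs := spineW_support k hk (k-1) (by omega)
      have heq : (spineW k hk (k-1) (by omega)).support.map (fun v => D k v.val)
          = (List.range (k-1+1)).map (D k) := by
        rw [← hs, List.map_map]
        rfl
      rw [heq]; simp only [List.Chain']; rw [List.isChain_map, List.isChain_range_succ]
      intro m hm
      unfold D
      split_ifs <;> first | omega | exact False.elim ‹False›
    · have := spineW_length k hk (k-1) (by omega)
      omega
  · intro u v p hp hmono
    have := main_bound (A := (T k).Adj) (d := fun v => D k v.val) (B := k-1)
      (fun a b h => h.symm) (fun v => D_le3 k v.val) (fun a b h => small_T hk h) (h3_T hk)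
      p.support hp.support_nodup p.isChain_adj_support hmono
    omega

lemma mp_T' {k : ℕ} (hk : 2 ≤ k) (x : Fin (4*k-1)) (hx : x.val = k) :
    mp (addVertex (T k) {x}) = 2*k := by
  have hd : ∀ (v : Option (Fin (4*k-1)))
      (i : Fintype ((addVertex (T k) {x}).neighborSet v)),
      @SimpleGraph.degree _ (addVertex (T k) {x}) v i = dT' k v := by
    intro v i
    cases v with
    | none => exact degT'_none hk x hx i
    | some a => exact degT'_some hk x hx a i
  apply mp_eq (addVertex (T k) {x}) (dT' k) hd (2*k)
  · have hφ : ∀ {a b : Fin (4*k-1)}, (T k).Adj a b →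
        (addVertex (T k) {x}).Adj (some a) (some b) :=
      fun h => (addVertex_adj_some_some _ _ _ _).2 h
    set φ : (T k) →g (addVertex (T k) {x}) := ⟨some, hφ⟩ with hφdef
    refine ⟨some ⟨0, by omega⟩, some ⟨2*k-1, by omega⟩,
      (spineW k hk (2*k-1) (by omega)).map φ,
      SimpleGraph.Walk.map_isPath_of_injective (Option.some_injective _)
        (spineW_isPath k hk (2*k-1) (by omega)), Or.inl ?_, ?_⟩
    · have hs := spineW_support k hk (2*k-1) (by omega)
      have heq : ((spineW k hk (2*k-1) (by omega)).map φ).support.map (dT' k)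
          = (List.range (2*k-1+1)).map (D' k) := by
        rw [SimpleGraph.Walk.support_map, List.map_map, ← hs, List.map_map]
        rfl
      rw [heq]; simp only [List.Chain']; rw [List.isChain_map, List.isChain_range_succ]
      intro m hm
      unfold D'
      split_ifs <;> first | omega | exact False.elim ‹False›
    · rw [SimpleGraph.Walk.support_map, List.length_map]
      have := spineW_length k hk (2*k-1) (by omega)
      omega
  · intro u v p hp hmono
    have := main_bound (A := (addVertex (T k) {x}).Adj) (d := dT' k) (B := 2*k-1)
      (fun a b h => h.symm) (dT'_le3 k) (fun a b h => small_T' hk x hx h) (h3_T' hk x hx)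
      p.support hp.support_nodup p.isChain_adj_support hmono
    omega

end MP

end MPProof

theorem mp_tree_add_leaf_sharp (k : ℕ) (hk : 2 ≤ k) :
    ∃ (n : ℕ) (T : SimpleGraph (Fin n)) (x : Fin n),
      T.IsTree ∧ mp T = k ∧ mp (addVertex T {x}) = 2 * k := by
  refine ⟨4*k-1, MPProof.T k, ⟨k, by omega⟩,
    ⟨MPProof.connected_T hk, MPProof.acyclic_T hk⟩, MPProof.mp_T hk, ?_⟩
  exact MPProof.mp_T' hk ⟨k, by omega⟩ rfl
end

section
/- For connected graphs G and H, mp(G □ H) ≥ mp(G) + mp(H) − 1, where □ denotes the Cartesian product. -/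
open SimpleGraph

private def mpS {V : Type*} [Fintype V] (G : SimpleGraph V) [DecidableRel G.Adj] : Set ℕ :=
  {n : ℕ | ∃ (u v : V) (p : G.Walk u v), p.IsPath ∧
    (List.Chain' (· ≤ ·) (p.support.map (fun x => G.degree x)) ∨
     List.Chain' (· ≥ ·) (p.support.map (fun x => G.degree x))) ∧ p.support.length = n}

private lemma mp_eq {V : Type*} [Fintype V] (G : SimpleGraph V) :
    mp G = (letI : DecidableRel G.Adj := Classical.decRel _; sSup (mpS G)) := rfl

private lemma mpS_bdd {V : Type*} [Fintype V] (G : SimpleGraph V) [DecidableRel G.Adj] :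
    BddAbove (mpS G) := by
  refine ⟨Fintype.card V, ?_⟩
  rintro n ⟨u, v, p, hp, -, rfl⟩
  exact ((SimpleGraph.Walk.isPath_def p).1 hp).length_le_card

private lemma one_mem_mpS {V : Type*} [Fintype V] [Nonempty V] (G : SimpleGraph V)
    [DecidableRel G.Adj] : 1 ∈ mpS G := by
  obtain ⟨u⟩ := ‹Nonempty V›
  exact ⟨u, u, SimpleGraph.Walk.nil, SimpleGraph.Walk.IsPath.nil, Or.inl (List.isChain_singleton _), by simp⟩

private lemma mpS_spec {V : Type*} [Fintype V] [Nonempty V] (G : SimpleGraph V)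
    [DecidableRel G.Adj] :
    ∃ (u v : V) (p : G.Walk u v), p.IsPath ∧
      List.Chain' (· ≤ ·) (p.support.map (fun x => G.degree x)) ∧
      p.support.length = sSup (mpS G) := by
  have hmem : sSup (mpS G) ∈ mpS G := Nat.sSup_mem ⟨1, one_mem_mpS G⟩ (mpS_bdd G)
  obtain ⟨u, v, p, hp, hc | hc, hlen⟩ := hmem
  · exact ⟨u, v, p, hp, hc, hlen⟩
  · refine ⟨v, u, p.reverse, hp.reverse, ?_, by simpa using hlen⟩
    rw [SimpleGraph.Walk.support_reverse, List.map_reverse]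
    exact List.isChain_reverse.2 hc

theorem mp_boxProd_ge {V W : Type*} [Fintype V] [Fintype W]
    (G : SimpleGraph V) (H : SimpleGraph W) (hG : G.Connected) (hH : H.Connected) :
    mp G + mp H - 1 ≤ mp (G □ H) := by
  have hV : Nonempty V := hG.nonempty
  have hW : Nonempty W := hH.nonempty
  letI : DecidableRel G.Adj := Classical.decRel _
  letI : DecidableRel H.Adj := Classical.decRel _
  letI : DecidableRel (G □ H).Adj := Classical.decRel _
  rw [mp_eq G, mp_eq H, mp_eq (G □ H)]
  obtain ⟨u, v, p, hp, hpc, hplen⟩ := mpS_spec G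
  obtain ⟨w, x, q, hq, hqc, hqlen⟩ := mpS_spec H
  have h1 : 1 ≤ sSup (mpS H) := le_csSup (mpS_bdd H) (one_mem_mpS H)
  have hdeg : ∀ (a : V) (b : W),
      @SimpleGraph.degree _ (G □ H) (a, b) ((G □ H).neighborSetFintype (a, b)) =
        G.degree a + H.degree b :=
    fun a b => @SimpleGraph.degree_boxProd _ _ G H (a, b) _ _ ((G □ H).neighborSetFintype (a, b))
  set r : (G □ H).Walk (u, w) (v, x) := (p.boxProdLeft H w).append (q.boxProdRight G v) with hr
  have hsup : r.support = p.support.map (fun a => (a, w)) ++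
      (q.support.tail.map (fun b => (v, b))) := by
    rw [hr, SimpleGraph.Walk.support_append]
    show (p.map (G.boxProdLeft H w).toHom).support ++
      (q.map (G.boxProdRight H v).toHom).support.tail = _
    rw [SimpleGraph.Walk.support_map,
      SimpleGraph.Walk.support_map, List.map_tail]
    rfl
  -- nodup
  have hwnotin : w ∉ q.support.tail := by
    have := hq.support_nodup
    rw [q.support_eq_cons] at this
    exact (List.nodup_cons.1 this).1
  have hpath : r.IsPath := by
    rw [SimpleGraph.Walk.isPath_def, hsup, List.nodup_append]
    refine ⟨hp.support_nodup.map (fun a a' h => by injection h), ?_, ?_⟩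
    · exact (hq.support_nodup.sublist (List.tail_sublist _)).map
        (fun b b' h => by injection h)
    · rintro z hz1 z' hz2 rfl
      obtain ⟨a, _, rfl⟩ := List.mem_map.1 hz1
      obtain ⟨b, hb, hab⟩ := List.mem_map.1 hz2
      obtain ⟨rfl, rfl⟩ := Prod.mk.injEq .. ▸ hab.symm
      exact hwnotin hb
  -- chain
  have c1 : List.Chain' (· ≤ ·) (p.support.map (fun a => @SimpleGraph.degree _ (G □ H) (a, w) ((G □ H).neighborSetFintype (a, w)))) := by
    simp only [List.Chain', List.isChain_map] at hpc ⊢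
    exact hpc.imp (fun a b hab => by rw [hdeg, hdeg]; omega)
  have c2 : List.Chain' (· ≤ ·) (q.support.map (fun b => @SimpleGraph.degree _ (G □ H) (v, b) ((G □ H).neighborSetFintype (v, b)))) := by
    simp only [List.Chain', List.isChain_map] at hqc ⊢
    exact hqc.imp (fun a b hab => by rw [hdeg, hdeg]; omega)
  have hchain : List.Chain' (· ≤ ·) (r.support.map (fun z => @SimpleGraph.degree _ (G □ H) z ((G □ H).neighborSetFintype z))) := by
    rw [hsup, List.map_append, List.map_map, List.map_map]
    simp only [Function.comp_def]
    refine List.IsChain.append c1 (by rw [List.map_tail]; exact c2.tail) ?_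
    intro y hy z hz
    rw [List.getLast?_map] at hy
    have hlast : p.support.getLast? = some v := by
      rw [List.getLast?_eq_getLast p.support_ne_nil, SimpleGraph.Walk.getLast_support]
    rw [hlast] at hy
    simp only [Option.map_some, Option.mem_def, Option.some.injEq] at hy
    subst hy
    -- z is the image of the head of q.support.tail
    rcases hq2 : q.support.tail with _ | ⟨b0, t⟩
    · rw [hq2] at hz; simp at hz
    · rw [hq2] at hz
      simp only [List.map_cons, List.head?_cons, Option.mem_def, Option.some.injEq] at hz
      subst hz
      have hqc' := hqc
      rw [q.support_eq_cons, hq2, List.map_cons, List.map_cons] at hqc'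
      have hwb : H.degree w ≤ H.degree b0 := hqc'.rel_head? rfl
      rw [hdeg, hdeg]
      omega
  -- conclude
  refine le_trans ?_ (le_csSup (mpS_bdd (G □ H))
    ⟨(u, w), (v, x), r, hpath, Or.inl hchain, rfl⟩)
  have hlen : r.support.length = p.support.length + q.support.tail.length := by
    rw [hsup, List.length_append, List.length_map, List.length_map]
  have hq' : q.support.length = q.support.tail.length + 1 := by
    rw [q.support_eq_cons]; simp
  omega
end

section
/- For any two graphs G and H with disjoint vertex sets, mp(G + H) ≥ mp(G) + mp(H), where G + H is the join of G and H; moreover if G and H have equal numbers of vertices and the same degree sequence then mp(G + H) = |V(G)| + |V(H)|. -/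
open SimpleGraph

section Helpers

variable {α : Type*} {β : Type*}

/-- merge two lists by a natural-number key -/
def mergeKey (f : α → ℕ) : List α → List α → List α
  | [], l2 => l2
  | l1, [] => l1
  | a :: l1, b :: l2 =>
    if f a ≤ f b then a :: mergeKey f l1 (b :: l2) else b :: mergeKey f (a :: l1) l2
  termination_by l1 l2 => l1.length + l2.length

@[simp] theorem mergeKey_nil_left (f : α → ℕ) (l : List α) : mergeKey f [] l = l := by
  cases l <;> rw [mergeKey] <;> simp

@[simp] theorem mergeKey_nil_right (f : α → ℕ) (l : List α) : mergeKey f l [] = l := by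
  cases l <;> rw [mergeKey] <;> simp

theorem mergeKey_perm (f : α → ℕ) : ∀ l1 l2 : List α, List.Perm (mergeKey f l1 l2) (l1 ++ l2)
  | [], l2 => by simp
  | a :: l1, [] => by simp
  | a :: l1, b :: l2 => by
    rw [mergeKey]
    split
    · exact (mergeKey_perm f l1 (b :: l2)).cons a
    · refine ((mergeKey_perm f (a :: l1) l2).cons b).trans ?_
      simpa using (List.Perm.symm (List.perm_middle (a := b) (l₁ := a :: l1) (l₂ := l2)))
  termination_by l1 l2 => l1.length + l2.length

theorem mergeKey_head? (f : α → ℕ) (l1 l2 : List α) :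
    (mergeKey f l1 l2).head? = l1.head? ∨ (mergeKey f l1 l2).head? = l2.head? := by
  match l1, l2 with
  | [], l2 => right; rw [mergeKey_nil_left]
  | a :: l1, [] => left; rw [mergeKey_nil_right]
  | a :: l1, b :: l2 =>
    rw [mergeKey]
    split
    · left; rfl
    · right; rfl

theorem chain'_mergeKey (R : α → α → Prop) (f : α → ℕ) :
    ∀ l1 l2 : List α, l1.IsChain R → l2.IsChain R →
      (∀ a ∈ l1, ∀ b ∈ l2, R a b ∧ R b a) → (mergeKey f l1 l2).IsChain R
  | [], l2, _, h2, _ => by simpa using h2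
  | a :: l1, [], h1, _, _ => by simpa using h1
  | a :: l1, b :: l2, h1, h2, hc => by
    rw [mergeKey]
    split
    · rw [List.isChain_cons]
      refine ⟨?_, chain'_mergeKey R f l1 (b :: l2) h1.tail h2
        (fun x hx y hy => hc x (List.mem_cons_of_mem a hx) y hy)⟩
      intro y hy
      rcases mergeKey_head? f l1 (b :: l2) with h | h
      · rw [h] at hy
        exact (List.isChain_cons.mp h1).1 y hy
      · rw [h] at hy
        simp at hy
        subst hy
        exact (hc a (by simp) b (by simp)).1
    · rw [List.isChain_cons]
      refine ⟨?_, chain'_mergeKey R f (a :: l1) l2 h1 h2.tail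
        (fun x hx y hy => hc x hx y (List.mem_cons_of_mem b hy))⟩
      intro y hy
      rcases mergeKey_head? f (a :: l1) l2 with h | h
      · rw [h] at hy
        simp at hy
        subst hy
        exact (hc a (by simp) b (by simp)).2
      · rw [h] at hy
        exact (List.isChain_cons.mp h2).1 y hy
  termination_by l1 l2 => l1.length + l2.length

theorem chain'_le_mergeKey (f : α → ℕ) :
    ∀ l1 l2 : List α, l1.IsChain (fun x y => f x ≤ f y) → l2.IsChain (fun x y => f x ≤ f y) →
      (mergeKey f l1 l2).IsChain (fun x y => f x ≤ f y)
  | [], l2, _, h2 => by simpa using h2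
  | a :: l1, [], h1, _ => by simpa using h1
  | a :: l1, b :: l2, h1, h2 => by
    rw [mergeKey]
    split
    · rename_i hab
      rw [List.isChain_cons]
      refine ⟨?_, chain'_le_mergeKey f l1 (b :: l2) h1.tail h2⟩
      intro y hy
      rcases mergeKey_head? f l1 (b :: l2) with h | h
      · rw [h] at hy
        exact (List.isChain_cons.mp h1).1 y hy
      · rw [h] at hy
        simp at hy
        subst hy
        exact hab
    · rename_i hab
      rw [List.isChain_cons]
      refine ⟨?_, chain'_le_mergeKey f (a :: l1) l2 h1 h2.tail⟩
      intro y hy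
      rcases mergeKey_head? f (a :: l1) l2 with h | h
      · rw [h] at hy
        simp at hy
        subst hy
        exact le_of_not_ge hab
      · rw [h] at hy
        exact (List.isChain_cons.mp h2).1 y hy
  termination_by l1 l2 => l1.length + l2.length

/-- build a walk from a chain of adjacent vertices -/
theorem exists_walk_of_chain {V : Type*} (G : SimpleGraph V) (a : V) (l : List V)
    (h : List.Chain G.Adj a l) : ∃ (b : V) (p : G.Walk a b), p.support = a :: l := by
  induction l generalizing a with
  | nil => exact ⟨a, SimpleGraph.Walk.nil, rfl⟩
  | cons c l ih =>
    rcases List.chain_cons.mp h with ⟨hac, hc⟩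
    obtain ⟨b, p, hp⟩ := ih c hc
    exact ⟨b, SimpleGraph.Walk.cons hac p, by simp [hp]⟩

end Helpers

/-- The join of two graphs on disjoint vertex sets. -/
def joinGraph {V W : Type*} (G : SimpleGraph V) (H : SimpleGraph W) :
    SimpleGraph (V ⊕ W) :=
  SimpleGraph.fromRel (fun a b =>
    (∃ x y, a = Sum.inl x ∧ b = Sum.inl y ∧ G.Adj x y) ∨
    (∃ x y, a = Sum.inr x ∧ b = Sum.inr y ∧ H.Adj x y) ∨
    (∃ x y, a = Sum.inl x ∧ b = Sum.inr y))

section JoinLemmas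

variable {V W : Type*} (G : SimpleGraph V) (H : SimpleGraph W)

@[simp] theorem joinGraph_adj_inl_inl (x y : V) :
    (joinGraph G H).Adj (Sum.inl x) (Sum.inl y) ↔ G.Adj x y := by
  simp only [joinGraph, SimpleGraph.fromRel_adj]
  constructor
  · rintro ⟨hne, h | h⟩ <;>
      rcases h with (⟨x', y', hx, hy, h⟩ | ⟨x', y', hx, hy, h⟩ | ⟨x', y', hx, hy⟩) <;>
      simp_all [SimpleGraph.adj_comm]
  · intro h
    exact ⟨by simpa using h.ne, Or.inl (Or.inl ⟨x, y, rfl, rfl, h⟩)⟩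

@[simp] theorem joinGraph_adj_inr_inr (x y : W) :
    (joinGraph G H).Adj (Sum.inr x) (Sum.inr y) ↔ H.Adj x y := by
  simp only [joinGraph, SimpleGraph.fromRel_adj]
  constructor
  · rintro ⟨hne, h | h⟩ <;>
      rcases h with (⟨x', y', hx, hy, h⟩ | ⟨x', y', hx, hy, h⟩ | ⟨x', y', hx, hy⟩) <;>
      simp_all [SimpleGraph.adj_comm]
  · intro h
    exact ⟨by simpa using h.ne, Or.inl (Or.inr (Or.inl ⟨x, y, rfl, rfl, h⟩))⟩

@[simp] theorem joinGraph_adj_inl_inr (x : V) (y : W) :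
    (joinGraph G H).Adj (Sum.inl x) (Sum.inr y) := by
  simp only [joinGraph, SimpleGraph.fromRel_adj]
  exact ⟨by simp, Or.inl (Or.inr (Or.inr ⟨x, y, rfl, rfl⟩))⟩

@[simp] theorem joinGraph_adj_inr_inl (x : W) (y : V) :
    (joinGraph G H).Adj (Sum.inr x) (Sum.inl y) :=
  (joinGraph_adj_inl_inr G H y x).symm

end JoinLemmas

section DegreeLemmas

variable {V W : Type*} (G : SimpleGraph V) (H : SimpleGraph W)

theorem joinGraph_degree_inl [Fintype V] [Fintype W] (x : V)
    [Fintype (G.neighborSet x)] [Fintype ((joinGraph G H).neighborSet (Sum.inl x))] :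
    (joinGraph G H).degree (Sum.inl x) = G.degree x + Fintype.card W := by
  classical
  have e : ((joinGraph G H).neighborSet (Sum.inl x)) ≃ ((G.neighborSet x) ⊕ W) :=
    { toFun := fun a => match a with
        | ⟨Sum.inl y, hy⟩ => Sum.inl ⟨y, by simpa using hy⟩
        | ⟨Sum.inr w, _⟩ => Sum.inr w
      invFun := fun s => match s with
        | Sum.inl y => ⟨Sum.inl y.1, by
            simp only [SimpleGraph.mem_neighborSet, joinGraph_adj_inl_inl]
            exact y.2⟩
        | Sum.inr w => ⟨Sum.inr w, by simp⟩
      left_inv := fun a => by rcases a with ⟨a | a, ha⟩ <;> rfl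
      right_inv := fun s => by rcases s with ⟨y, hy⟩ | w <;> rfl }
  rw [← SimpleGraph.card_neighborSet_eq_degree, ← SimpleGraph.card_neighborSet_eq_degree,
    Fintype.card_congr e, Fintype.card_sum]

theorem joinGraph_degree_inr [Fintype V] [Fintype W] (x : W)
    [Fintype (H.neighborSet x)] [Fintype ((joinGraph G H).neighborSet (Sum.inr x))] :
    (joinGraph G H).degree (Sum.inr x) = H.degree x + Fintype.card V := by
  classical
  have e : ((joinGraph G H).neighborSet (Sum.inr x)) ≃ ((H.neighborSet x) ⊕ V) :=
    { toFun := fun a => match a with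
        | ⟨Sum.inr y, hy⟩ => Sum.inl ⟨y, by simpa using hy⟩
        | ⟨Sum.inl w, _⟩ => Sum.inr w
      invFun := fun s => match s with
        | Sum.inl y => ⟨Sum.inr y.1, by
            simp only [SimpleGraph.mem_neighborSet, joinGraph_adj_inr_inr]
            exact y.2⟩
        | Sum.inr w => ⟨Sum.inl w, by simp⟩
      left_inv := fun a => by rcases a with ⟨a | a, ha⟩ <;> rfl
      right_inv := fun s => by rcases s with ⟨y, hy⟩ | w <;> rfl }
  rw [← SimpleGraph.card_neighborSet_eq_degree, ← SimpleGraph.card_neighborSet_eq_degree,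
    Fintype.card_congr e, Fintype.card_sum]

end DegreeLemmas

section MpLemmas

variable {α : Type*} [Fintype α] (G : SimpleGraph α) [DecidableRel G.Adj]

theorem mp_eq_sSup :
    mp G = sSup {n : ℕ | ∃ (u v : α) (p : G.Walk u v), p.IsPath ∧
      (List.Chain' (· ≤ ·) (p.support.map (fun x => G.degree x)) ∨
       List.Chain' (· ≥ ·) (p.support.map (fun x => G.degree x))) ∧ p.support.length = n} := by
  unfold mp
  congr!

theorem length_le_mp (l : List α) (hne : l ≠ []) (hnd : l.Nodup) (hch : l.IsChain G.Adj)
    (hdeg : List.IsChain (· ≤ ·) (l.map (fun x => G.degree x)) ∨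
      List.IsChain (· ≥ ·) (l.map (fun x => G.degree x))) :
    l.length ≤ mp G := by
  rw [mp_eq_sSup]
  apply le_csSup
  · refine ⟨Fintype.card α, ?_⟩
    rintro n ⟨u, v, p, hp, -, rfl⟩
    exact hp.support_nodup.length_le_card
  · obtain ⟨a, l', rfl⟩ := List.exists_cons_of_ne_nil hne
    obtain ⟨b, p, hp⟩ := exists_walk_of_chain G a l' (List.isChain_cons.mp hch |> fun _ => hch)
    · exact ⟨a, b, p, SimpleGraph.Walk.IsPath.mk' (by rw [hp]; exact hnd),
        by rw [hp]; exact hdeg, by rw [hp]⟩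

theorem mp_le_card : mp G ≤ Fintype.card α := by
  rw [mp_eq_sSup]
  apply csSup_le'
  rintro n ⟨u, v, p, hp, -, rfl⟩
  exact hp.support_nodup.length_le_card

theorem exists_mp_list :
    ∃ l : List α, l.Nodup ∧ l.IsChain G.Adj ∧
      List.IsChain (· ≤ ·) (l.map (fun x => G.degree x)) ∧ l.length = mp G := by
  rw [mp_eq_sSup]
  set S := {n : ℕ | ∃ (u v : α) (p : G.Walk u v), p.IsPath ∧
      (List.Chain' (· ≤ ·) (p.support.map (fun x => G.degree x)) ∨
       List.Chain' (· ≥ ·) (p.support.map (fun x => G.degree x))) ∧ p.support.length = n} with hS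
  by_cases hne : S.Nonempty
  · have hbdd : BddAbove S := by
      refine ⟨Fintype.card α, ?_⟩
      rintro n ⟨u, v, p, hp, -, rfl⟩
      exact hp.support_nodup.length_le_card
    obtain ⟨u, v, p, hp, hmono, hlen⟩ := Nat.sSup_mem hne hbdd
    rcases hmono with hmono | hmono
    · exact ⟨p.support, hp.support_nodup, p.isChain_adj_support, hmono, hlen⟩
    · refine ⟨p.support.reverse, List.nodup_reverse.mpr hp.support_nodup, ?_, ?_, by simpa using hlen⟩
      · exact List.isChain_reverse.mpr (p.isChain_adj_support.imp fun a b h => h.symm)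
      · rw [List.map_reverse]
        exact List.isChain_reverse.mpr hmono
  · rw [Set.not_nonempty_iff_eq_empty.mp hne, csSup_empty]
    exact ⟨[], by simp, List.isChain_nil, List.isChain_nil, rfl⟩

end MpLemmas

section Interleave

variable {α β : Type*}

def interleave : List α → List β → List (α ⊕ β)
  | a :: l1, b :: l2 => Sum.inl a :: Sum.inr b :: interleave l1 l2
  | _, _ => []

@[simp] theorem interleave_nil_left (l : List β) : interleave ([] : List α) l = [] := by
  rw [interleave] <;> simp

@[simp] theorem interleave_nil_right (l : List α) : interleave l ([] : List β) = [] := by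
  cases l <;> rw [interleave] <;> simp

theorem mem_interleave {x : α ⊕ β} : ∀ {l1 : List α} {l2 : List β},
    x ∈ interleave l1 l2 → (∃ a ∈ l1, x = Sum.inl a) ∨ (∃ b ∈ l2, x = Sum.inr b)
  | [], l2, h => by simp at h
  | a :: l1, [], h => by simp at h
  | a :: l1, b :: l2, h => by
    rw [interleave] at h
    rcases List.mem_cons.mp h with rfl | h
    · exact Or.inl ⟨a, by simp, rfl⟩
    rcases List.mem_cons.mp h with rfl | h
    · exact Or.inr ⟨b, by simp, rfl⟩
    rcases mem_interleave h with ⟨c, hc, rfl⟩ | ⟨c, hc, rfl⟩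
    · exact Or.inl ⟨c, by simp [hc], rfl⟩
    · exact Or.inr ⟨c, by simp [hc], rfl⟩

theorem nodup_interleave : ∀ {l1 : List α} {l2 : List β}, l1.Nodup → l2.Nodup →
    (interleave l1 l2).Nodup
  | [], l2, _, _ => by simp
  | a :: l1, [], _, _ => by simp
  | a :: l1, b :: l2, h1, h2 => by
    rw [interleave]
    rcases List.nodup_cons.mp h1 with ⟨ha, h1'⟩
    rcases List.nodup_cons.mp h2 with ⟨hb, h2'⟩
    refine List.Nodup.cons ?_ (List.Nodup.cons ?_ (nodup_interleave h1' h2'))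
    · intro h
      rcases List.mem_cons.mp h with h | h
      · simp at h
      · rcases mem_interleave h with ⟨c, hc, hx⟩ | ⟨c, hc, hx⟩
        · obtain rfl : a = c := by simpa using hx
          exact ha hc
        · simp at hx
    · intro h
      rcases mem_interleave h with ⟨c, hc, hx⟩ | ⟨c, hc, hx⟩
      · simp at hx
      · obtain rfl : b = c := by simpa using hx
        exact hb hc

theorem length_interleave : ∀ {l1 : List α} {l2 : List β}, l1.length = l2.length →
    (interleave l1 l2).length = l1.length + l2.length
  | [], l2, h => by simp [(List.length_eq_zero_iff.mp h.symm)]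
  | a :: l1, [], h => by simp at h
  | a :: l1, b :: l2, h => by
    rw [interleave]
    simp only [List.length_cons]
    rw [length_interleave (by simpa using h)]
    omega

theorem chain'_interleave {R : (α ⊕ β) → (α ⊕ β) → Prop}
    (hab : ∀ (a : α) (b : β), R (Sum.inl a) (Sum.inr b))
    (hba : ∀ (b : β) (a : α), R (Sum.inr b) (Sum.inl a)) :
    ∀ (l1 : List α) (l2 : List β), (interleave l1 l2).IsChain R
  | [], l2 => by simp [List.isChain_nil]
  | a :: l1, [] => by simp [List.isChain_nil]
  | a :: l1, b :: l2 => by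
    rw [interleave]
    refine List.isChain_cons_cons.mpr ⟨hab a b, ?_⟩
    rw [List.isChain_cons]
    refine ⟨?_, chain'_interleave hab hba l1 l2⟩
    intro y hy
    match l1, l2 with
    | [], l2 => simp at hy
    | a' :: l1, [] => simp at hy
    | a' :: l1, b' :: l2 =>
      rw [interleave] at hy
      simp at hy
      subst hy
      exact hba b a'

theorem chain'_le_interleave (f : α → ℕ) (g : β → ℕ) :
    ∀ (l1 : List α) (l2 : List β), l1.map f = l2.map g →
      List.IsChain (· ≤ ·) (l1.map f) →
      List.IsChain (fun x y => Sum.elim f g x ≤ Sum.elim f g y) (interleave l1 l2)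
  | [], l2, _, _ => by simp [List.isChain_nil]
  | a :: l1, [], _, _ => by simp [List.isChain_nil]
  | a :: l1, b :: l2, hmap, hsort => by
    simp only [List.map_cons, List.cons.injEq] at hmap
    obtain ⟨hfg, hmap⟩ := hmap
    rw [interleave]
    refine List.isChain_cons_cons.mpr ⟨by simp [hfg], ?_⟩
    rw [List.isChain_cons]
    refine ⟨?_, chain'_le_interleave f g l1 l2 hmap (by
      simpa using (List.isChain_cons.mp (by simpa using hsort)).2)⟩
    intro y hy
    match l1, l2 with
    | [], l2 => simp at hy
    | a' :: l1, [] => simp at hy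
    | a' :: l1, b' :: l2 =>
      rw [interleave] at hy
      simp only [List.head?_cons, Option.mem_def, Option.some.injEq] at hy
      subst hy
      simp only [Sum.elim_inr, Sum.elim_inl]
      have : f a ≤ f a' := by
        have := List.isChain_cons_cons.mp (by simpa using hsort)
        exact this.1
      omega

end Interleave

theorem mp_join {V W : Type*} [Fintype V] [Fintype W]
    (G : SimpleGraph V) (H : SimpleGraph W)
    [DecidableRel G.Adj] [DecidableRel H.Adj] :
    mp G + mp H ≤ mp (joinGraph G H) ∧
    (Fintype.card V = Fintype.card W →
      Multiset.map (fun x => G.degree x) Finset.univ.val =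
        Multiset.map (fun x => H.degree x) Finset.univ.val →
      mp (joinGraph G H) = Fintype.card V + Fintype.card W) := by
  letI : DecidableEq V := Classical.decEq _
  letI : DecidableEq W := Classical.decEq _
  letI instJ : DecidableRel (joinGraph G H).Adj := Classical.decRel _
  constructor
  · -- part 1
    obtain ⟨l1, h1nd, h1ch, h1deg, h1len⟩ := exists_mp_list G
    obtain ⟨l2, h2nd, h2ch, h2deg, h2len⟩ := exists_mp_list H
    set D : V ⊕ W → ℕ := fun x => (joinGraph G H).degree x with hD
    have hDl : ∀ x : V, D (Sum.inl x) = G.degree x + Fintype.card W :=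
      fun x => joinGraph_degree_inl G H x
    have hDr : ∀ x : W, D (Sum.inr x) = H.degree x + Fintype.card V :=
      fun x => joinGraph_degree_inr G H x
    set L := mergeKey D (l1.map Sum.inl) (l2.map Sum.inr) with hL
    have hperm := mergeKey_perm D (l1.map Sum.inl) (l2.map Sum.inr)
    have hlenL : L.length = mp G + mp H := by
      rw [hL, hperm.length_eq, List.length_append, List.length_map, List.length_map,
        h1len, h2len]
    have hndL : L.Nodup := by
      refine hperm.nodup_iff.mpr ?_
      rw [List.nodup_append']
      refine ⟨h1nd.map Sum.inl_injective, h2nd.map Sum.inr_injective, ?_⟩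
      intro x hx hy
      rcases List.mem_map.mp hx with ⟨a, -, rfl⟩
      rcases List.mem_map.mp hy with ⟨b, -, h⟩
      simp at h
    have hchL : L.IsChain (joinGraph G H).Adj := by
      refine chain'_mergeKey _ D _ _ ?_ ?_ ?_
      · exact (List.isChain_map _).mpr (h1ch.imp fun a b h => (joinGraph_adj_inl_inl G H a b).mpr h)
      · exact (List.isChain_map _).mpr (h2ch.imp fun a b h => (joinGraph_adj_inr_inr G H a b).mpr h)
      · intro x hx y hy
        rcases List.mem_map.mp hx with ⟨a, -, rfl⟩
        rcases List.mem_map.mp hy with ⟨b, -, rfl⟩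
        exact ⟨joinGraph_adj_inl_inr G H a b, joinGraph_adj_inr_inl G H b a⟩
    have hdegL : List.IsChain (· ≤ ·) (L.map (fun x => (joinGraph G H).degree x)) := by
      rw [List.isChain_map]
      refine chain'_le_mergeKey D _ _ ?_ ?_
      · rw [List.isChain_map]
        have h' := (List.isChain_map (fun x => G.degree x)).mp h1deg
        exact h'.imp fun a b h => by rw [hDl, hDl]; omega
      · rw [List.isChain_map]
        have h' := (List.isChain_map (fun x => H.degree x)).mp h2deg
        exact h'.imp fun a b h => by rw [hDr, hDr]; omega
    rcases eq_or_ne L [] with hLnil | hLne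
    · rw [hLnil] at hlenL
      simp only [List.length_nil] at hlenL
      omega
    · calc mp G + mp H = L.length := hlenL.symm
        _ ≤ mp (joinGraph G H) := length_le_mp _ L hLne hndL hchL (Or.inl hdegL)
  · -- part 2
    intro hcard hdegs
    refine le_antisymm ((mp_le_card (joinGraph G H)).trans (by rw [Fintype.card_sum])) ?_
    set lV := Finset.univ.toList.mergeSort (fun a b => G.degree a ≤ G.degree b) with hlV
    set lW := Finset.univ.toList.mergeSort (fun a b => H.degree a ≤ H.degree b) with hlW
    have hpermV : List.Perm lV Finset.univ.toList := List.mergeSort_perm _ _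
    have hpermW : List.Perm lW Finset.univ.toList := List.mergeSort_perm _ _
    have hsortV : List.Pairwise (fun a b => G.degree a ≤ G.degree b) lV := by
      rw [hlV]
      simpa using List.pairwise_mergeSort (le := fun a b => decide (G.degree a ≤ G.degree b))
        (fun a b c h1 h2 => by simp_all; omega)
        (fun a b => by simpa using le_total (G.degree a) (G.degree b))
        Finset.univ.toList
    have hsortW : List.Pairwise (fun a b => H.degree a ≤ H.degree b) lW := by
      rw [hlW]
      simpa using List.pairwise_mergeSort (le := fun a b => decide (H.degree a ≤ H.degree b))
        (fun a b c h1 h2 => by simp_all; omega)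
        (fun a b => by simpa using le_total (H.degree a) (H.degree b))
        Finset.univ.toList
    have hcoeV : (↑lV : Multiset V) = Finset.univ.val := by
      rw [Multiset.coe_eq_coe.mpr hpermV, Finset.coe_toList]
    have hcoeW : (↑lW : Multiset W) = Finset.univ.val := by
      rw [Multiset.coe_eq_coe.mpr hpermW, Finset.coe_toList]
    have hdVW : lV.map (fun x => G.degree x) = lW.map (fun x => H.degree x) := by
      refine List.Perm.eq_of_pairwise' (List.pairwise_map.mpr hsortV)
        (List.pairwise_map.mpr hsortW) ?_
      rw [← Multiset.coe_eq_coe, ← Multiset.map_coe, ← Multiset.map_coe, hcoeV, hcoeW]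
      exact hdegs
    have hcardsV : lV.length = Fintype.card V := by
      rw [hpermV.length_eq, Finset.length_toList, Finset.card_univ]
    have hcardsW : lW.length = Fintype.card W := by
      rw [hpermW.length_eq, Finset.length_toList, Finset.card_univ]
    set LL := interleave lV lW with hLL
    have hlenLL : LL.length = Fintype.card V + Fintype.card W := by
      rw [hLL, length_interleave (by rw [hcardsV, hcardsW, hcard]), hcardsV, hcardsW]
    have hndLL : LL.Nodup :=
      nodup_interleave (hpermV.nodup_iff.mpr (Finset.nodup_toList _))
        (hpermW.nodup_iff.mpr (Finset.nodup_toList _))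
    have hchLL : LL.IsChain (joinGraph G H).Adj :=
      chain'_interleave (fun a b => joinGraph_adj_inl_inr G H a b)
        (fun b a => joinGraph_adj_inr_inl G H b a) lV lW
    have hdegLL : List.IsChain (· ≤ ·) (LL.map (fun x => (joinGraph G H).degree x)) := by
      rw [List.isChain_map]
      have hpt : ∀ x : V ⊕ W, (joinGraph G H).degree x =
          Sum.elim (fun v => G.degree v + Fintype.card W)
            (fun w => H.degree w + Fintype.card V) x := by
        rintro (x | x)
        · exact joinGraph_degree_inl G H x
        · exact joinGraph_degree_inr G H x
      have hmap : lV.map (fun v => G.degree v + Fintype.card W) =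
          lW.map (fun w => H.degree w + Fintype.card V) := by
        calc lV.map (fun v => G.degree v + Fintype.card W)
            = (lV.map (fun x => G.degree x)).map (· + Fintype.card W) := by
              rw [List.map_map]; rfl
          _ = (lW.map (fun x => H.degree x)).map (· + Fintype.card V) := by
              rw [hdVW, hcard]
          _ = lW.map (fun w => H.degree w + Fintype.card V) := by
              rw [List.map_map]; rfl
      have hsort : List.IsChain (· ≤ ·) (lV.map (fun v => G.degree v + Fintype.card W)) := by
        rw [List.isChain_map]
        exact hsortV.isChain.imp fun a b h => Nat.add_le_add_right h _
      have base := chain'_le_interleave (fun v => G.degree v + Fintype.card W)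
        (fun w => H.degree w + Fintype.card V) lV lW hmap hsort
      exact base.imp fun x y h => by rw [hpt x, hpt y]; exact h
    rcases Nat.eq_zero_or_pos (Fintype.card V + Fintype.card W) with h0 | hpos
    · exact h0 ▸ Nat.zero_le _
    · have hne : LL ≠ [] := by
        intro h
        rw [h] at hlenLL
        simp at hlenLL
        omega
      calc Fintype.card V + Fintype.card W = LL.length := hlenLL.symm
        _ ≤ mp (joinGraph G H) := length_le_mp _ LL hne hndLL hchLL (Or.inl hdegLL)
end
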